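/- arXiv:cs/0603040 — 14 statements merged into one kernel-verified Lean document; each statement's English description precedes it below -/
import Mathlib

section
/- Let P > 0 and κ ≥ 0, and let F be a probability measure on [0,∞) such that λ ↦ ln(1+Pλ) is F-integrable. Set Ω* = {λ ∈ [0,∞) : λ ≥ κ}. Then for every measurable set Ω ⊆ [0,∞) with F(Ω) = F(Ω*), one has ∫_{Ω*} ln(1+Pλ) dF(λ) ≥ ∫_{Ω} ln(1+Pλ) dF(λ). (Single-antenna case of the optimality of threshold power on/off strategies, Theorem 1.) -/
open MeasureTheory

/-- Single-antenna case of the optimality of threshold power on/off strategies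
(Theorem 1): among all on/off regions `Ω ⊆ [0,∞)` with the same probability
(average power) as the threshold region `Ω* = {λ : λ ≥ κ}`, the threshold region
maximizes the expected rate `∫ ln(1 + Pλ) dF`. -/
theorem single_antenna_threshold_optimal
    (P κ : ℝ) (hP : 0 < P) (hκ : 0 ≤ κ)
    (F : Measure ℝ) [IsProbabilityMeasure F]
    (hsupp : F (Set.Iio 0) = 0)
    (hint : Integrable (fun l => Real.log (1 + P * l)) F)
    (Ω : Set ℝ) (hΩmeas : MeasurableSet Ω) (hΩsub : Ω ⊆ Set.Ici (0 : ℝ))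
    (hpow : F Ω = F (Set.Ici κ)) :
    ∫ l in Ω, Real.log (1 + P * l) ∂F ≤ ∫ l in Set.Ici κ, Real.log (1 + P * l) ∂F := by
  set f : ℝ → ℝ := fun l => Real.log (1 + P * l) with hf
  have hmeasIci : MeasurableSet (Set.Ici κ) := measurableSet_Ici
  set A : Set ℝ := Ω \ Set.Ici κ with hA
  set B : Set ℝ := Set.Ici κ \ Ω with hB
  have hAmeas : MeasurableSet A := hΩmeas.diff hmeasIci
  have hBmeas : MeasurableSet B := hmeasIci.diff hΩmeas
  have hIB : IntegrableOn f B F := hint.integrableOn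
  have hIA : IntegrableOn f A F := hint.integrableOn
  have hII : IntegrableOn f (Ω ∩ Set.Ici κ) F := hint.integrableOn
  set c : ℝ := Real.log (1 + P * κ) with hc
  -- equal measures of the symmetric difference pieces
  have hFA : F A = F B := by
    have h1 : F (Ω ∩ Set.Ici κ) + F A = F Ω := measure_inter_add_diff Ω hmeasIci
    have h2 : F (Set.Ici κ ∩ Ω) + F B = F (Set.Ici κ) := measure_inter_add_diff _ hΩmeas
    rw [Set.inter_comm] at h2
    have hfin : F (Ω ∩ Set.Ici κ) ≠ ⊤ := measure_ne_top F _
    have : F (Ω ∩ Set.Ici κ) + F A = F (Ω ∩ Set.Ici κ) + F B := by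
      rw [h1, h2, hpow]
    exact (ENNReal.add_right_inj hfin).mp this
  -- bound on A
  have hAle : ∫ l in A, f l ∂F ≤ (F A).toReal * c := by
    have : ∫ l in A, f l ∂F ≤ ∫ _ in A, c ∂F := by
      apply setIntegral_mono_on hIA (integrableOn_const (measure_ne_top F A)) hAmeas
      intro x hx
      have hx0 : 0 ≤ x := hΩsub hx.1
      have hxκ : x < κ := by simpa using hx.2
      have h1 : (0:ℝ) < 1 + P * x := by positivity
      exact Real.log_le_log h1 (by nlinarith)
    simpa [smul_eq_mul, measureReal_def] using this
  -- bound on B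
  have hBle : (F B).toReal * c ≤ ∫ l in B, f l ∂F := by
    have : ∫ _ in B, c ∂F ≤ ∫ l in B, f l ∂F := by
      apply setIntegral_mono_on (integrableOn_const (measure_ne_top F B)) hIB hBmeas
      intro x hx
      have hxκ : κ ≤ x := hx.1
      have h1 : (0:ℝ) < 1 + P * κ := by positivity
      exact Real.log_le_log h1 (by nlinarith)
    simpa [smul_eq_mul, measureReal_def] using this
  -- decompose the integrals
  have hdis1 : Disjoint (Ω ∩ Set.Ici κ) A :=
    Set.disjoint_sdiff_right.mono_left Set.inter_subset_right
  have hdis2 : Disjoint (Ω ∩ Set.Ici κ) B :=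
    Set.disjoint_sdiff_right.mono_left Set.inter_subset_left
  have hdecΩ : ∫ l in Ω, f l ∂F = (∫ l in Ω ∩ Set.Ici κ, f l ∂F) + ∫ l in A, f l ∂F := by
    rw [← setIntegral_union hdis1 hAmeas hII hIA, Set.inter_union_diff]
  have hdecI : ∫ l in Set.Ici κ, f l ∂F = (∫ l in Ω ∩ Set.Ici κ, f l ∂F) + ∫ l in B, f l ∂F := by
    rw [← setIntegral_union hdis2 hBmeas hII hIB]
    congr 1
    rw [Set.inter_comm, Set.inter_union_diff]
  rw [hdecΩ, hdecI]
  have := hFA ▸ hAle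
  linarith
end

section
/- Let L be a positive integer, P > 0, κ ≥ 0, and let F be a probability measure on [0,∞)^L such that each map λ = (λ_1,…,λ_L) ↦ ln(1+Pλ_k) is F-integrable. For each k ∈ {1,…,L} set Ω*_k = {λ ∈ [0,∞)^L : λ_k ≥ κ}. Then for all measurable sets Ω_1,…,Ω_L ⊆ [0,∞)^L with Σ_{k=1}^L F(Ω_k) = Σ_{k=1}^L F(Ω*_k), one has Σ_{k=1}^L ∫_{Ω*_k} ln(1+Pλ_k) dF(λ) ≥ Σ_{k=1}^L ∫_{Ω_k} ln(1+Pλ_k) dF(λ). (MIMO case of the optimality of threshold power on/off strategies, Theorem 1.) -/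
open MeasureTheory

lemma key_exchange {α : Type*} [MeasurableSpace α] (μ : Measure α) [IsFiniteMeasure μ]
    (g : α → ℝ) (hg : Integrable g μ) (A B : Set α)
    (hA : MeasurableSet A) (hB : MeasurableSet B) (c : ℝ)
    (hAle : ∀ x ∈ A \ B, g x ≤ c) (hBge : ∀ x ∈ B \ A, c ≤ g x) :
    ∫ x in A, g x ∂μ - ∫ x in B, g x ∂μ ≤ c * ((μ A).toReal - (μ B).toReal) := by
  have hIA : IntegrableOn g A μ := hg.integrableOn
  have hIB : IntegrableOn g B μ := hg.integrableOn
  have h1 : ∫ x in A ∩ B, g x ∂μ + ∫ x in A \ B, g x ∂μ = ∫ x in A, g x ∂μ :=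
    integral_inter_add_diff hB hIA
  have h2 : ∫ x in B ∩ A, g x ∂μ + ∫ x in B \ A, g x ∂μ = ∫ x in B, g x ∂μ :=
    integral_inter_add_diff hA hIB
  have hupper : ∫ x in A \ B, g x ∂μ ≤ c * (μ (A \ B)).toReal := by
    calc ∫ x in A \ B, g x ∂μ ≤ ∫ _ in A \ B, c ∂μ :=
          setIntegral_mono_on (hg.integrableOn) (integrableOn_const (measure_ne_top μ _))
            (hA.diff hB) hAle
      _ = c * (μ (A \ B)).toReal := by rw [setIntegral_const, smul_eq_mul, mul_comm]; rfl
  have hlower : c * (μ (B \ A)).toReal ≤ ∫ x in B \ A, g x ∂μ := by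
    calc c * (μ (B \ A)).toReal = ∫ _ in B \ A, c ∂μ := by
          rw [setIntegral_const, smul_eq_mul, mul_comm]; rfl
      _ ≤ ∫ x in B \ A, g x ∂μ :=
          setIntegral_mono_on (integrableOn_const (measure_ne_top μ _))
            (hg.integrableOn) (hB.diff hA) hBge
  have hmA : (μ A).toReal = (μ (A ∩ B)).toReal + (μ (A \ B)).toReal := by
    rw [← ENNReal.toReal_add (measure_ne_top μ _) (measure_ne_top μ _),
      measure_inter_add_diff A hB]
  have hmB : (μ B).toReal = (μ (B ∩ A)).toReal + (μ (B \ A)).toReal := by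
    rw [← ENNReal.toReal_add (measure_ne_top μ _) (measure_ne_top μ _),
      measure_inter_add_diff B hA]
  have hcomm : ∫ x in A ∩ B, g x ∂μ = ∫ x in B ∩ A, g x ∂μ := by rw [Set.inter_comm]
  have hmcomm : (μ (A ∩ B)).toReal = (μ (B ∩ A)).toReal := by rw [Set.inter_comm]
  have e1 : ∫ x in A, g x ∂μ - ∫ x in B, g x ∂μ
      = ∫ x in A \ B, g x ∂μ - ∫ x in B \ A, g x ∂μ := by
    rw [← h1, ← h2, hcomm]; ring
  have e2 : c * ((μ A).toReal - (μ B).toReal)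
      = c * (μ (A \ B)).toReal - c * (μ (B \ A)).toReal := by
    rw [hmA, hmB, hmcomm]; ring
  linarith

/-- MIMO case of the optimality of threshold power on/off strategies (Theorem 1):
for a probability measure `F` on `[0,∞)^L` (joint law of the eigenvalues of the
channel Gram matrix), among all families of on/off regions `Ω_k ⊆ [0,∞)^L` with the
same total average power `Σ_k F(Ω_k) = Σ_k F(Ω*_k)` as the threshold regions
`Ω*_k = {λ ∈ [0,∞)^L : λ_k ≥ κ}`, the threshold regions maximize the total rate. -/
theorem mimo_threshold_optimal
    (L : ℕ) (hL : 0 < L) (P κ : ℝ) (hP : 0 < P) (hκ : 0 ≤ κ)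
    (F : Measure (Fin L → ℝ)) [IsProbabilityMeasure F]
    (hsupp : ∀ᵐ x ∂F, ∀ k, 0 ≤ x k)
    (hint : ∀ k : Fin L, Integrable (fun x : Fin L → ℝ => Real.log (1 + P * x k)) F)
    (Ω : Fin L → Set (Fin L → ℝ))
    (hΩmeas : ∀ k, MeasurableSet (Ω k))
    (hΩsub : ∀ k, Ω k ⊆ {x : Fin L → ℝ | ∀ j, 0 ≤ x j})
    (hpow : ∑ k : Fin L, F (Ω k)
        = ∑ k : Fin L, F {x : Fin L → ℝ | (∀ j, 0 ≤ x j) ∧ κ ≤ x k}) :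
    ∑ k : Fin L, ∫ x in Ω k, Real.log (1 + P * x k) ∂F
      ≤ ∑ k : Fin L, ∫ x in {x : Fin L → ℝ | (∀ j, 0 ≤ x j) ∧ κ ≤ x k},
          Real.log (1 + P * x k) ∂F := by
  set c : ℝ := Real.log (1 + P * κ) with hc
  set B : Fin L → Set (Fin L → ℝ) :=
    fun k => {x : Fin L → ℝ | (∀ j, 0 ≤ x j) ∧ κ ≤ x k} with hBdef
  have hBmeas : ∀ k, MeasurableSet (B k) := by
    intro k
    have h1 : MeasurableSet {x : Fin L → ℝ | ∀ j, 0 ≤ x j} := by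
      have : {x : Fin L → ℝ | ∀ j, 0 ≤ x j} = ⋂ j, {x | 0 ≤ x j} := by
        ext x; simp [Set.mem_iInter]
      rw [this]
      exact MeasurableSet.iInter fun j => measurableSet_le measurable_const (measurable_pi_apply j)
    have h2 : MeasurableSet {x : Fin L → ℝ | κ ≤ x k} :=
      measurableSet_le measurable_const (measurable_pi_apply k)
    have : B k = {x : Fin L → ℝ | ∀ j, 0 ≤ x j} ∩ {x | κ ≤ x k} := by ext x; simp [hBdef]
    rw [this]; exact h1.inter h2
  have hkey : ∀ k : Fin L,
      ∫ x in Ω k, Real.log (1 + P * x k) ∂F - ∫ x in B k, Real.log (1 + P * x k) ∂F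
        ≤ c * ((F (Ω k)).toReal - (F (B k)).toReal) := by
    intro k
    apply key_exchange F _ (hint k) _ _ (hΩmeas k) (hBmeas k)
    · intro x hx
      have hx0 : ∀ j, 0 ≤ x j := hΩsub k hx.1
      have hxk : x k < κ := by
        by_contra h
        exact hx.2 ⟨hx0, le_of_not_gt h⟩
      apply Real.log_le_log (by nlinarith [hx0 k, hP.le])
      nlinarith [hP.le]
    · intro x hx
      have hxk : κ ≤ x k := hx.1.2
      apply Real.log_le_log (by nlinarith [hκ, hP.le])
      nlinarith [hP.le]
  have hsum : ∑ k : Fin L, (F (Ω k)).toReal = ∑ k : Fin L, (F (B k)).toReal := by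
    rw [← ENNReal.toReal_sum (fun a _ => measure_ne_top F _),
      ← ENNReal.toReal_sum (fun a _ => measure_ne_top F _), hpow]
  have hc0 : 0 ≤ c := Real.log_nonneg (by nlinarith [hP.le])
  have hle := Finset.sum_le_sum (fun k (_ : k ∈ Finset.univ) => hkey k)
  rw [Finset.sum_sub_distrib] at hle
  have hr : ∑ k : Fin L, c * ((F (Ω k)).toReal - (F (B k)).toReal) = 0 := by
    rw [← Finset.mul_sum, Finset.sum_sub_distrib, hsum, sub_self, mul_zero]
  rw [hr] at hle
  linarith
end

section
/- Let h : (a,b) → ℝ be differentiable on the open interval (a,b). Assume that for every x ∈ (a,b), h(x) = 0 implies h'(x) < 0. Then h has at most one zero in (a,b); moreover, if x₀ ∈ (a,b) is a zero of h, then h(x) > 0 for all x ∈ (a,x₀) and h(x) < 0 for all x ∈ (x₀,b). (Lemma used in the proof of Theorem 3.) -/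
open Set Filter Topology

private lemma slope_right_neg {h : ℝ → ℝ} {z : ℝ} (hd : DifferentiableAt ℝ h z)
    (hz : h z = 0) (hneg : deriv h z < 0) : ∀ᶠ x in 𝓝[>] z, h x < 0 := by
  have hslope := hasDerivAt_iff_tendsto_slope.mp hd.hasDerivAt
  have hev : ∀ᶠ x in 𝓝[≠] z, slope h z x < 0 := hslope.eventually_lt_const hneg
  have hle : 𝓝[>] z ≤ 𝓝[≠] z := nhdsWithin_mono _ fun x hx => ne_of_gt hx
  filter_upwards [hle hev, self_mem_nhdsWithin] with x hs (hx : z < x)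
  have hxz : x - z > 0 := by linarith
  rw [slope_def_field, div_lt_iff₀ hxz] at hs
  simp only [hz] at hs; linarith

private lemma slope_left_pos {h : ℝ → ℝ} {z : ℝ} (hd : DifferentiableAt ℝ h z)
    (hz : h z = 0) (hneg : deriv h z < 0) : ∀ᶠ x in 𝓝[<] z, 0 < h x := by
  have hslope := hasDerivAt_iff_tendsto_slope.mp hd.hasDerivAt
  have hev : ∀ᶠ x in 𝓝[≠] z, slope h z x < 0 := hslope.eventually_lt_const hneg
  have hle : 𝓝[<] z ≤ 𝓝[≠] z := nhdsWithin_mono _ fun x hx => ne_of_lt hx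
  filter_upwards [hle hev, self_mem_nhdsWithin] with x hs (hx : x < z)
  have hxz : x - z < 0 := by linarith
  rw [slope_def_field, div_lt_iff_of_neg hxz] at hs
  simp only [hz] at hs; linarith

private lemma core (a b : ℝ) (h : ℝ → ℝ)
    (hdiff : ∀ x ∈ Set.Ioo a b, DifferentiableAt ℝ h x)
    (hzero : ∀ x ∈ Set.Ioo a b, h x = 0 → deriv h x < 0)
    {x₀ : ℝ} (hx₀ : x₀ ∈ Set.Ioo a b) (h0 : h x₀ = 0) :
    ∀ x ∈ Set.Ioo x₀ b, h x < 0 := by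
  obtain ⟨ha₀, hb₀⟩ := hx₀
  have hcont : ContinuousOn h (Set.Ioo a b) := fun y hy =>
    (hdiff y hy).continuousAt.continuousWithinAt
  intro x hx
  obtain ⟨hx₀x, hxb⟩ := hx
  by_contra hge
  push_neg at hge
  -- find t ∈ (x₀, x) with h t < 0
  have hev := slope_right_neg (hdiff x₀ ⟨ha₀, hb₀⟩) h0 (hzero x₀ ⟨ha₀, hb₀⟩ h0)
  have hIoo : Set.Ioo x₀ x ∈ 𝓝[>] x₀ := Ioo_mem_nhdsGT_of_mem ⟨le_refl _, hx₀x⟩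
  obtain ⟨t, htneg, ht⟩ := (hev.and (eventually_of_mem hIoo fun y hy => hy)).exists
  obtain ⟨htx₀, htx⟩ := ht
  have hsub : Set.Icc t x ⊆ Set.Ioo a b := fun y hy =>
    ⟨lt_of_lt_of_le (lt_trans ha₀ htx₀) hy.1, lt_of_le_of_lt hy.2 hxb⟩
  have hcont' : ContinuousOn h (Set.Icc t x) := hcont.mono hsub
  -- IVT: there is a zero in [t, x]
  have hivt := intermediate_value_Icc (le_of_lt htx) hcont'
  have h0mem : (0 : ℝ) ∈ Set.Icc (h t) (h x) := ⟨le_of_lt htneg, hge⟩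
  obtain ⟨z, hzmem, hz0⟩ := hivt h0mem
  -- least zero in [t, x]
  set Z := {s ∈ Set.Icc t x | h s = 0} with hZ
  have hZne : Z.Nonempty := ⟨z, hzmem, hz0⟩
  have hZclosed : IsClosed Z := by
    have : Z = Set.Icc t x ∩ h ⁻¹' {0} := by ext s; simp [hZ, Set.mem_setOf_eq]
    rw [this]
    exact (hcont'.preimage_isClosed_of_isClosed isClosed_Icc isClosed_singleton)
  have hZbdd : BddBelow Z := ⟨t, fun s hs => hs.1.1⟩
  set c := sInf Z with hc
  have hcmem : c ∈ Z := hZclosed.csInf_mem hZne hZbdd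
  obtain ⟨⟨htc, hcx⟩, hc0⟩ := hcmem
  have htc' : t < c := by
    rcases eq_or_lt_of_le htc with heq | hlt
    · rw [← heq] at hc0; linarith
    · exact hlt
  have hcab : c ∈ Set.Ioo a b := hsub ⟨htc, hcx⟩
  -- h > 0 just left of c, pick s ∈ (t, c)
  have hevl := slope_left_pos (hdiff c hcab) hc0 (hzero c hcab hc0)
  have hIoo' : Set.Ioo t c ∈ 𝓝[<] c := Ioo_mem_nhdsLT_of_mem ⟨htc', le_refl _⟩
  obtain ⟨s, hspos, hs⟩ := (hevl.and (eventually_of_mem hIoo' fun y hy => hy)).exists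
  obtain ⟨hts, hsc⟩ := hs
  -- IVT on [t, s] gives a zero below c: contradiction
  have hcont'' : ContinuousOn h (Set.Icc t s) :=
    hcont'.mono (Set.Icc_subset_Icc le_rfl (le_of_lt (lt_of_lt_of_le hsc hcx)))
  have hivt2 := intermediate_value_Icc (le_of_lt hts) hcont''
  obtain ⟨w, hwmem, hw0⟩ := hivt2 ⟨le_of_lt htneg, le_of_lt hspos⟩
  have hwZ : w ∈ Z := ⟨⟨hwmem.1, le_trans hwmem.2 (le_of_lt (lt_of_lt_of_le hsc hcx))⟩, hw0⟩
  have : c ≤ w := csInf_le hZbdd hwZ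
  linarith [hwmem.2]

/-- Lemma 2 (used in the proof of Theorem 3): if `h` is differentiable on the open
interval `(a,b)` and every zero of `h` has negative derivative, then `h` has at most
one zero in `(a,b)`; moreover if `x₀ ∈ (a,b)` is a zero of `h`, then `h > 0` on
`(a,x₀)` and `h < 0` on `(x₀,b)`. -/
theorem unique_zero_of_neg_deriv_at_zeros
    (a b : ℝ) (h : ℝ → ℝ)
    (hdiff : ∀ x ∈ Set.Ioo a b, DifferentiableAt ℝ h x)
    (hzero : ∀ x ∈ Set.Ioo a b, h x = 0 → deriv h x < 0) :
    (∀ x₀ ∈ Set.Ioo a b, ∀ x₁ ∈ Set.Ioo a b, h x₀ = 0 → h x₁ = 0 → x₀ = x₁) ∧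
    (∀ x₀ ∈ Set.Ioo a b, h x₀ = 0 →
      (∀ x ∈ Set.Ioo a x₀, 0 < h x) ∧ (∀ x ∈ Set.Ioo x₀ b, h x < 0)) := by
  -- reflected function g y = -h(-y) on (-b, -a)
  set g : ℝ → ℝ := fun y => -h (-y) with hg
  have hgderiv : ∀ y ∈ Set.Ioo (-b) (-a), HasDerivAt g (deriv h (-y)) y := by
    intro y hy
    have hy' : -y ∈ Set.Ioo a b := ⟨by linarith [hy.2], by linarith [hy.1]⟩
    have h1 : HasDerivAt (fun y : ℝ => h (-y)) (deriv h (-y) * (-1)) y :=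
      HasDerivAt.comp y (hdiff (-y) hy').hasDerivAt (hasDerivAt_neg y)
    have h2 : HasDerivAt g (-(deriv h (-y) * (-1))) y := h1.neg
    rw [show -(deriv h (-y) * (-1)) = deriv h (-y) by ring] at h2
    exact h2
  have hgdiff : ∀ y ∈ Set.Ioo (-b) (-a), DifferentiableAt ℝ g y := fun y hy =>
    (hgderiv y hy).differentiableAt
  have hgzero : ∀ y ∈ Set.Ioo (-b) (-a), g y = 0 → deriv g y < 0 := by
    intro y hy hy0
    have hy' : -y ∈ Set.Ioo a b := ⟨by linarith [hy.2], by linarith [hy.1]⟩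
    have : h (-y) = 0 := by simpa [hg, neg_eq_zero] using hy0
    rw [(hgderiv y hy).deriv]
    exact hzero (-y) hy' this
  have hleft : ∀ x₀ ∈ Set.Ioo a b, h x₀ = 0 → ∀ x ∈ Set.Ioo a x₀, 0 < h x := by
    intro x₀ hx₀ h0 x hx
    have hx₀' : -x₀ ∈ Set.Ioo (-b) (-a) := ⟨by linarith [hx₀.2], by linarith [hx₀.1]⟩
    have hg0 : g (-x₀) = 0 := by simp [hg, h0]
    have := core (-b) (-a) g hgdiff hgzero hx₀' hg0 (-x)
      ⟨by linarith [hx.2], by linarith [hx.1]⟩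
    simp only [hg, neg_neg] at this
    linarith
  refine ⟨?_, fun x₀ hx₀ h0 => ⟨hleft x₀ hx₀ h0, core a b h hdiff hzero hx₀ h0⟩⟩
  intro x₀ hx₀ x₁ hx₁ h0 h1
  rcases lt_trichotomy x₀ x₁ with hlt | heq | hgt
  · have := core a b h hdiff hzero hx₀ h0 x₁ ⟨hlt, hx₁.2⟩; linarith
  · exact heq
  · have := core a b h hdiff hzero hx₁ h1 x₀ ⟨hgt, hx₀.2⟩; linarith
end

section
/- Fix y ∈ (0,1] and ρ > 0. Then the function Ī : [0,π) → ℝ is differentiable on (0,π), its derivative Ī' has at most one zero in (0,π), and: (i) if a₀ ∈ (0,π) satisfies Ī'(a₀) = 0, then Ī(a₀) ≥ Ī(a) for every a ∈ [0,π); (ii) if Ī'(a) ≠ 0 for all a ∈ (0,π), then Ī(0) ≥ Ī(a) for every a ∈ [0,π). (Theorem 3: characterization of the optimal threshold a maximizing the asymptotic information rate.) -/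
open MeasureTheory intervalIntegral Real Set Filter Topology

/-- The asymptotic empirical density of `t` after the change of variables
`λ(t) = (1/y)(1 + y - 2√y cos t)` (equation (5) of the paper). -/
noncomputable def fT (y t : ℝ) : ℝ :=
  if y < 1 then
    (1 / Real.pi) * (1 - Real.cos (2 * t)) / (1 + y - 2 * Real.sqrt y * Real.cos t)
  else (1 + Real.cos t) / Real.pi

/-- The asymptotic normalized number of on-beams corresponding to threshold `a`. -/
noncomputable def sbar (y a : ℝ) : ℝ := ∫ t in a..Real.pi, fT y t

/-- The asymptotic normalized information rate of the power on/off strategy with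
threshold `a` and SNR `ρ` (equation (8) of the paper). -/
noncomputable def Ibar (y ρ a : ℝ) : ℝ :=
  ∫ t in a..Real.pi,
    Real.log (1 + (ρ / (y * sbar y a)) * (1 + y - 2 * Real.sqrt y * Real.cos t)) * fT y t

noncomputable def OT.lam (y t : ℝ) : ℝ := 1 + y - 2 * Real.sqrt y * Real.cos t

namespace OT

lemma lam_nonneg {y : ℝ} (hy0 : 0 ≤ y) (t : ℝ) : 0 ≤ lam y t := by
  have h1 := Real.sq_sqrt hy0
  have h2 := Real.sqrt_nonneg y
  have h3 := Real.cos_le_one t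
  have h4 := Real.neg_one_le_cos t
  unfold lam
  nlinarith [mul_le_of_le_one_right h2 h3, sq_nonneg (1 - Real.sqrt y)]

lemma lam_pos_of_lt_one {y : ℝ} (hy0 : 0 ≤ y) (hy1 : y < 1) (t : ℝ) : 0 < lam y t := by
  have h1 := Real.sq_sqrt hy0
  have h2 := Real.sqrt_nonneg y
  have h3 := Real.cos_le_one t
  have h5 : Real.sqrt y < 1 := by
    rw [show (1:ℝ) = Real.sqrt 1 by simp]
    exact Real.sqrt_lt_sqrt hy0 hy1
  unfold lam
  nlinarith [mul_le_of_le_one_right h2 h3, sq_nonneg (1 - Real.sqrt y)]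

@[fun_prop] lemma lam_continuous (y : ℝ) : Continuous (lam y) := by
  unfold lam; fun_prop

lemma fT_continuous {y : ℝ} (hy0 : 0 < y) (hy1 : y ≤ 1) : Continuous (fT y) := by
  by_cases h : y < 1
  · have : fT y = fun t => (1 / Real.pi) * (1 - Real.cos (2 * t)) / lam y t := by
      funext t; simp [fT, if_pos h, lam]
    rw [this]
    exact Continuous.div (by fun_prop) (lam_continuous y)
      (fun t => (lam_pos_of_lt_one hy0.le h t).ne')
  · have : fT y = fun t => (1 + Real.cos t) / Real.pi := by
      funext t; simp [fT, if_neg h]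
    rw [this]; fun_prop

lemma fT_nonneg {y : ℝ} (hy0 : 0 < y) (hy1 : y ≤ 1) (t : ℝ) : 0 ≤ fT y t := by
  by_cases h : y < 1
  · rw [fT, if_pos h]
    apply div_nonneg
    · have h1 := Real.cos_le_one (2*t)
      have h2 := Real.pi_pos
      have : (0:ℝ) ≤ 1/Real.pi := by positivity
      nlinarith
    · have := lam_pos_of_lt_one hy0.le h t
      unfold lam at this; linarith
  · rw [fT, if_neg h]
    have h1 := Real.neg_one_le_cos t
    have h2 := Real.pi_pos
    apply div_nonneg <;> linarith

lemma fT_pos {y : ℝ} (hy0 : 0 < y) (hy1 : y ≤ 1) {t : ℝ} (ht : t ∈ Set.Ioo 0 Real.pi) :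
    0 < fT y t := by
  obtain ⟨ht0, htpi⟩ := ht
  have hsin : 0 < Real.sin t := Real.sin_pos_of_pos_of_lt_pi ht0 htpi
  by_cases h : y < 1
  · rw [fT, if_pos h]
    apply div_pos
    · have hc := Real.cos_two_mul t
      have hsc := Real.sin_sq_add_cos_sq t
      have hpi := Real.pi_pos
      have h0 : (0:ℝ) < 1/Real.pi := by positivity
      nlinarith [mul_pos hsin hsin, mul_pos h0 (mul_pos hsin hsin)]
    · have := lam_pos_of_lt_one hy0.le h t
      unfold lam at this; linarith
  · rw [fT, if_neg h]
    have hchalf : 0 < Real.cos (t/2) := by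
      apply Real.cos_pos_of_mem_Ioo
      constructor
      · linarith [Real.pi_pos]
      · linarith
    have hsq : Real.cos (t/2)^2 = 1/2 + Real.cos t/2 := by
      have := Real.cos_sq (t/2)
      rwa [show 2*(t/2) = t by ring] at this
    have := Real.pi_pos
    apply div_pos
    · nlinarith
    · exact Real.pi_pos


/-- Key parametric differentiation lemma: derivative of `a ↦ ∫ t in a..b, φ (g a) t`. -/
theorem key_param {φ ψ : ℝ → ℝ → ℝ}
    (hφ : Continuous fun p : ℝ × ℝ => φ p.1 p.2)
    (hψ : Continuous fun p : ℝ × ℝ => ψ p.1 p.2)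
    (hd : ∀ u t, HasDerivAt (fun v => φ v t) (ψ u t) u)
    {g : ℝ → ℝ} {g' a₀ : ℝ} (b : ℝ) (hg : HasDerivAt g g' a₀) :
    HasDerivAt (fun a => ∫ t in a..b, φ (g a) t)
      (-(φ (g a₀) a₀) + g' * ∫ t in a₀..b, ψ (g a₀) t) a₀ := by
  set x₀ := g a₀ with hx₀
  have hφt : ∀ x : ℝ, Continuous fun t => φ x t := fun x =>
    hφ.comp (Continuous.prodMk_right x)
  have hψt : ∀ x : ℝ, Continuous fun t => ψ x t := fun x =>
    hψ.comp (Continuous.prodMk_right x)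
  -- bound for ψ on a compact box around (x₀, [a₀,b])
  obtain ⟨C₁, hC₁⟩ := (isCompact_Icc.prod (isCompact_uIcc (a := a₀) (b := b))).exists_bound_of_continuousOn
    (s := Icc (x₀ - 1) (x₀ + 1) ×ˢ uIcc a₀ b) hψ.continuousOn
  -- Part A : fixed endpoints, varying parameter
  have hA : HasDerivAt (fun x => ∫ t in a₀..b, φ x t) (∫ t in a₀..b, ψ x₀ t) x₀ := by
    have := intervalIntegral.hasDerivAt_integral_of_dominated_loc_of_deriv_le
      (F := fun x t => φ x t) (F' := fun x t => ψ x t) (x₀ := x₀) (a := a₀) (b := b)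
      (bound := fun _ => C₁) (μ := volume) (s := Metric.ball x₀ 1) (Metric.ball_mem_nhds x₀ one_pos)
      (Filter.Eventually.of_forall fun x => ((hφt x).aestronglyMeasurable).restrict)
      ((hφt x₀).intervalIntegrable _ _)
      (((hψt x₀).aestronglyMeasurable).restrict)
      (Filter.Eventually.of_forall fun t ht x hx => by
        have hxmem : x ∈ Icc (x₀ - 1) (x₀ + 1) := by
          have := mem_ball_iff_norm.1 hx
          rw [Real.norm_eq_abs, abs_sub_lt_iff] at this
          constructor <;> linarith [this.1, this.2]
        have htmem : t ∈ uIcc a₀ b := by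
          exact Set.Ioc_subset_Icc_self ht
        exact hC₁ (x, t) ⟨hxmem, htmem⟩)
      (intervalIntegrable_const)
      (Filter.Eventually.of_forall fun t ht x hx => hd x t)
    exact this.2
  have hAg : HasDerivAt (fun a => ∫ t in a₀..b, φ (g a) t)
      ((∫ t in a₀..b, ψ x₀ t) * g') a₀ := hA.comp a₀ hg
  -- Part B₁ : FTC part
  have hB₁ : HasDerivAt (fun a => ∫ t in a₀..a, φ x₀ t) (φ x₀ a₀) a₀ :=
    intervalIntegral.integral_hasDerivAt_right
      ((hφt x₀).intervalIntegrable _ _)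
      ((hφt x₀).stronglyMeasurableAtFilter _ _)
      (hφt x₀).continuousAt
  -- Part R : remainder is o(a - a₀)
  set R : ℝ → ℝ := fun a => ∫ t in a₀..a, (φ (g a) t - φ x₀ t) with hR_def
  have hR : HasDerivAt R 0 a₀ := by
    rw [hasDerivAt_iff_isLittleO]
    have hR0 : R a₀ = 0 := by simp [hR_def]
    simp only [hR0, smul_zero, sub_zero]
    rw [Asymptotics.isLittleO_iff]
    intro c hc
    obtain ⟨C₂, hC₂⟩ := (isCompact_Icc.prod
      (isCompact_Icc (a := a₀ - 1) (b := a₀ + 1))).exists_bound_of_continuousOn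
      (s := Icc (x₀ - 1) (x₀ + 1) ×ˢ Icc (a₀ - 1) (a₀ + 1)) hψ.continuousOn
    have hC₂0 : 0 ≤ C₂ := le_trans (norm_nonneg _)
      (hC₂ (x₀, a₀) ⟨by constructor <;> linarith, by constructor <;> linarith⟩)
    have hδ : 0 < min 1 (c / (C₂ + 1)) := lt_min one_pos (by positivity)
    have hev1 : ∀ᶠ a in 𝓝 a₀, |g a - x₀| < min 1 (c / (C₂ + 1)) := by
      have : Tendsto g (𝓝 a₀) (𝓝 x₀) := hg.continuousAt
      have := this (Metric.ball_mem_nhds x₀ hδ)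
      filter_upwards [this] with a ha
      simpa [Real.dist_eq] using ha
    have hev2 : ∀ᶠ a in 𝓝 a₀, |a - a₀| < 1 := by
      have : Metric.ball a₀ 1 ∈ 𝓝 a₀ := Metric.ball_mem_nhds a₀ one_pos
      filter_upwards [this] with a ha
      simpa [Real.dist_eq] using ha
    filter_upwards [hev1, hev2] with a ha1 ha2
    have hlip : ∀ t ∈ Set.uIoc a₀ a, ‖φ (g a) t - φ x₀ t‖ ≤ C₂ * |g a - x₀| := by
      intro t ht
      have htmem : t ∈ Icc (a₀ - 1) (a₀ + 1) := by
        have h1 : t ∈ uIcc a₀ a := Set.Ioc_subset_Icc_self ht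
        rw [Set.uIcc_eq_union] at h1
        rw [abs_sub_lt_iff] at ha2
        rcases h1 with h | h
        · exact ⟨by linarith [h.1], by linarith [h.2]⟩
        · exact ⟨by linarith [h.1, ha2.2], by linarith [h.2, ha2.1]⟩
      have hgmem : g a ∈ Icc (x₀ - 1) (x₀ + 1) := by
        have := lt_of_lt_of_le ha1 (min_le_left _ _)
        rw [abs_sub_lt_iff] at this
        exact ⟨by linarith [this.2], by linarith [this.1]⟩
      have := Convex.norm_image_sub_le_of_norm_hasDerivWithin_le
        (f := fun v => φ v t) (f' := fun v => ψ v t) (s := Icc (x₀ - 1) (x₀ + 1))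
        (fun v hv => (hd v t).hasDerivWithinAt)
        (fun v hv => hC₂ (v, t) ⟨hv, htmem⟩)
        (convex_Icc _ _) (x := x₀) (y := g a)
        (Set.mem_Icc.2 ⟨by linarith, by linarith⟩) hgmem
      simpa [Real.norm_eq_abs] using this
    have hbound : ‖R a‖ ≤ (C₂ * |g a - x₀|) * |a - a₀| := by
      have := intervalIntegral.norm_integral_le_of_norm_le_const
        (f := fun t => φ (g a) t - φ x₀ t) (C := C₂ * |g a - x₀|) (a := a₀) (b := a) hlip
      simpa [hR_def] using this
    refine hbound.trans ?_
    have h1 : C₂ * |g a - x₀| ≤ c := by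
      have h2 : |g a - x₀| ≤ c / (C₂ + 1) := le_trans ha1.le (min_le_right _ _)
      have h3 : C₂ * |g a - x₀| ≤ C₂ * (c / (C₂ + 1)) :=
        mul_le_mul_of_nonneg_left h2 hC₂0
      have h4 : C₂ * (c / (C₂ + 1)) ≤ c := by
        rw [mul_div_assoc', div_le_iff₀ (by positivity : (0:ℝ) < C₂ + 1)]
        nlinarith
      linarith
    have : ‖a - a₀‖ = |a - a₀| := rfl
    rw [this]
    nlinarith [abs_nonneg (a - a₀), abs_nonneg (g a - x₀), mul_nonneg hC₂0 (abs_nonneg (g a - x₀))]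
  -- combine
  have hfun : ∀ a, (∫ t in a..b, φ (g a) t)
      = (∫ t in a₀..b, φ (g a) t) - ((∫ t in a₀..a, φ x₀ t) + R a) := by
    intro a
    have h1 : (∫ t in a₀..a, φ x₀ t) + R a = ∫ t in a₀..a, φ (g a) t := by
      rw [hR_def, ← intervalIntegral.integral_add (f := fun t => φ x₀ t) (g := fun t => φ (g a) t - φ x₀ t) ((hφt x₀).intervalIntegrable _ _)
        (((hφt (g a)).sub (hφt x₀)).intervalIntegrable _ _)]
      simp
    rw [h1]
    exact (intervalIntegral.integral_interval_sub_left
      ((hφt (g a)).intervalIntegrable _ _) ((hφt (g a)).intervalIntegrable _ _)).symm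
  have hmain : HasDerivAt (fun a => ∫ t in a..b, φ (g a) t)
      ((∫ t in a₀..b, ψ x₀ t) * g' - (φ x₀ a₀ + 0)) a₀ := by
    have := hAg.sub (hB₁.add hR)
    apply this.congr_of_eventuallyEq
    exact Filter.Eventually.of_forall hfun
  convert hmain using 1
  ring


section Main

variable {y ρ : ℝ}

noncomputable def gam (y ρ a : ℝ) : ℝ := Real.log ρ - Real.log y - Real.log (sbar y a)

lemma sbar_hasDerivAt (hy0 : 0 < y) (hy1 : y ≤ 1) (a : ℝ) :
    HasDerivAt (sbar y) (-(fT y a)) a := by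
  unfold sbar
  exact intervalIntegral.integral_hasDerivAt_left
    (((fT_continuous hy0 hy1)).intervalIntegrable _ _)
    ((fT_continuous hy0 hy1).stronglyMeasurableAtFilter _ _)
    (fT_continuous hy0 hy1).continuousAt

lemma sbar_pos (hy0 : 0 < y) (hy1 : y ≤ 1) {a : ℝ} (ha : a < Real.pi) : 0 < sbar y a := by
  have hpos0 : ∀ b : ℝ, 0 ≤ b → b < Real.pi → 0 < sbar y b := by
    intro b hb0 hbpi
    exact intervalIntegral.intervalIntegral_pos_of_pos_on
      ((fT_continuous hy0 hy1).intervalIntegrable _ _)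
      (fun x hx => fT_pos hy0 hy1 ⟨lt_of_le_of_lt hb0 hx.1, hx.2⟩) hbpi
  rcases le_or_gt 0 a with h | h
  · exact hpos0 a h ha
  · have hsplit : (∫ t in a..(0:ℝ), fT y t) + (∫ t in (0:ℝ)..Real.pi, fT y t) = sbar y a :=
      intervalIntegral.integral_add_adjacent_intervals
        ((fT_continuous hy0 hy1).intervalIntegrable _ _)
        ((fT_continuous hy0 hy1).intervalIntegrable _ _)
    have h1 : 0 ≤ ∫ t in a..(0:ℝ), fT y t :=
      intervalIntegral.integral_nonneg h.le (fun u _ => fT_nonneg hy0 hy1 u)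
    have h2 : 0 < ∫ t in (0:ℝ)..Real.pi, fT y t := hpos0 0 le_rfl Real.pi_pos
    rw [← hsplit]; linarith

lemma gam_hasDerivAt (hy0 : 0 < y) (hy1 : y ≤ 1) {a : ℝ} (ha : a < Real.pi) :
    HasDerivAt (gam y ρ) (fT y a / sbar y a) a := by
  have h1 : HasDerivAt (fun a => Real.log (sbar y a)) (-(fT y a) / sbar y a) a :=
    (sbar_hasDerivAt hy0 hy1 a).log (sbar_pos hy0 hy1 ha).ne'
  have h2 := h1.const_sub (Real.log ρ - Real.log y)
  have : gam y ρ = fun a => (Real.log ρ - Real.log y) - Real.log (sbar y a) := by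
    funext u; unfold gam; ring
  rw [this]
  refine h2.congr_deriv ?_
  field_simp

lemma exp_gam_eq (hy0 : 0 < y) (hρ : 0 < ρ) (hy1 : y ≤ 1) {a : ℝ} (ha : a < Real.pi) :
    Real.exp (gam y ρ a) = ρ / (y * sbar y a) := by
  unfold gam
  rw [Real.exp_sub, Real.exp_sub, Real.exp_log hρ, Real.exp_log hy0,
    Real.exp_log (sbar_pos hy0 hy1 ha)]
  rw [div_div]

/-- positivity of `1 + e^u·λ(t)` -/
lemma dpos (hy0 : 0 ≤ y) (u t : ℝ) : 0 < 1 + Real.exp u * lam y t := by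
  have := mul_nonneg (Real.exp_pos u).le (lam_nonneg hy0 t)
  linarith

noncomputable def phi1 (y u t : ℝ) : ℝ := Real.log (1 + Real.exp u * lam y t) * fT y t
noncomputable def psi1 (y u t : ℝ) : ℝ :=
  Real.exp u * lam y t / (1 + Real.exp u * lam y t) * fT y t
noncomputable def phi2 (y u t : ℝ) : ℝ := fT y t / (1 + Real.exp u * lam y t)
noncomputable def psi2 (y u t : ℝ) : ℝ :=
  -(Real.exp u * lam y t / (1 + Real.exp u * lam y t) ^ 2 * fT y t)

noncomputable def Efun (y ρ a : ℝ) : ℝ := ∫ t in a..Real.pi, phi2 y (gam y ρ a) t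
noncomputable def Qfun (y ρ a : ℝ) : ℝ :=
  ∫ t in a..Real.pi, fT y t / (1 + Real.exp (gam y ρ a) * lam y t) ^ 2
noncomputable def Gfun (y ρ a : ℝ) : ℝ :=
  1 - Efun y ρ a / sbar y a - Real.log (1 + Real.exp (gam y ρ a) * lam y a)

lemma phi1_cont (hy0 : 0 < y) (hy1 : y ≤ 1) :
    Continuous fun p : ℝ × ℝ => phi1 y p.1 p.2 := by
  unfold phi1
  apply Continuous.mul _ ((fT_continuous hy0 hy1).comp continuous_snd)
  apply Continuous.log
  · fun_prop
  · exact fun p => (dpos hy0.le p.1 p.2).ne'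

lemma psi1_cont (hy0 : 0 < y) (hy1 : y ≤ 1) :
    Continuous fun p : ℝ × ℝ => psi1 y p.1 p.2 := by
  unfold psi1
  apply Continuous.mul _ ((fT_continuous hy0 hy1).comp continuous_snd)
  apply Continuous.div (by fun_prop) (by fun_prop)
  exact fun p => (dpos hy0.le p.1 p.2).ne'

lemma phi2_cont (hy0 : 0 < y) (hy1 : y ≤ 1) :
    Continuous fun p : ℝ × ℝ => phi2 y p.1 p.2 := by
  unfold phi2
  apply Continuous.div ((fT_continuous hy0 hy1).comp continuous_snd) (by fun_prop)
  exact fun p => (dpos hy0.le p.1 p.2).ne'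

lemma psi2_cont (hy0 : 0 < y) (hy1 : y ≤ 1) :
    Continuous fun p : ℝ × ℝ => psi2 y p.1 p.2 := by
  unfold psi2
  apply Continuous.neg
  apply Continuous.mul _ ((fT_continuous hy0 hy1).comp continuous_snd)
  apply Continuous.div (by fun_prop) (by fun_prop)
  exact fun p => pow_ne_zero 2 (dpos hy0.le p.1 p.2).ne'

lemma phi1_hasDeriv (hy0 : 0 ≤ y) (u t : ℝ) :
    HasDerivAt (fun v => phi1 y v t) (psi1 y u t) u := by
  have hinner : HasDerivAt (fun v => 1 + Real.exp v * lam y t) (Real.exp u * lam y t) u :=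
    ((Real.hasDerivAt_exp u).mul_const (lam y t)).const_add 1
  have := (hinner.log (dpos hy0 u t).ne').mul_const (fT y t)
  unfold phi1 psi1
  convert this using 1

lemma phi2_hasDeriv (hy0 : 0 ≤ y) (u t : ℝ) :
    HasDerivAt (fun v => phi2 y v t) (psi2 y u t) u := by
  have hinner : HasDerivAt (fun v => 1 + Real.exp v * lam y t) (Real.exp u * lam y t) u :=
    ((Real.hasDerivAt_exp u).mul_const (lam y t)).const_add 1
  have := (hasDerivAt_const u (fT y t)).div hinner (dpos hy0 u t).ne'
  unfold phi2 psi2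
  refine this.congr_deriv ?_
  ring

lemma intInt (hy0 : 0 < y) (hy1 : y ≤ 1) (u a b : ℝ) :
    IntervalIntegrable (fun t => phi2 y u t) volume a b :=
  ((phi2_cont hy0 hy1).comp (Continuous.prodMk_right u)).intervalIntegrable _ _

lemma Ibar_hasDerivAt (hy0 : 0 < y) (hy1 : y ≤ 1) (hρ : 0 < ρ) {a : ℝ} (ha : a < Real.pi) :
    HasDerivAt (Ibar y ρ) (fT y a * Gfun y ρ a) a := by
  have hs := sbar_pos hy0 hy1 ha
  have hkey := key_param (phi1_cont hy0 hy1) (psi1_cont hy0 hy1)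
    (phi1_hasDeriv hy0.le) Real.pi (gam_hasDerivAt hy0 hy1 ha (ρ := ρ))
  -- Ibar agrees with the reparametrized integral near a
  have hagree : ∀ a' ∈ Iio Real.pi, Ibar y ρ a' = ∫ t in a'..Real.pi, phi1 y (gam y ρ a') t := by
    intro a' ha'
    unfold Ibar
    apply intervalIntegral.integral_congr
    intro t _
    unfold phi1 lam
    rw [exp_gam_eq hy0 hρ hy1 ha']
  have hIb : HasDerivAt (Ibar y ρ)
      (-(phi1 y (gam y ρ a) a) + fT y a / sbar y a * ∫ t in a..Real.pi, psi1 y (gam y ρ a) t)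
      a := by
    apply hkey.congr_of_eventuallyEq
    filter_upwards [Iio_mem_nhds ha] with a' ha'
    exact hagree a' ha'
  -- rewrite the derivative value
  have hsplit : (∫ t in a..Real.pi, psi1 y (gam y ρ a) t) = sbar y a - Efun y ρ a := by
    have hpt : ∀ t, psi1 y (gam y ρ a) t = fT y t - phi2 y (gam y ρ a) t := by
      intro t
      have hd := (dpos hy0.le (gam y ρ a) t).ne'
      unfold psi1 phi2
      field_simp
      ring
    rw [show (fun t => psi1 y (gam y ρ a) t) = fun t => fT y t - phi2 y (gam y ρ a) t from
      funext hpt]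
    rw [intervalIntegral.integral_sub ((fT_continuous hy0 hy1).intervalIntegrable _ _)
      (intInt hy0 hy1 _ _ _)]
    rfl
  convert hIb using 1
  rw [hsplit]
  unfold Gfun phi1
  field_simp
  ring

lemma Gfun_hasDerivAt (hy0 : 0 < y) (hy1 : y ≤ 1) (hρ : 0 < ρ) {a : ℝ} (ha : a < Real.pi) :
    HasDerivAt (Gfun y ρ)
      (fT y a / sbar y a *
          ((1 - Real.exp (gam y ρ a) * lam y a) / (1 + Real.exp (gam y ρ a) * lam y a) -
            Qfun y ρ a / sbar y a) -
        Real.exp (gam y ρ a) * (2 * Real.sqrt y * Real.sin a) /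
          (1 + Real.exp (gam y ρ a) * lam y a)) a := by
  have hs := sbar_pos hy0 hy1 ha
  have hdenom := dpos hy0.le (gam y ρ a) a
  have hE : HasDerivAt (Efun y ρ)
      (-(phi2 y (gam y ρ a) a) + fT y a / sbar y a * ∫ t in a..Real.pi, psi2 y (gam y ρ a) t)
      a :=
    key_param (phi2_cont hy0 hy1) (psi2_cont hy0 hy1) (phi2_hasDeriv hy0.le) Real.pi
      (gam_hasDerivAt hy0 hy1 ha (ρ := ρ))
  have hJ : (∫ t in a..Real.pi, psi2 y (gam y ρ a) t) = Qfun y ρ a - Efun y ρ a := by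
    have hpt : ∀ t, psi2 y (gam y ρ a) t
        = fT y t / (1 + Real.exp (gam y ρ a) * lam y t) ^ 2 - phi2 y (gam y ρ a) t := by
      intro t
      have hd := (dpos hy0.le (gam y ρ a) t).ne'
      unfold psi2 phi2
      field_simp
      ring
    rw [show (fun t => psi2 y (gam y ρ a) t) = fun t =>
        fT y t / (1 + Real.exp (gam y ρ a) * lam y t) ^ 2 - phi2 y (gam y ρ a) t from
      funext hpt]
    rw [intervalIntegral.integral_sub (Continuous.intervalIntegrable (by
        apply Continuous.div (fT_continuous hy0 hy1) (by fun_prop)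
        exact fun t => pow_ne_zero 2 (dpos hy0.le _ t).ne') _ _)
      (intInt hy0 hy1 _ _ _)]
    rfl
  have hsdr := sbar_hasDerivAt hy0 hy1 a
  have hEs := hE.div hsdr hs.ne'
  have hlam : HasDerivAt (lam y) (2 * Real.sqrt y * Real.sin a) a := by
    have h1 : HasDerivAt (fun t => 2 * Real.sqrt y * Real.cos t)
        (2 * Real.sqrt y * (-Real.sin a)) a := (Real.hasDerivAt_cos a).const_mul _
    have h2 := h1.const_sub (1 + y)
    have : lam y = fun t => 1 + y - 2 * Real.sqrt y * Real.cos t := by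
      funext t; unfold lam; ring
    rw [this]
    refine h2.congr_deriv ?_
    ring
  have hgexp : HasDerivAt (fun a => Real.exp (gam y ρ a))
      (Real.exp (gam y ρ a) * (fT y a / sbar y a)) a :=
    (gam_hasDerivAt hy0 hy1 ha (ρ := ρ)).exp
  have hinner := (hgexp.mul hlam).const_add 1
  have hD := hinner.log hdenom.ne'
  have hG := (hEs.const_sub 1).sub hD
  have hGf : Gfun y ρ = fun a => 1 - Efun y ρ a / sbar y a
      - Real.log (1 + Real.exp (gam y ρ a) * lam y a) := by
    funext u; unfold Gfun; ring
  rw [hGf]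
  refine hG.congr_deriv ?_
  rw [hJ]
  unfold phi2
  simp only [Pi.mul_apply]
  field_simp
  ring

lemma cauchy_schwarz (hy0 : 0 < y) (hy1 : y ≤ 1) {a : ℝ} (ha : a < Real.pi) :
    (Efun y ρ a) ^ 2 ≤ Qfun y ρ a * sbar y a := by
  have hs := sbar_pos hy0 hy1 ha
  obtain ⟨m, hm⟩ : ∃ m : ℝ, m = Efun y ρ a / sbar y a := ⟨_, rfl⟩
  have hd : ∀ t : ℝ, (1 + Real.exp (gam y ρ a) * lam y t) ≠ 0 :=
    fun t => (dpos hy0.le (gam y ρ a) t).ne'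
  have h0 : 0 ≤ ∫ t in a..Real.pi,
      fT y t * (1 / (1 + Real.exp (gam y ρ a) * lam y t) - m) ^ 2 :=
    intervalIntegral.integral_nonneg ha.le
      (fun t _ => mul_nonneg (fT_nonneg hy0 hy1 t) (sq_nonneg _))
  have hexp : (fun t => fT y t * (1 / (1 + Real.exp (gam y ρ a) * lam y t) - m) ^ 2)
      = fun t => (fT y t / (1 + Real.exp (gam y ρ a) * lam y t) ^ 2
          - (2 * m) * phi2 y (gam y ρ a) t) + m ^ 2 * fT y t := by
    funext t
    unfold phi2
    have := hd t
    field_simp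
    ring
  rw [hexp] at h0
  have hc1 : Continuous fun t => fT y t / (1 + Real.exp (gam y ρ a) * lam y t) ^ 2 := by
    apply Continuous.div (fT_continuous hy0 hy1) (by fun_prop)
    exact fun t => pow_ne_zero 2 (hd t)
  have hc2 : Continuous fun t => phi2 y (gam y ρ a) t := by
    unfold phi2
    exact Continuous.div (fT_continuous hy0 hy1) (by fun_prop) hd
  rw [intervalIntegral.integral_add (f := fun t => fT y t / (1 + Real.exp (gam y ρ a) * lam y t) ^ 2 - (2 * m) * phi2 y (gam y ρ a) t) (g := fun t => m ^ 2 * fT y t)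
      ((hc1.sub (continuous_const.mul hc2)).intervalIntegrable _ _)
      ((continuous_const.mul (fT_continuous hy0 hy1)).intervalIntegrable _ _),
    intervalIntegral.integral_sub (g := fun t => (2 * m) * phi2 y (gam y ρ a) t) (hc1.intervalIntegrable _ _)
      ((continuous_const.mul hc2).intervalIntegrable _ _),
    intervalIntegral.integral_const_mul, intervalIntegral.integral_const_mul] at h0
  have hQ : (∫ t in a..Real.pi, fT y t / (1 + Real.exp (gam y ρ a) * lam y t) ^ 2)
      = Qfun y ρ a := rfl
  have hE : (∫ t in a..Real.pi, phi2 y (gam y ρ a) t) = Efun y ρ a := rfl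
  have hS : (∫ t in a..Real.pi, fT y t) = sbar y a := rfl
  rw [hQ, hE, hS, hm] at h0
  have hs' : sbar y a ≠ 0 := hs.ne'
  have key : (Qfun y ρ a - 2 * (Efun y ρ a / sbar y a) * Efun y ρ a
      + (Efun y ρ a / sbar y a) ^ 2 * sbar y a) * sbar y a
      = Qfun y ρ a * sbar y a - Efun y ρ a ^ 2 := by
    field_simp
    ring
  have h1 := mul_nonneg h0 hs.le
  rw [key] at h1
  linarith

lemma ineqC {x : ℝ} (hx : 0 ≤ x) : 1 - x ≤ (1 - Real.log (1 + x)) ^ 2 * (1 + x) := by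
  have hx1 : (0:ℝ) < 1 + x := by linarith
  set u := Real.log (1 + x) with hu
  have hu0 : 0 ≤ u := Real.log_nonneg (by linarith)
  have hexpu : Real.exp u = 1 + x := Real.exp_log hx1
  have hg : ∀ v : ℝ, HasDerivAt (fun w => ((1 - w) ^ 2 + 1) * Real.exp w)
      (v ^ 2 * Real.exp v) v := by
    intro v
    have h1 : HasDerivAt (fun w : ℝ => (1 - w) ^ 2 + 1)
        ((2 : ℕ) * (1 - v) ^ 1 * (-1)) v :=
      (((hasDerivAt_id v).const_sub 1).pow 2).add_const 1
    have h2 := h1.mul (Real.hasDerivAt_exp v)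
    refine h2.congr_deriv ?_
    push_cast
    ring
  have hmono : MonotoneOn (fun w => ((1 - w) ^ 2 + 1) * Real.exp w) (Ici (0:ℝ)) := by
    apply monotoneOn_of_deriv_nonneg (convex_Ici 0)
    · exact Continuous.continuousOn (by fun_prop)
    · exact fun v _ => (hg v).differentiableAt.differentiableWithinAt
    · intro v hv
      rw [(hg v).deriv]
      positivity
  have h2 : ((1 - (0:ℝ)) ^ 2 + 1) * Real.exp 0 ≤ ((1 - u) ^ 2 + 1) * Real.exp u :=
    hmono (self_mem_Ici) hu0 hu0
  rw [hexpu] at h2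
  simp at h2
  nlinarith

lemma Gderiv_neg (hy0 : 0 < y) (hy1 : y ≤ 1) (hρ : 0 < ρ) {a : ℝ}
    (ha : a ∈ Set.Ioo 0 Real.pi) (h0 : Gfun y ρ a = 0) :
    fT y a / sbar y a *
          ((1 - Real.exp (gam y ρ a) * lam y a) / (1 + Real.exp (gam y ρ a) * lam y a) -
            Qfun y ρ a / sbar y a) -
        Real.exp (gam y ρ a) * (2 * Real.sqrt y * Real.sin a) /
          (1 + Real.exp (gam y ρ a) * lam y a) < 0 := by
  obtain ⟨ha0, hapi⟩ := ha
  have hs := sbar_pos hy0 hy1 hapi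
  set x := Real.exp (gam y ρ a) * lam y a with hxdef
  have hx0 : 0 ≤ x := mul_nonneg (Real.exp_pos _).le (lam_nonneg hy0.le a)
  have hx1 : (0:ℝ) < 1 + x := by linarith
  -- second term is strictly positive
  have hterm2 : 0 < Real.exp (gam y ρ a) * (2 * Real.sqrt y * Real.sin a) / (1 + x) := by
    apply div_pos _ hx1
    apply mul_pos (Real.exp_pos _)
    have := Real.sin_pos_of_pos_of_lt_pi ha0 hapi
    have := Real.sqrt_pos.2 hy0
    positivity
  -- first factor is nonpositive
  have hM : Efun y ρ a / sbar y a = 1 - Real.log (1 + x) := by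
    unfold Gfun at h0
    rw [← hxdef] at h0
    linarith
  have hCS := cauchy_schwarz hy0 hy1 hapi (ρ := ρ)
  have hQm : (1 - Real.log (1 + x)) ^ 2 ≤ Qfun y ρ a / sbar y a := by
    rw [← hM]
    rw [div_pow, div_le_div_iff₀ (by positivity) hs]
    calc Efun y ρ a ^ 2 * sbar y a ≤ (Qfun y ρ a * sbar y a) * sbar y a :=
          mul_le_mul_of_nonneg_right hCS hs.le
      _ = Qfun y ρ a / sbar y a * sbar y a ^ 2 * sbar y a := by field_simp <;> ring
      _ = Qfun y ρ a * sbar y a ^ 2 := by field_simp <;> ring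
  have hineq := ineqC hx0
  have hbr : (1 - x) / (1 + x) - Qfun y ρ a / sbar y a ≤ 0 := by
    have h1 : (1 - x) / (1 + x) ≤ (1 - Real.log (1 + x)) ^ 2 := by
      rw [div_le_iff₀ hx1]
      nlinarith
    linarith
  have hfs : 0 ≤ fT y a / sbar y a := div_nonneg (fT_nonneg hy0 hy1 a) hs.le
  have hterm1 : fT y a / sbar y a * ((1 - x) / (1 + x) - Qfun y ρ a / sbar y a) ≤ 0 :=
    mul_nonpos_of_nonneg_of_nonpos hfs hbr
  linarith

lemma G_slope (hy0 : 0 < y) (hy1 : y ≤ 1) (hρ : 0 < ρ) {a : ℝ}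
    (ha : a ∈ Set.Ioo 0 Real.pi) (h0 : Gfun y ρ a = 0) :
    (∀ᶠ u in 𝓝[<] a, 0 < Gfun y ρ u) ∧ (∀ᶠ u in 𝓝[>] a, Gfun y ρ u < 0) := by
  have hG := Gfun_hasDerivAt hy0 hy1 hρ ha.2 (ρ := ρ)
  have hd := Gderiv_neg hy0 hy1 hρ ha h0
  have hslope := hasDerivAt_iff_tendsto_slope.1 hG
  have hev : ∀ᶠ u in 𝓝[≠] a, slope (Gfun y ρ) a u < 0 := hslope.eventually_lt_const hd
  constructor
  · have hle : 𝓝[<] a ≤ 𝓝[≠] a := nhdsWithin_mono a (fun u hu => ne_of_lt hu)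
    filter_upwards [hev.filter_mono hle, self_mem_nhdsWithin] with u hu hu'
    rw [slope_def_field, h0, sub_zero] at hu
    by_contra hc
    push_neg at hc
    have hua : u - a ≤ 0 := by simp only [Set.mem_Iio] at hu'; linarith
    have h2 : 0 ≤ Gfun y ρ u / (u - a) := div_nonneg_iff.2 (Or.inr ⟨hc, hua⟩)
    linarith
  · have hle : 𝓝[>] a ≤ 𝓝[≠] a := nhdsWithin_mono a (fun u hu => (ne_of_gt hu))
    filter_upwards [hev.filter_mono hle, self_mem_nhdsWithin] with u hu hu'
    rw [slope_def_field, h0, sub_zero] at hu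
    simp only [Set.mem_Ioi] at hu'
    have hua : 0 < u - a := by linarith
    by_contra hc
    push_neg at hc
    have := div_nonneg hc hua.le
    linarith

lemma G_zero_unique (hy0 : 0 < y) (hy1 : y ≤ 1) (hρ : 0 < ρ) :
    ∀ a₀ ∈ Set.Ioo 0 Real.pi, ∀ a₁ ∈ Set.Ioo 0 Real.pi,
      Gfun y ρ a₀ = 0 → Gfun y ρ a₁ = 0 → a₀ = a₁ := by
  have hcont : ∀ v ∈ Set.Iio Real.pi, ContinuousAt (Gfun y ρ) v := fun v hv =>
    (Gfun_hasDerivAt hy0 hy1 hρ hv).continuousAt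
  -- main step: no two zeros a₀ < a₁
  have main : ∀ a₀ ∈ Set.Ioo 0 Real.pi, ∀ a₁ ∈ Set.Ioo 0 Real.pi,
      Gfun y ρ a₀ = 0 → Gfun y ρ a₁ = 0 → ¬(a₀ < a₁) := by
    intro a₀ h₀ a₁ h₁ hG0 hG1 hlt
    -- pick u ∈ (a₀, a₁) with G u < 0
    obtain ⟨u, hu_neg, hu_mem⟩ :=
      ((G_slope hy0 hy1 hρ h₀ hG0).2.and
        (Filter.eventually_mem_set.2 (Ioo_mem_nhdsGT_of_mem ⟨le_refl a₀, hlt⟩))).exists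
    obtain ⟨hu0, hu1⟩ := hu_mem
    set Z := {t : ℝ | t ∈ Set.Icc u a₁ ∧ Gfun y ρ t = 0} with hZ
    have hZne : a₁ ∈ Z := ⟨⟨le_of_lt hu1, le_refl _⟩, hG1⟩
    have hZbdd : BddBelow Z := ⟨u, fun t ht => ht.1.1⟩
    have hGcontOn : ContinuousOn (Gfun y ρ) (Set.Icc u a₁) := fun v hv =>
      (hcont v (lt_of_le_of_lt hv.2 h₁.2)).continuousWithinAt
    have hZclosed : IsClosed Z := by
      have h := hGcontOn.preimage_isClosed_of_isClosed isClosed_Icc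
        (isClosed_singleton (x := (0:ℝ)))
      have heq : Z = Set.Icc u a₁ ∩ Gfun y ρ ⁻¹' {0} := by
        ext t
        simp only [hZ, Set.mem_setOf_eq, Set.mem_inter_iff, Set.mem_preimage,
          Set.mem_singleton_iff]
      rw [heq]
      exact h
    have hwZ : sInf Z ∈ Z := hZclosed.csInf_mem ⟨a₁, hZne⟩ hZbdd
    set w := sInf Z with hw
    obtain ⟨⟨hwu, hwa₁⟩, hGw⟩ := hwZ
    have hwu' : u < w := lt_of_le_of_ne hwu (fun h => by
      rw [← h] at hGw; exact absurd hGw (ne_of_lt hu_neg))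
    have hwmem : w ∈ Set.Ioo 0 Real.pi :=
      ⟨lt_trans (lt_trans h₀.1 hu0) hwu', lt_of_le_of_lt hwa₁ h₁.2⟩
    -- pick v ∈ (u, w) with G v > 0
    obtain ⟨v, hv_pos, hv_mem⟩ :=
      ((G_slope hy0 hy1 hρ hwmem hGw).1.and
        (Filter.eventually_mem_set.2 (Ioo_mem_nhdsLT_of_mem ⟨hwu', le_refl w⟩))).exists
    obtain ⟨hvu, hvw⟩ := hv_mem
    -- IVT between u and v
    have hcontuv : ContinuousOn (Gfun y ρ) (Set.Icc u v) :=
      hGcontOn.mono (Set.Icc_subset_Icc (le_refl _) (le_trans hvw.le hwa₁))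
    have hz := intermediate_value_Ioo hvu.le hcontuv
      (Set.mem_Ioo.2 ⟨hu_neg, hv_pos⟩)
    obtain ⟨z, hz_mem, hz_zero⟩ := hz
    have hzZ : z ∈ Z := ⟨⟨hz_mem.1.le, le_trans (le_trans hz_mem.2.le hvw.le) hwa₁⟩, hz_zero⟩
    have := csInf_le hZbdd hzZ
    have : w ≤ z := this
    linarith [hz_mem.2, hvw]
  intro a₀ h₀ a₁ h₁ hG0 hG1
  rcases lt_trichotomy a₀ a₁ with h | h | h
  · exact absurd h (main a₀ h₀ a₁ h₁ hG0 hG1)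
  · exact h
  · exact absurd h (main a₁ h₁ a₀ h₀ hG1 hG0)

lemma exists_G_neg (hy0 : 0 < y) (hy1 : y ≤ 1) (hρ : 0 < ρ) :
    ∃ b ∈ Set.Ioo 0 Real.pi, Gfun y ρ b < 0 := by
  have hpi := Real.pi_pos
  have he1 : (1:ℝ) < Real.exp 1 - 1 + 1 := by
    have := Real.add_one_lt_exp (one_ne_zero (α := ℝ))
    linarith
  have hem : (0:ℝ) < Real.exp 1 - 1 := by linarith
  set δ := ρ / (y * (Real.exp 1 - 1)) with hδ
  have hδpos : 0 < δ := by positivity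
  have hsπ : sbar y Real.pi = 0 := intervalIntegral.integral_same
  have htend : Tendsto (sbar y) (𝓝 Real.pi) (𝓝 0) := by
    have := (sbar_hasDerivAt hy0 hy1 Real.pi).continuousAt
    rwa [ContinuousAt, hsπ] at this
  have hev : ∀ᶠ b in 𝓝[<] Real.pi, sbar y b < δ :=
    (htend.eventually_lt_const hδpos).filter_mono nhdsWithin_le_nhds
  have hmem : Set.Ioo (Real.pi/2) Real.pi ∈ 𝓝[<] Real.pi :=
    Ioo_mem_nhdsLT_of_mem ⟨by linarith, le_refl _⟩
  obtain ⟨b, hbs, hbmem⟩ := (hev.and (Filter.eventually_mem_set.2 hmem)).exists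
  obtain ⟨hb2, hbpi⟩ := hbmem
  have hb0 : 0 < b := lt_trans (by linarith) hb2
  refine ⟨b, ⟨hb0, hbpi⟩, ?_⟩
  have hs := sbar_pos hy0 hy1 hbpi
  have hcos : Real.cos b ≤ 0 :=
    Real.cos_nonpos_of_pi_div_two_le_of_le hb2.le (by linarith)
  have hlam : 1 ≤ lam y b := by
    unfold lam
    have h1 : 0 ≤ 2 * Real.sqrt y * (-Real.cos b) := by
      have := Real.sqrt_nonneg y
      have : (0:ℝ) ≤ 2 * Real.sqrt y := by positivity
      nlinarith
    nlinarith [hy0.le]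
  have hc : Real.exp 1 - 1 < Real.exp (gam y ρ b) := by
    rw [exp_gam_eq hy0 hρ hy1 hbpi]
    rw [lt_div_iff₀ (by positivity)]
    calc (Real.exp 1 - 1) * (y * sbar y b) < (Real.exp 1 - 1) * (y * δ) := by
          apply mul_lt_mul_of_pos_left _ hem
          exact mul_lt_mul_of_pos_left hbs hy0
      _ = ρ := by
          rw [hδ]
          field_simp
  have hlog : 1 < Real.log (1 + Real.exp (gam y ρ b) * lam y b) := by
    rw [Real.lt_log_iff_exp_lt (by positivity)]
    have h1 : Real.exp 1 - 1 < Real.exp (gam y ρ b) * lam y b := by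
      calc Real.exp 1 - 1 < Real.exp (gam y ρ b) := hc
        _ = Real.exp (gam y ρ b) * 1 := by ring
        _ ≤ Real.exp (gam y ρ b) * lam y b :=
            mul_le_mul_of_nonneg_left hlam (Real.exp_pos _).le
    linarith
  have hE : 0 ≤ Efun y ρ b := by
    apply intervalIntegral.integral_nonneg hbpi.le
    intro t _
    unfold phi2
    exact div_nonneg (fT_nonneg hy0 hy1 t) (dpos hy0.le _ t).le
  have hEs : 0 ≤ Efun y ρ b / sbar y b := div_nonneg hE hs.le
  unfold Gfun
  linarith

lemma G_pos_left (hy0 : 0 < y) (hy1 : y ≤ 1) (hρ : 0 < ρ) {a₀ : ℝ}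
    (h₀ : a₀ ∈ Set.Ioo 0 Real.pi) (hG0 : Gfun y ρ a₀ = 0) :
    ∀ a ∈ Set.Ioo 0 a₀, 0 < Gfun y ρ a := by
  intro a ha
  have hapi : a ∈ Set.Ioo 0 Real.pi := ⟨ha.1, lt_trans ha.2 h₀.2⟩
  rcases lt_trichotomy (Gfun y ρ a) 0 with h | h | h
  · exfalso
    obtain ⟨v, hvpos, hvmem⟩ := ((G_slope hy0 hy1 hρ h₀ hG0).1.and
      (Filter.eventually_mem_set.2 (Ioo_mem_nhdsLT_of_mem ⟨ha.2, le_refl a₀⟩))).exists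
    have hcont : ContinuousOn (Gfun y ρ) (Set.Icc a v) := fun w hw =>
      ((Gfun_hasDerivAt hy0 hy1 hρ
        (lt_trans (lt_of_le_of_lt hw.2 hvmem.2) h₀.2)).continuousAt).continuousWithinAt
    obtain ⟨z, hz, hz0⟩ := intermediate_value_Ioo hvmem.1.le hcont (Set.mem_Ioo.2 ⟨h, hvpos⟩)
    have hzmem : z ∈ Set.Ioo 0 Real.pi :=
      ⟨lt_trans ha.1 hz.1, lt_trans (lt_trans hz.2 hvmem.2) h₀.2⟩
    have := G_zero_unique hy0 hy1 hρ z hzmem a₀ h₀ hz0 hG0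
    rw [this] at hz
    linarith [hz.2, hvmem.2]
  · exfalso
    have := G_zero_unique hy0 hy1 hρ a hapi a₀ h₀ h hG0
    linarith [ha.2]
  · exact h

lemma G_neg_right (hy0 : 0 < y) (hy1 : y ≤ 1) (hρ : 0 < ρ) {a₀ : ℝ}
    (h₀ : a₀ ∈ Set.Ioo 0 Real.pi) (hG0 : Gfun y ρ a₀ = 0) :
    ∀ a ∈ Set.Ioo a₀ Real.pi, Gfun y ρ a < 0 := by
  intro a ha
  have hapi : a ∈ Set.Ioo 0 Real.pi := ⟨lt_trans h₀.1 ha.1, ha.2⟩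
  rcases lt_trichotomy (Gfun y ρ a) 0 with h | h | h
  · exact h
  · exfalso
    have := G_zero_unique hy0 hy1 hρ a hapi a₀ h₀ h hG0
    linarith [ha.1]
  · exfalso
    obtain ⟨v, hvneg, hvmem⟩ := ((G_slope hy0 hy1 hρ h₀ hG0).2.and
      (Filter.eventually_mem_set.2 (Ioo_mem_nhdsGT_of_mem ⟨le_refl a₀, ha.1⟩))).exists
    have hcont : ContinuousOn (Gfun y ρ) (Set.Icc v a) := fun w hw =>
      ((Gfun_hasDerivAt hy0 hy1 hρ (lt_of_le_of_lt hw.2 ha.2)).continuousAt).continuousWithinAt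
    obtain ⟨z, hz, hz0⟩ := intermediate_value_Ioo hvmem.2.le hcont (Set.mem_Ioo.2 ⟨hvneg, h⟩)
    have hzmem : z ∈ Set.Ioo 0 Real.pi :=
      ⟨lt_trans (lt_trans h₀.1 hvmem.1) hz.1, lt_trans hz.2 ha.2⟩
    have := G_zero_unique hy0 hy1 hρ z hzmem a₀ h₀ hz0 hG0
    rw [this] at hz
    linarith [hz.1, hvmem.1]

end Main

end OT

/-- Theorem 3: for fixed `y ∈ (0,1]` and SNR `ρ > 0`, the asymptotic information
rate `Ī` is differentiable on `(0,π)`, its derivative has at most one zero in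
`(0,π)`, and the optimal threshold maximizing `Ī` over `[0,π)` is either the unique
zero of `Ī'` in `(0,π)` if it exists, or `0` if `Ī'` never vanishes on `(0,π)`. -/
theorem optimal_threshold_characterization
    (y ρ : ℝ) (hy : y ∈ Set.Ioc (0 : ℝ) 1) (hρ : 0 < ρ) :
    (∀ a ∈ Set.Ioo 0 Real.pi, DifferentiableAt ℝ (Ibar y ρ) a) ∧
    (∀ a₀ ∈ Set.Ioo 0 Real.pi, ∀ a₁ ∈ Set.Ioo 0 Real.pi,
      deriv (Ibar y ρ) a₀ = 0 → deriv (Ibar y ρ) a₁ = 0 → a₀ = a₁) ∧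
    (∀ a₀ ∈ Set.Ioo 0 Real.pi, deriv (Ibar y ρ) a₀ = 0 →
      ∀ a ∈ Set.Ico 0 Real.pi, Ibar y ρ a ≤ Ibar y ρ a₀) ∧
    ((∀ a ∈ Set.Ioo 0 Real.pi, deriv (Ibar y ρ) a ≠ 0) →
      ∀ a ∈ Set.Ico 0 Real.pi, Ibar y ρ a ≤ Ibar y ρ 0) := by
  obtain ⟨hy0, hy1⟩ := hy
  have hderiv : ∀ a ∈ Set.Iio Real.pi,
      deriv (Ibar y ρ) a = fT y a * OT.Gfun y ρ a := fun a ha =>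
    (OT.Ibar_hasDerivAt hy0 hy1 hρ ha).deriv
  have hzero : ∀ a₀ ∈ Set.Ioo 0 Real.pi, deriv (Ibar y ρ) a₀ = 0 → OT.Gfun y ρ a₀ = 0 := by
    intro a₀ h₀ hd
    rw [hderiv a₀ h₀.2] at hd
    rcases mul_eq_zero.1 hd with h | h
    · exact absurd h (OT.fT_pos hy0 hy1 h₀).ne'
    · exact h
  refine ⟨?_, ?_, ?_, ?_⟩
  · intro a ha
    exact (OT.Ibar_hasDerivAt hy0 hy1 hρ ha.2).differentiableAt
  · intro a₀ h₀ a₁ h₁ hd0 hd1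
    exact OT.G_zero_unique hy0 hy1 hρ a₀ h₀ a₁ h₁ (hzero a₀ h₀ hd0) (hzero a₁ h₁ hd1)
  · intro a₀ h₀ hd0 a ha
    have hG0 := hzero a₀ h₀ hd0
    rcases le_or_gt a a₀ with hle | hlt
    · have hmono : MonotoneOn (Ibar y ρ) (Set.Icc 0 a₀) := by
        apply monotoneOn_of_deriv_nonneg (convex_Icc 0 a₀)
        · exact fun v hv => (OT.Ibar_hasDerivAt hy0 hy1 hρ
            (lt_of_le_of_lt hv.2 h₀.2)).continuousAt.continuousWithinAt
        · intro v hv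
          rw [interior_Icc] at hv
          exact (OT.Ibar_hasDerivAt hy0 hy1 hρ
            (lt_trans hv.2 h₀.2)).differentiableAt.differentiableWithinAt
        · intro v hv
          rw [interior_Icc] at hv
          rw [hderiv v (lt_trans hv.2 h₀.2)]
          exact mul_nonneg (OT.fT_nonneg hy0 hy1 v)
            (OT.G_pos_left hy0 hy1 hρ h₀ hG0 v hv).le
      exact hmono ⟨ha.1, hle⟩ ⟨h₀.1.le, le_refl a₀⟩ hle
    · have hanti : AntitoneOn (Ibar y ρ) (Set.Icc a₀ a) := by
        apply antitoneOn_of_deriv_nonpos (convex_Icc a₀ a)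
        · exact fun v hv => (OT.Ibar_hasDerivAt hy0 hy1 hρ
            (lt_of_le_of_lt hv.2 ha.2)).continuousAt.continuousWithinAt
        · intro v hv
          rw [interior_Icc] at hv
          exact (OT.Ibar_hasDerivAt hy0 hy1 hρ
            (lt_trans hv.2 ha.2)).differentiableAt.differentiableWithinAt
        · intro v hv
          rw [interior_Icc] at hv
          rw [hderiv v (lt_trans hv.2 ha.2)]
          exact mul_nonpos_of_nonneg_of_nonpos (OT.fT_nonneg hy0 hy1 v)
            (OT.G_neg_right hy0 hy1 hρ h₀ hG0 v ⟨hv.1, lt_trans hv.2 ha.2⟩).le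
      exact hanti ⟨le_refl a₀, hlt.le⟩ ⟨hlt.le, le_refl a⟩ hlt.le
  · intro hne a ha
    rcases eq_or_lt_of_le ha.1 with h0a | h0a
    · rw [← h0a]
    · have hGne : ∀ v ∈ Set.Ioo 0 Real.pi, OT.Gfun y ρ v ≠ 0 := by
        intro v hv hGv
        apply hne v hv
        rw [hderiv v hv.2, hGv, mul_zero]
      obtain ⟨b, hb, hGb⟩ := OT.exists_G_neg hy0 hy1 hρ (ρ := ρ)
      have hGneg : ∀ v ∈ Set.Ioo 0 Real.pi, OT.Gfun y ρ v < 0 := by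
        intro v hv
        rcases lt_trichotomy (OT.Gfun y ρ v) 0 with h | h | h
        · exact h
        · exact absurd h (hGne v hv)
        · exfalso
          rcases lt_trichotomy v b with hvb | hvb | hvb
          · have hcont : ContinuousOn (OT.Gfun y ρ) (Set.Icc v b) := fun w hw =>
              ((OT.Gfun_hasDerivAt hy0 hy1 hρ
                (lt_of_le_of_lt hw.2 hb.2)).continuousAt).continuousWithinAt
            obtain ⟨z, hz, hz0⟩ := intermediate_value_Ioo' hvb.le hcont
              (Set.mem_Ioo.2 ⟨hGb, h⟩)
            exact hGne z ⟨lt_trans hv.1 hz.1, lt_trans hz.2 hb.2⟩ hz0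
          · rw [hvb] at h; linarith
          · have hcont : ContinuousOn (OT.Gfun y ρ) (Set.Icc b v) := fun w hw =>
              ((OT.Gfun_hasDerivAt hy0 hy1 hρ
                (lt_of_le_of_lt hw.2 hv.2)).continuousAt).continuousWithinAt
            obtain ⟨z, hz, hz0⟩ := intermediate_value_Ioo hvb.le hcont
              (Set.mem_Ioo.2 ⟨hGb, h⟩)
            exact hGne z ⟨lt_trans hb.1 hz.1, lt_trans hz.2 hv.2⟩ hz0
      have hanti : AntitoneOn (Ibar y ρ) (Set.Icc 0 a) := by
        apply antitoneOn_of_deriv_nonpos (convex_Icc 0 a)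
        · exact fun v hv => (OT.Ibar_hasDerivAt hy0 hy1 hρ
            (lt_of_le_of_lt hv.2 ha.2)).continuousAt.continuousWithinAt
        · intro v hv
          rw [interior_Icc] at hv
          exact (OT.Ibar_hasDerivAt hy0 hy1 hρ
            (lt_trans hv.2 ha.2)).differentiableAt.differentiableWithinAt
        · intro v hv
          rw [interior_Icc] at hv
          rw [hderiv v (lt_trans hv.2 ha.2)]
          exact mul_nonpos_of_nonneg_of_nonpos (OT.fT_nonneg hy0 hy1 v)
            (hGneg v ⟨hv.1, lt_trans hv.2 ha.2⟩).le
      exact hanti ⟨le_refl 0, ha.1⟩ ⟨ha.1, le_refl a⟩ ha.1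
end

section
/- Fix y ∈ (0,1] and let 0 < ρ₀ < ρ₁. If a₀ ∈ [0,π) maximizes Ī(·; ρ₀) over [0,π) and a₁ ∈ [0,π) maximizes Ī(·; ρ₁) over [0,π), then a₁ ≤ a₀. (Corollary 2: the optimal threshold a is a non-increasing function of the SNR ρ.) -/
open MeasureTheory intervalIntegral

noncomputable def gY (y t : ℝ) : ℝ := 1 + y - 2 * Real.sqrt y * Real.cos t

lemma gY_cont (y : ℝ) : Continuous (gY y) := by
  unfold gY; fun_prop

lemma gY_nonneg {y : ℝ} (hy0 : 0 ≤ y) (t : ℝ) : 0 ≤ gY y t := by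
  unfold gY
  nlinarith [sq_nonneg (1 - Real.sqrt y), Real.sq_sqrt hy0,
    mul_nonneg (Real.sqrt_nonneg y) (sub_nonneg.2 (Real.cos_le_one t))]

lemma gY_pos_of_lt_one {y : ℝ} (hy0 : 0 ≤ y) (hy1 : y < 1) (t : ℝ) : 0 < gY y t := by
  unfold gY
  have h1 : Real.sqrt y < 1 := by
    rw [show (1:ℝ) = Real.sqrt 1 by simp]
    exact Real.sqrt_lt_sqrt hy0 hy1
  nlinarith [Real.sq_sqrt hy0, Real.sqrt_nonneg y,
    mul_nonneg (Real.sqrt_nonneg y) (sub_nonneg.2 (Real.cos_le_one t)),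
    sq_nonneg (1 - Real.sqrt y)]

lemma gY_pos {y t : ℝ} (hy0 : 0 < y) (ht : 0 < t) (ht' : t ≤ Real.pi) : 0 < gY y t := by
  unfold gY
  have hc : Real.cos t < 1 := by
    have := Real.cos_lt_cos_of_nonneg_of_le_pi (le_refl (0:ℝ)) ht' ht
    simpa using this
  have hs : 0 < Real.sqrt y := Real.sqrt_pos.2 hy0
  nlinarith [Real.sq_sqrt hy0.le, sq_nonneg (1 - Real.sqrt y)]

lemma gY_mono {y a t : ℝ} (hy0 : 0 ≤ y) (ha : 0 ≤ a) (hat : a ≤ t) (ht : t ≤ Real.pi) :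
    gY y a ≤ gY y t := by
  unfold gY
  have hc : Real.cos t ≤ Real.cos a := Real.cos_le_cos_of_nonneg_of_le_pi ha ht hat
  have hs : 0 ≤ Real.sqrt y := Real.sqrt_nonneg y
  nlinarith

lemma fT_cont {y : ℝ} (hy0 : 0 < y) (hy1 : y ≤ 1) : Continuous (fT y) := by
  unfold fT
  split_ifs with h
  · apply Continuous.div (by fun_prop) (by fun_prop)
    intro t
    exact ne_of_gt (gY_pos_of_lt_one hy0.le h t)
  · fun_prop

lemma fT_nonneg {y : ℝ} (hy0 : 0 < y) (hy1 : y ≤ 1) (t : ℝ) : 0 ≤ fT y t := by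
  unfold fT
  split_ifs with h
  · apply div_nonneg
    · have h2 : Real.cos (2*t) ≤ 1 := Real.cos_le_one (2*t)
      have hπ := Real.pi_pos
      apply mul_nonneg (by positivity) (by linarith)
    · exact (gY_pos_of_lt_one hy0.le h t).le
  · have h1 := Real.neg_one_le_cos t
    exact div_nonneg (by linarith) Real.pi_pos.le

lemma fT_pos {y t : ℝ} (hy0 : 0 < y) (hy1 : y ≤ 1) (ht : 0 < t) (ht' : t < Real.pi) :
    0 < fT y t := by
  have hsin : 0 < Real.sin t := Real.sin_pos_of_pos_of_lt_pi ht ht'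
  unfold fT
  split_ifs with h
  · apply div_pos
    · have h2 : Real.cos (2*t) = 1 - 2 * Real.sin t ^ 2 := by
        rw [Real.cos_two_mul, Real.cos_sq' t]; ring
      have hπ := Real.pi_pos
      rw [h2]
      apply mul_pos (by positivity) (by nlinarith)
    · exact gY_pos_of_lt_one hy0.le h t
  · have hc : Real.cos Real.pi < Real.cos t :=
      Real.cos_lt_cos_of_nonneg_of_le_pi ht.le le_rfl ht'
    rw [Real.cos_pi] at hc
    have := Real.pi_pos
    have h1 : 0 < 1 + Real.cos t := by linarith
    positivity

lemma sbar_pos {y a : ℝ} (hy0 : 0 < y) (hy1 : y ≤ 1) (ha : 0 ≤ a) (ha' : a < Real.pi) :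
    0 < sbar y a := by
  apply intervalIntegral.intervalIntegral_pos_of_pos_on
    ((fT_cont hy0 hy1).intervalIntegrable a Real.pi)
    (fun x hx => fT_pos hy0 hy1 (lt_of_le_of_lt ha hx.1) hx.2) ha'

lemma sbar_anti {y a b : ℝ} (hy0 : 0 < y) (hy1 : y ≤ 1) (ha : 0 ≤ a) (hab : a ≤ b)
    (hb : b ≤ Real.pi) : sbar y b ≤ sbar y a := by
  have h1 : IntervalIntegrable (fT y) volume a b := (fT_cont hy0 hy1).intervalIntegrable a b
  have h2 : IntervalIntegrable (fT y) volume b Real.pi := (fT_cont hy0 hy1).intervalIntegrable _ _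
  have h3 := intervalIntegral.integral_add_adjacent_intervals h1 h2
  have h4 : 0 ≤ ∫ t in a..b, fT y t :=
    intervalIntegral.integral_nonneg hab (fun x _ => fT_nonneg hy0 hy1 x)
  unfold sbar
  rw [← h3]
  linarith

lemma log_sub_log_le {A B : ℝ} (hA : 0 < A) (hB : 0 < B) :
    Real.log A - Real.log B ≤ (A - B)/B := by
  rw [← Real.log_div hA.ne' hB.ne']
  have h := Real.log_le_sub_one_of_pos (div_pos hA hB)
  have : A/B - 1 = (A-B)/B := by field_simp
  linarith [h, this ▸ h]

lemma sub_div_le_log_sub_log {A B : ℝ} (hA : 0 < A) (hB : 0 < B) :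
    (A - B)/A ≤ Real.log A - Real.log B := by
  have h := log_sub_log_le hB hA
  have h2 : (B - A)/A = -((A-B)/A) := by ring
  linarith [h2 ▸ h]

lemma frac_diff_le {x ρ' ρ : ℝ} (hx : 0 ≤ x) (h0 : 0 < ρ') (hle : ρ' ≤ ρ) :
    x/(1+ρ'*x) - x/(1+ρ*x) ≤ (ρ-ρ')/(ρ'*ρ) := by
  have h1 : 0 < 1+ρ'*x := by nlinarith
  have h2 : 0 < 1+ρ*x := by nlinarith
  have hρ : 0 < ρ := lt_of_lt_of_le h0 hle
  rw [div_sub_div _ _ h1.ne' h2.ne', div_le_div_iff₀ (by positivity) (by positivity)]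
  nlinarith [mul_nonneg (sub_nonneg.2 hle) (mul_nonneg h0.le hx),
    mul_nonneg (sub_nonneg.2 hle) (mul_nonneg hρ.le hx), sub_nonneg.2 hle]

lemma frac_le_inv {x ρ : ℝ} (hx : 0 ≤ x) (h0 : 0 < ρ) : x/(1+ρ*x) ≤ 1/ρ := by
  have h1 : 0 < 1+ρ*x := by nlinarith
  rw [div_le_div_iff₀ h1 h0]
  nlinarith

lemma chord_ineq {x M : ℝ} (hx : 0 ≤ x) (hxM : x ≤ M) (hM : 0 < M) :
    Real.log (1+x) * (M/(1+M)) ≤ Real.log (1+M) * (x/(1+x)) := by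
  have hx1 : (0:ℝ) < 1 + x := by linarith
  have hM1 : (0:ℝ) < 1 + M := by linarith
  have hLmpos : 0 < Real.log (1+M) := Real.log_pos (by linarith)
  have hLnn : 0 ≤ Real.log (1+x) := Real.log_nonneg (by linarith)
  have hLle : Real.log (1+x) ≤ Real.log (1+M) := Real.log_le_log hx1 (by linarith)
  set Lm := Real.log (1+M) with hLm
  set L := Real.log (1+x) with hL
  set t := L / Lm with ht
  have ht0 : 0 ≤ t := div_nonneg hLnn hLmpos.le
  have ht1 : t ≤ 1 := (div_le_one hLmpos).2 hLle
  have hconv := convexOn_exp.2 (Set.mem_univ (0:ℝ)) (Set.mem_univ (-Lm))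
    (by linarith : (0:ℝ) ≤ 1 - t) ht0 (by ring)
  simp only [smul_eq_mul, mul_zero, zero_add, Real.exp_zero, mul_one, mul_neg] at hconv
  -- hconv : Real.exp (-(t * Lm)) ≤ 1 - t + t * Real.exp (-Lm)
  have hexp : Real.exp (-(t * Lm)) = (1+x)⁻¹ := by
    have h5 : t * Lm = L := by rw [ht]; field_simp
    rw [h5, hL, ← Real.log_inv, Real.exp_log (by positivity)]
  have hexpM : Real.exp (-Lm) = (1+M)⁻¹ := by
    rw [hLm, ← Real.log_inv, Real.exp_log (by positivity)]
  rw [hexp, hexpM] at hconv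
  have h2 : t * (1 - (1+M)⁻¹) ≤ 1 - (1+x)⁻¹ := by nlinarith [hconv]
  have e1 : 1 - (1+M)⁻¹ = M/(1+M) := by field_simp; ring
  have e2 : 1 - (1+x)⁻¹ = x/(1+x) := by field_simp; ring
  rw [e1, e2] at h2
  have h5 : t * Lm = L := by rw [ht]; field_simp
  calc L * (M/(1+M)) = Lm * (t*(M/(1+M))) := by rw [← h5]; ring
    _ ≤ Lm * (x/(1+x)) := mul_le_mul_of_nonneg_left h2 hLmpos.le

noncomputable def Jf (y k ρ a : ℝ) : ℝ :=
  ∫ t in a..Real.pi, Real.log (1 + ρ * (k * gY y t)) * fT y t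

noncomputable def Pf (y k ρ a : ℝ) : ℝ :=
  ∫ t in a..Real.pi, (k * gY y t / (1 + ρ * (k * gY y t))) * fT y t

lemma Ibar_eq (y ρ a : ℝ) : Ibar y ρ a = Jf y (y * sbar y a)⁻¹ ρ a := by
  unfold Ibar Jf gY
  simp only [div_eq_mul_inv, mul_assoc]

section est
variable {y k a ρ ρ' : ℝ}

lemma den_pos (hy0 : 0 < y) (hk : 0 ≤ k) (hρ : 0 ≤ ρ) (t : ℝ) :
    0 < 1 + ρ * (k * gY y t) := by
  have := mul_nonneg hρ (mul_nonneg hk (gY_nonneg hy0.le t))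
  linarith

lemma contJ (hy0 : 0 < y) (hy1 : y ≤ 1) (hk : 0 ≤ k) (hρ : 0 ≤ ρ) :
    Continuous fun t => Real.log (1 + ρ * (k * gY y t)) * fT y t := by
  apply Continuous.mul _ (fT_cont hy0 hy1)
  apply Continuous.log
  · exact continuous_const.add (continuous_const.mul (continuous_const.mul (gY_cont y)))
  · exact fun t => (den_pos hy0 hk hρ t).ne'

lemma contP (hy0 : 0 < y) (hy1 : y ≤ 1) (hk : 0 ≤ k) (hρ : 0 ≤ ρ) :
    Continuous fun t => (k * gY y t / (1 + ρ * (k * gY y t))) * fT y t := by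
  apply Continuous.mul _ (fT_cont hy0 hy1)
  apply Continuous.div
  · exact continuous_const.mul (gY_cont y)
  · exact continuous_const.add (continuous_const.mul (continuous_const.mul (gY_cont y)))
  · exact fun t => (den_pos hy0 hk hρ t).ne'

lemma Jf_diff_le (hy0 : 0 < y) (hy1 : y ≤ 1) (hk : 0 ≤ k) (haπ : a ≤ Real.pi)
    (h0 : 0 < ρ') (hle : ρ' ≤ ρ) :
    Jf y k ρ a - Jf y k ρ' a ≤ (ρ - ρ') * Pf y k ρ' a := by
  have hρpos : 0 < ρ := lt_of_lt_of_le h0 hle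
  have int1 : IntervalIntegrable (fun t => Real.log (1 + ρ * (k * gY y t)) * fT y t) volume a Real.pi :=
    (contJ hy0 hy1 hk hρpos.le).intervalIntegrable a Real.pi
  have int2 : IntervalIntegrable (fun t => Real.log (1 + ρ' * (k * gY y t)) * fT y t) volume a Real.pi :=
    (contJ hy0 hy1 hk h0.le).intervalIntegrable a Real.pi
  have intP : IntervalIntegrable (fun t => (k * gY y t / (1 + ρ' * (k * gY y t))) * fT y t) volume a Real.pi :=
    (contP hy0 hy1 hk h0.le).intervalIntegrable a Real.pi
  rw [Jf, Jf, Pf, ← intervalIntegral.integral_sub int1 int2,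
    ← intervalIntegral.integral_const_mul]
  apply intervalIntegral.integral_mono_on haπ (int1.sub int2)
    ((continuous_const.mul (contP hy0 hy1 hk h0.le)).intervalIntegrable a Real.pi)
  intro t _
  have hx : 0 ≤ k * gY y t := mul_nonneg hk (gY_nonneg hy0.le t)
  have hB : 0 < 1 + ρ' * (k * gY y t) := den_pos hy0 hk h0.le t
  have hA : 0 < 1 + ρ * (k * gY y t) := den_pos hy0 hk hρpos.le t
  have h1 := log_sub_log_le hA hB
  have hAB : (1 + ρ * (k * gY y t)) - (1 + ρ' * (k * gY y t)) = (ρ - ρ') * (k * gY y t) := by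
    ring
  rw [hAB] at h1
  have hf := fT_nonneg hy0 hy1 t
  have h2 := mul_le_mul_of_nonneg_right h1 hf
  calc Real.log (1 + ρ * (k * gY y t)) * fT y t - Real.log (1 + ρ' * (k * gY y t)) * fT y t
      = (Real.log (1 + ρ * (k * gY y t)) - Real.log (1 + ρ' * (k * gY y t))) * fT y t := by
        ring
    _ ≤ ((ρ - ρ') * (k * gY y t) / (1 + ρ' * (k * gY y t))) * fT y t := h2
    _ = (ρ - ρ') * (k * gY y t / (1 + ρ' * (k * gY y t)) * fT y t) := by ring

lemma Jf_diff_ge (hy0 : 0 < y) (hy1 : y ≤ 1) (hk : 0 ≤ k) (haπ : a ≤ Real.pi)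
    (h0 : 0 < ρ') (hle : ρ' ≤ ρ) :
    (ρ - ρ') * Pf y k ρ a ≤ Jf y k ρ a - Jf y k ρ' a := by
  have hρpos : 0 < ρ := lt_of_lt_of_le h0 hle
  have int1 : IntervalIntegrable (fun t => Real.log (1 + ρ * (k * gY y t)) * fT y t) volume a Real.pi :=
    (contJ hy0 hy1 hk hρpos.le).intervalIntegrable a Real.pi
  have int2 : IntervalIntegrable (fun t => Real.log (1 + ρ' * (k * gY y t)) * fT y t) volume a Real.pi :=
    (contJ hy0 hy1 hk h0.le).intervalIntegrable a Real.pi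
  rw [Jf, Jf, Pf, ← intervalIntegral.integral_sub int1 int2,
    ← intervalIntegral.integral_const_mul]
  apply intervalIntegral.integral_mono_on haπ
    ((continuous_const.mul (contP hy0 hy1 hk hρpos.le)).intervalIntegrable a Real.pi)
    (int1.sub int2)
  intro t _
  have hx : 0 ≤ k * gY y t := mul_nonneg hk (gY_nonneg hy0.le t)
  have hB : 0 < 1 + ρ' * (k * gY y t) := den_pos hy0 hk h0.le t
  have hA : 0 < 1 + ρ * (k * gY y t) := den_pos hy0 hk hρpos.le t
  have h1 := sub_div_le_log_sub_log hA hB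
  have hAB : (1 + ρ * (k * gY y t)) - (1 + ρ' * (k * gY y t)) = (ρ - ρ') * (k * gY y t) := by
    ring
  rw [hAB] at h1
  have hf := fT_nonneg hy0 hy1 t
  have h2 := mul_le_mul_of_nonneg_right h1 hf
  calc (ρ - ρ') * (k * gY y t / (1 + ρ * (k * gY y t)) * fT y t)
      = ((ρ - ρ') * (k * gY y t) / (1 + ρ * (k * gY y t))) * fT y t := by ring
    _ ≤ (Real.log (1 + ρ * (k * gY y t)) - Real.log (1 + ρ' * (k * gY y t))) * fT y t := h2
    _ = Real.log (1 + ρ * (k * gY y t)) * fT y t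
        - Real.log (1 + ρ' * (k * gY y t)) * fT y t := by ring

lemma Pf_diff_le (hy0 : 0 < y) (hy1 : y ≤ 1) (hk : 0 ≤ k) (haπ : a ≤ Real.pi)
    (h0 : 0 < ρ') (hle : ρ' ≤ ρ) :
    Pf y k ρ' a ≤ Pf y k ρ a + ((ρ - ρ')/(ρ' * ρ)) * sbar y a := by
  have hρpos : 0 < ρ := lt_of_lt_of_le h0 hle
  have intP : IntervalIntegrable (fun t => (k * gY y t / (1 + ρ * (k * gY y t))) * fT y t) volume a Real.pi :=
    (contP hy0 hy1 hk hρpos.le).intervalIntegrable a Real.pi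
  have intf : IntervalIntegrable (fun t => ((ρ - ρ')/(ρ' * ρ)) * fT y t) volume a Real.pi :=
    (continuous_const.mul (fT_cont hy0 hy1)).intervalIntegrable a Real.pi
  have e : Pf y k ρ a + ((ρ - ρ')/(ρ' * ρ)) * sbar y a
      = ∫ t in a..Real.pi,
        ((k * gY y t / (1 + ρ * (k * gY y t))) * fT y t + ((ρ - ρ')/(ρ' * ρ)) * fT y t) := by
    rw [Pf, sbar, ← intervalIntegral.integral_const_mul,
      intervalIntegral.integral_add intP intf]
  rw [Pf, e]
  apply intervalIntegral.integral_mono_on haπ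
    ((contP hy0 hy1 hk h0.le).intervalIntegrable a Real.pi)
    (intP.add intf)
  intro t _
  have hx : 0 ≤ k * gY y t := mul_nonneg hk (gY_nonneg hy0.le t)
  have hf := fT_nonneg hy0 hy1 t
  have h1 := frac_diff_le hx h0 hle
  nlinarith [mul_le_mul_of_nonneg_right h1 hf]

lemma Pf_le_bound (hy0 : 0 < y) (hy1 : y ≤ 1) (hk : 0 ≤ k) (haπ : a ≤ Real.pi)
    (h0 : 0 < ρ) : Pf y k ρ a ≤ (1/ρ) * sbar y a := by
  rw [Pf, sbar, ← intervalIntegral.integral_const_mul]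
  apply intervalIntegral.integral_mono_on haπ
    ((contP hy0 hy1 hk h0.le).intervalIntegrable a Real.pi)
    ((continuous_const.mul (fT_cont hy0 hy1)).intervalIntegrable a Real.pi)
  intro t _
  have hx : 0 ≤ k * gY y t := mul_nonneg hk (gY_nonneg hy0.le t)
  have hf := fT_nonneg hy0 hy1 t
  exact mul_le_mul_of_nonneg_right (frac_le_inv hx h0) hf

lemma Pf_nonneg (hy0 : 0 < y) (hy1 : y ≤ 1) (hk : 0 ≤ k) (haπ : a ≤ Real.pi)
    (h0 : 0 ≤ ρ) : 0 ≤ Pf y k ρ a := by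
  apply intervalIntegral.integral_nonneg haπ
  intro t _
  have hx : 0 ≤ k * gY y t := mul_nonneg hk (gY_nonneg hy0.le t)
  have hf := fT_nonneg hy0 hy1 t
  exact mul_nonneg (div_nonneg hx (den_pos hy0 hk h0 t).le) hf

end est

lemma claim1_scalar {x₀ x₁ E : ℝ} (h0 : 0 ≤ x₀) (h01 : x₀ ≤ x₁) (hE : (1+x₀)⁻¹ ≤ E)
    (hE0 : 0 ≤ E) :
    x₁/(1+x₁) - x₀/(1+x₀) ≤ E * (Real.log (1+x₁) - Real.log (1+x₀)) := by
  have h1 : (0:ℝ) < 1+x₀ := by linarith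
  have h2 : (0:ℝ) < 1+x₁ := by linarith
  have hlog := sub_div_le_log_sub_log h2 h1
  have e : x₁/(1+x₁) - x₀/(1+x₀) = ((1+x₁-(1+x₀))/(1+x₁)) * (1+x₀)⁻¹ := by
    field_simp
    ring
  have hnn : 0 ≤ (1+x₁-(1+x₀))/(1+x₁) := div_nonneg (by linarith) (by linarith)
  calc x₁/(1+x₁) - x₀/(1+x₀) = ((1+x₁-(1+x₀))/(1+x₁)) * (1+x₀)⁻¹ := e
    _ ≤ ((1+x₁-(1+x₀))/(1+x₁)) * E := mul_le_mul_of_nonneg_left hE hnn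
    _ = E * ((1+x₁-(1+x₀))/(1+x₁)) := by ring
    _ ≤ E * (Real.log (1+x₁) - Real.log (1+x₀)) := mul_le_mul_of_nonneg_left hlog hE0

lemma contW {y k r : ℝ} (hy0 : 0 < y) (hy1 : y ≤ 1) (hk : 0 ≤ k) (hr : 0 ≤ r) :
    Continuous fun t => (r * (k * gY y t))/(1 + r * (k * gY y t)) * fT y t := by
  apply Continuous.mul _ (fT_cont hy0 hy1)
  apply Continuous.div
  · exact continuous_const.mul (continuous_const.mul (gY_cont y))
  · exact continuous_const.add (continuous_const.mul (continuous_const.mul (gY_cont y)))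
  · exact fun t => (den_pos hy0 hk hr t).ne'

lemma main_ineq {y a₀ a₁ k₀ k₁ r : ℝ} (hy0 : 0 < y) (hy1 : y ≤ 1)
    (ha₀ : 0 ≤ a₀) (h01 : a₀ < a₁) (ha₁π : a₁ < Real.pi)
    (hk₀ : 0 < k₀) (hk : k₀ ≤ k₁) (hr : 0 < r)
    (hσ : Jf y k₁ r a₁ = Jf y k₀ r a₀) :
    Pf y k₁ r a₁ < Pf y k₀ r a₀ := by
  have hk₁ : 0 < k₁ := lt_of_lt_of_le hk₀ hk
  have ha₁ : 0 < a₁ := lt_of_le_of_lt ha₀ h01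
  have hπ := Real.pi_pos
  have ha₁π' : a₁ ≤ Real.pi := ha₁π.le
  have ha₀π : a₀ ≤ Real.pi := le_trans h01.le ha₁π'
  have hGa₁ : 0 < gY y a₁ := gY_pos hy0 ha₁ ha₁π'
  obtain ⟨M, hM⟩ : ∃ x : ℝ, x = r * (k₀ * gY y a₁) := ⟨_, rfl⟩
  have hMpos : 0 < M := by rw [hM]; exact mul_pos hr (mul_pos hk₀ hGa₁)
  obtain ⟨E, hE⟩ : ∃ x : ℝ, x = (1+M)⁻¹ := ⟨_, rfl⟩
  have hEpos : 0 < E := by rw [hE]; exact inv_pos.2 (by linarith)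
  obtain ⟨ℓ, hℓ⟩ : ∃ x : ℝ, x = Real.log (1+M) := ⟨_, rfl⟩
  have hℓpos : 0 < ℓ := by rw [hℓ]; exact Real.log_pos (by linarith)
  -- integrability of everything
  have intL0a : IntervalIntegrable (fun t => Real.log (1 + r * (k₀ * gY y t)) * fT y t)
      volume a₀ a₁ := (contJ hy0 hy1 hk₀.le hr.le).intervalIntegrable _ _
  have intL0b : IntervalIntegrable (fun t => Real.log (1 + r * (k₀ * gY y t)) * fT y t)
      volume a₁ Real.pi := (contJ hy0 hy1 hk₀.le hr.le).intervalIntegrable _ _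
  have intL1b : IntervalIntegrable (fun t => Real.log (1 + r * (k₁ * gY y t)) * fT y t)
      volume a₁ Real.pi := (contJ hy0 hy1 hk₁.le hr.le).intervalIntegrable _ _
  have intW0a : IntervalIntegrable
      (fun t => (r * (k₀ * gY y t))/(1 + r * (k₀ * gY y t)) * fT y t) volume a₀ a₁ :=
    (contW hy0 hy1 hk₀.le hr.le).intervalIntegrable _ _
  have intW0b : IntervalIntegrable
      (fun t => (r * (k₀ * gY y t))/(1 + r * (k₀ * gY y t)) * fT y t) volume a₁ Real.pi :=
    (contW hy0 hy1 hk₀.le hr.le).intervalIntegrable _ _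
  have intW1b : IntervalIntegrable
      (fun t => (r * (k₁ * gY y t))/(1 + r * (k₁ * gY y t)) * fT y t) volume a₁ Real.pi :=
    (contW hy0 hy1 hk₁.le hr.le).intervalIntegrable _ _
  -- C and its positivity
  obtain ⟨C, hC⟩ : ∃ x : ℝ, x = ∫ t in a₀..a₁, Real.log (1 + r * (k₀ * gY y t)) * fT y t :=
    ⟨_, rfl⟩
  have hCpos : 0 < C := by
    rw [hC]
    apply intervalIntegral.intervalIntegral_pos_of_pos_on intL0a _ h01
    intro t ht
    have ht0 : 0 < t := lt_of_le_of_lt ha₀ ht.1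
    have htπ : t < Real.pi := lt_trans ht.2 ha₁π
    have hG : 0 < gY y t := gY_pos hy0 ht0 htπ.le
    have hf : 0 < fT y t := fT_pos hy0 hy1 ht0 htπ
    apply mul_pos _ hf
    apply Real.log_pos
    nlinarith
  -- the constraint
  have hsplit : C + (∫ t in a₁..Real.pi, Real.log (1 + r * (k₀ * gY y t)) * fT y t)
      = Jf y k₀ r a₀ := by
    rw [hC, Jf]
    exact intervalIntegral.integral_add_adjacent_intervals intL0a intL0b
  have hcon : (∫ t in a₁..Real.pi, (Real.log (1 + r * (k₁ * gY y t)) * fT y t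
      - Real.log (1 + r * (k₀ * gY y t)) * fT y t)) = C := by
    rw [intervalIntegral.integral_sub intL1b intL0b]
    have h1 : Jf y k₁ r a₁ = ∫ t in a₁..Real.pi, Real.log (1 + r * (k₁ * gY y t)) * fT y t := by
      rw [Jf]
    rw [← h1, hσ, ← hsplit]
    ring
  -- claim 1
  have claim1 : (∫ t in a₁..Real.pi,
      ((r * (k₁ * gY y t))/(1 + r * (k₁ * gY y t)) * fT y t
        - (r * (k₀ * gY y t))/(1 + r * (k₀ * gY y t)) * fT y t)) ≤ E * C := by
    have hmono : (∫ t in a₁..Real.pi,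
        ((r * (k₁ * gY y t))/(1 + r * (k₁ * gY y t)) * fT y t
          - (r * (k₀ * gY y t))/(1 + r * (k₀ * gY y t)) * fT y t))
        ≤ ∫ t in a₁..Real.pi, E * (Real.log (1 + r * (k₁ * gY y t)) * fT y t
          - Real.log (1 + r * (k₀ * gY y t)) * fT y t) := by
      apply intervalIntegral.integral_mono_on ha₁π' (intW1b.sub intW0b)
        ((intL1b.sub intL0b).const_mul E)
      intro t ht
      have hG : 0 ≤ gY y t := gY_nonneg hy0.le t
      have hx0 : 0 ≤ r * (k₀ * gY y t) := by positivity
      have hx01 : r * (k₀ * gY y t) ≤ r * (k₁ * gY y t) := by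
        apply mul_le_mul_of_nonneg_left _ hr.le
        exact mul_le_mul_of_nonneg_right hk hG
      have hxM : M ≤ r * (k₀ * gY y t) := by
        rw [hM]
        have := gY_mono hy0.le ha₁.le ht.1 ht.2
        nlinarith
      have hEt : (1 + r * (k₀ * gY y t))⁻¹ ≤ E := by
        rw [hE]
        exact inv_anti₀ (by linarith) (by linarith)
      have hf := fT_nonneg hy0 hy1 t
      have hs := claim1_scalar hx0 hx01 hEt hEpos.le
      nlinarith [mul_le_mul_of_nonneg_right hs hf]
    calc _ ≤ _ := hmono
      _ = E * ∫ t in a₁..Real.pi, (Real.log (1 + r * (k₁ * gY y t)) * fT y t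
          - Real.log (1 + r * (k₀ * gY y t)) * fT y t) :=
        intervalIntegral.integral_const_mul E _
      _ = E * C := by rw [hcon]
  -- claim 2 : (M/(1+M)) * C ≤ ℓ * W
  obtain ⟨W, hW⟩ : ∃ x : ℝ,
      x = ∫ t in a₀..a₁, (r * (k₀ * gY y t))/(1 + r * (k₀ * gY y t)) * fT y t := ⟨_, rfl⟩
  have claim2 : (M/(1+M)) * C ≤ ℓ * W := by
    rw [hC, hW, ← intervalIntegral.integral_const_mul, ← intervalIntegral.integral_const_mul]
    apply intervalIntegral.integral_mono_on h01.le (intL0a.const_mul _) (intW0a.const_mul _)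
    intro t ht
    have hG : 0 ≤ gY y t := gY_nonneg hy0.le t
    have hx0 : 0 ≤ r * (k₀ * gY y t) := by positivity
    have hxM : r * (k₀ * gY y t) ≤ M := by
      rw [hM]
      have := gY_mono hy0.le (le_trans ha₀ ht.1) ht.2 ha₁π'
      nlinarith
    have hf := fT_nonneg hy0 hy1 t
    have hch := chord_ineq hx0 hxM hMpos
    have := mul_le_mul_of_nonneg_right hch hf
    calc M/(1+M) * (Real.log (1 + r * (k₀ * gY y t)) * fT y t)
        = (Real.log (1 + (r * (k₀ * gY y t))) * ((M)/(1+M))) * fT y t := by ring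
      _ ≤ (Real.log (1+M) * ((r * (k₀ * gY y t))/(1+(r * (k₀ * gY y t))))) * fT y t := this
      _ = ℓ * ((r * (k₀ * gY y t))/(1 + r * (k₀ * gY y t)) * fT y t) := by rw [hℓ]; ring
  -- identities r * Pf = ...
  have idPf1 : r * Pf y k₁ r a₁
      = ∫ t in a₁..Real.pi, (r * (k₁ * gY y t))/(1 + r * (k₁ * gY y t)) * fT y t := by
    rw [Pf, ← intervalIntegral.integral_const_mul]
    apply intervalIntegral.integral_congr
    intro t _
    have hd := (den_pos hy0 hk₁.le hr.le t).ne'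
    field_simp
  have idPf0 : r * Pf y k₀ r a₀
      = W + ∫ t in a₁..Real.pi, (r * (k₀ * gY y t))/(1 + r * (k₀ * gY y t)) * fT y t := by
    rw [Pf, ← intervalIntegral.integral_const_mul, hW,
      intervalIntegral.integral_add_adjacent_intervals intW0a intW0b]
    apply intervalIntegral.integral_congr
    intro t _
    have hd := (den_pos hy0 hk₀.le hr.le t).ne'
    field_simp
  -- assemble
  have hdiff : r * Pf y k₁ r a₁ - r * Pf y k₀ r a₀ ≤ E * C - W := by
    have e1 : r * Pf y k₁ r a₁ - r * Pf y k₀ r a₀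
        = (∫ t in a₁..Real.pi,
            ((r * (k₁ * gY y t))/(1 + r * (k₁ * gY y t)) * fT y t
              - (r * (k₀ * gY y t))/(1 + r * (k₀ * gY y t)) * fT y t)) - W := by
      rw [idPf1, idPf0, intervalIntegral.integral_sub intW1b intW0b]
      ring
    rw [e1]
    linarith [claim1]
  have hWge : (M/(1+M)) * C / ℓ ≤ W := by
    rw [div_le_iff₀ hℓpos]
    linarith [claim2]
  have hfin : E * ℓ < M/(1+M) := by
    have h1M : (0:ℝ) < 1+M := by linarith
    have hlt : ℓ < M := by
      have h2 := Real.log_lt_sub_one_of_pos h1M (ne_of_gt (by linarith : (1:ℝ) < 1+M))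
      rw [hℓ]
      linarith
    have h3 : ℓ * (1+M)⁻¹ < M * (1+M)⁻¹ := mul_lt_mul_of_pos_right hlt (inv_pos.2 h1M)
    rw [hE, div_eq_mul_inv]
    calc (1+M)⁻¹ * ℓ = ℓ * (1+M)⁻¹ := by ring
      _ < M * (1+M)⁻¹ := h3
  have hEC : E * C < (M/(1+M)) * C / ℓ := by
    rw [lt_div_iff₀ hℓpos]
    have h4 : (E * ℓ) * C < (M/(1+M)) * C := mul_lt_mul_of_pos_right hfin hCpos
    calc E * C * ℓ = (E * ℓ) * C := by ring
      _ < (M/(1+M)) * C := h4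
  have h5 : r * Pf y k₁ r a₁ < r * Pf y k₀ r a₀ := by
    linarith only [hdiff, hWge, hEC]
  exact lt_of_mul_lt_mul_left h5 hr.le

lemma cross (σ : ℝ → ℝ) (ρ₀ ρ₁ K : ℝ) (hK : 0 ≤ K) (h01 : ρ₀ < ρ₁)
    (hLip : ∀ x, ρ₀ ≤ x → ∀ z, x ≤ z → z ≤ ρ₁ → |σ z - σ x| ≤ K * (z - x))
    (hkey : ∀ r, ρ₀ ≤ r → r ≤ ρ₁ → σ r = 0 →
      ∃ δ > 0, (∀ ρ, r - δ ≤ ρ → ρ < r → ρ₀ ≤ ρ → 0 < σ ρ) ∧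
               (∀ ρ, r < ρ → ρ ≤ r + δ → ρ ≤ ρ₁ → σ ρ < 0))
    (h0 : σ ρ₀ ≤ 0) : σ ρ₁ < 0 := by
  by_contra hcon
  push_neg at hcon
  obtain ⟨b, hb0, hb1, hbneg⟩ : ∃ b, ρ₀ ≤ b ∧ b < ρ₁ ∧ σ b < 0 := by
    rcases lt_or_eq_of_le h0 with h | h
    · exact ⟨ρ₀, le_refl _, h01, h⟩
    · obtain ⟨δ, hδ, _, hright⟩ := hkey ρ₀ le_rfl h01.le h
      refine ⟨min (ρ₀ + δ) ((ρ₀ + ρ₁)/2), le_min (by linarith) (by linarith), ?_, ?_⟩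
      · exact lt_of_le_of_lt (min_le_right _ _) (by linarith)
      · apply hright
        · exact lt_min (by linarith) (by linarith)
        · exact min_le_left _ _
        · exact le_trans (min_le_right _ _) (by linarith)
  have hT : ∀ x ∈ {x : ℝ | x ∈ Set.Icc b ρ₁ ∧ 0 ≤ σ x}, b ≤ x := fun x hx => hx.1.1
  set T := {x : ℝ | x ∈ Set.Icc b ρ₁ ∧ 0 ≤ σ x} with hTdef
  have hne : ρ₁ ∈ T := ⟨⟨hb1.le, le_refl _⟩, hcon⟩
  have hbdd : BddBelow T := ⟨b, fun x hx => hx.1.1⟩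
  obtain ⟨r, hr⟩ : ∃ r : ℝ, r = sInf T := ⟨_, rfl⟩
  have hrb : b ≤ r := by rw [hr]; exact le_csInf ⟨ρ₁, hne⟩ (fun x hx => hx.1.1)
  have hrρ₁ : r ≤ ρ₁ := by rw [hr]; exact csInf_le hbdd hne
  have hρ₀r : ρ₀ ≤ r := le_trans hb0 hrb
  have hneg : ∀ ρ, b ≤ ρ → ρ < r → σ ρ < 0 := by
    intro ρ h1 h2
    by_contra hns
    push_neg at hns
    have hmem : ρ ∈ T := ⟨⟨h1, le_trans h2.le hrρ₁⟩, hns⟩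
    have hge := csInf_le hbdd hmem
    rw [← hr] at hge
    linarith
  have hK1 : (0:ℝ) < K + 1 := by linarith
  have hσr_nonneg : 0 ≤ σ r := by
    by_contra hns
    push_neg at hns
    have hεpos : 0 < (-(σ r))/(K+1) := by
      apply div_pos (by linarith) hK1
    have hlt : sInf T < r + (-(σ r))/(K+1) := by rw [← hr]; linarith
    obtain ⟨x, hxT, hxlt⟩ := (csInf_lt_iff hbdd ⟨ρ₁, hne⟩).mp hlt
    have hxr : r ≤ x := by rw [hr]; exact csInf_le hbdd hxT
    have hLx := hLip r hρ₀r x hxr hxT.1.2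
    have h2 : σ x - σ r ≤ K * (x - r) := le_trans (le_abs_self _) hLx
    have h3 : x - r ≤ (-(σ r))/(K+1) := by linarith
    have h4 : K * (x - r) ≤ K * ((-(σ r))/(K+1)) := mul_le_mul_of_nonneg_left h3 hK
    have h5 : K * ((-(σ r))/(K+1)) < -(σ r) := by
      have e1 : K * ((-(σ r))/(K+1)) = (K/(K+1)) * (-(σ r)) := by ring
      have e2 : K/(K+1) < 1 := (div_lt_one hK1).2 (by linarith)
      rw [e1]
      nlinarith
    have h6 : 0 ≤ σ x := hxT.2
    linarith
  have hbr : b < r := by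
    rcases lt_or_eq_of_le hrb with h | h
    · exact h
    · exfalso
      rw [← h] at hσr_nonneg
      linarith
  have hσr_nonpos : σ r ≤ 0 := by
    by_contra hns
    push_neg at hns
    have hεpos : 0 < (σ r)/(K+1) := div_pos hns hK1
    have hρb : b ≤ max b (r - (σ r)/(K+1)) := le_max_left _ _
    have hρr : max b (r - (σ r)/(K+1)) < r := max_lt hbr (by linarith)
    have hneg' := hneg _ hρb hρr
    have hLx := hLip (max b (r - (σ r)/(K+1))) (le_trans hb0 hρb) r hρr.le hrρ₁
    have h2 : σ r - σ (max b (r - (σ r)/(K+1))) ≤ K * (r - max b (r - (σ r)/(K+1))) :=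
      le_trans (le_abs_self _) hLx
    have h3 : r - max b (r - (σ r)/(K+1)) ≤ (σ r)/(K+1) := by
      have := le_max_right b (r - (σ r)/(K+1))
      linarith
    have h4 : K * (r - max b (r - (σ r)/(K+1))) ≤ K * ((σ r)/(K+1)) :=
      mul_le_mul_of_nonneg_left h3 hK
    have h5 : K * ((σ r)/(K+1)) < σ r := by
      have e1 : K * ((σ r)/(K+1)) = (K/(K+1)) * (σ r) := by ring
      have e2 : K/(K+1) < 1 := (div_lt_one hK1).2 (by linarith)
      rw [e1]
      nlinarith
    linarith
  have hσr : σ r = 0 := le_antisymm hσr_nonpos hσr_nonneg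
  obtain ⟨δ, hδ, hleft, _⟩ := hkey r hρ₀r hrρ₁ hσr
  have hρb : b ≤ max b (r - δ/2) := le_max_left _ _
  have hρr : max b (r - δ/2) < r := max_lt hbr (by linarith)
  have h1 := hneg _ hρb hρr
  have h2 : r - δ ≤ max b (r - δ/2) :=
    le_trans (by linarith) (le_max_right b (r - δ/2))
  have h3 := hleft (max b (r - δ/2)) h2 hρr (le_trans hb0 hρb)
  linarith

/-- Corollary 2: the optimal threshold `a` maximizing the asymptotic information
rate `Ī(·; ρ)` over `[0,π)` is a non-increasing function of the SNR `ρ`. -/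
theorem optimal_threshold_nonincreasing_in_snr
    (y ρ₀ ρ₁ : ℝ) (hy : y ∈ Set.Ioc (0 : ℝ) 1) (hρ₀ : 0 < ρ₀) (hρ : ρ₀ < ρ₁)
    (a₀ a₁ : ℝ) (ha₀ : a₀ ∈ Set.Ico 0 Real.pi) (ha₁ : a₁ ∈ Set.Ico 0 Real.pi)
    (hmax₀ : ∀ a ∈ Set.Ico 0 Real.pi, Ibar y ρ₀ a ≤ Ibar y ρ₀ a₀)
    (hmax₁ : ∀ a ∈ Set.Ico 0 Real.pi, Ibar y ρ₁ a ≤ Ibar y ρ₁ a₁) :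
    a₁ ≤ a₀ := by
  obtain ⟨hy0, hy1⟩ := hy
  obtain ⟨ha₀0, ha₀π⟩ := ha₀
  obtain ⟨ha₁0, ha₁π⟩ := ha₁
  by_contra hcon
  push_neg at hcon
  have hs₀ : 0 < sbar y a₀ := sbar_pos hy0 hy1 ha₀0 ha₀π
  have hs₁ : 0 < sbar y a₁ := sbar_pos hy0 hy1 ha₁0 ha₁π
  have hs₁₀ : sbar y a₁ ≤ sbar y a₀ := sbar_anti hy0 hy1 ha₀0 hcon.le ha₁π.le
  obtain ⟨s₀, hs₀def⟩ : ∃ x : ℝ, x = sbar y a₀ := ⟨_, rfl⟩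
  obtain ⟨s₁, hs₁def⟩ : ∃ x : ℝ, x = sbar y a₁ := ⟨_, rfl⟩
  obtain ⟨k₀, hk₀def⟩ : ∃ x : ℝ, x = (y * sbar y a₀)⁻¹ := ⟨_, rfl⟩
  obtain ⟨k₁, hk₁def⟩ : ∃ x : ℝ, x = (y * sbar y a₁)⁻¹ := ⟨_, rfl⟩
  have hk₀pos : 0 < k₀ := by rw [hk₀def]; exact inv_pos.2 (mul_pos hy0 hs₀)
  have hk₁pos : 0 < k₁ := by rw [hk₁def]; exact inv_pos.2 (mul_pos hy0 hs₁)
  have hk01 : k₀ ≤ k₁ := by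
    rw [hk₀def, hk₁def]
    exact inv_anti₀ (mul_pos hy0 hs₁) (mul_le_mul_of_nonneg_left hs₁₀ hy0.le)
  have hσ0 : Jf y k₁ ρ₀ a₁ - Jf y k₀ ρ₀ a₀ ≤ 0 := by
    have h1 : Ibar y ρ₀ a₁ ≤ Ibar y ρ₀ a₀ := hmax₀ a₁ ⟨ha₁0, ha₁π⟩
    rw [Ibar_eq, Ibar_eq, ← hk₀def, ← hk₁def] at h1
    linarith
  have hσ1 : 0 ≤ Jf y k₁ ρ₁ a₁ - Jf y k₀ ρ₁ a₀ := by
    have h1 : Ibar y ρ₁ a₀ ≤ Ibar y ρ₁ a₁ := hmax₁ a₀ ⟨ha₀0, ha₀π⟩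
    rw [Ibar_eq, Ibar_eq, ← hk₀def, ← hk₁def] at h1
    linarith
  obtain ⟨K, hKdef⟩ : ∃ x : ℝ, x = (sbar y a₀ + sbar y a₁)/ρ₀ := ⟨_, rfl⟩
  have hK : 0 ≤ K := by
    rw [hKdef]
    positivity
  -- two-sided bound on increments of Jf, for each of the two (k, a) pairs
  have bnd : ∀ k a, 0 < k → a ≤ Real.pi → 0 < sbar y a → ∀ x z, ρ₀ ≤ x → x ≤ z →
      0 ≤ Jf y k z a - Jf y k x a ∧
      Jf y k z a - Jf y k x a ≤ (z - x) * (sbar y a / ρ₀) := by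
    intro k a hk haπ hsa x z hx hxz
    have hxpos : 0 < x := lt_of_lt_of_le hρ₀ hx
    have hzx : 0 ≤ z - x := by linarith
    constructor
    · have h1 := Jf_diff_ge hy0 hy1 hk.le haπ hxpos hxz
      have h2 : 0 ≤ (z - x) * Pf y k z a :=
        mul_nonneg hzx (Pf_nonneg hy0 hy1 hk.le haπ (by linarith))
      linarith
    · have h1 := Jf_diff_le hy0 hy1 hk.le haπ hxpos hxz
      have h2 : Pf y k x a ≤ (1/x) * sbar y a := Pf_le_bound hy0 hy1 hk.le haπ hxpos
      have h3 : (1/x) * sbar y a ≤ sbar y a / ρ₀ := by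
        have e : (1/x) * sbar y a = sbar y a / x := by ring
        rw [e]
        exact div_le_div_of_nonneg_left hsa.le hρ₀ hx
      have h4 : (z - x) * Pf y k x a ≤ (z - x) * (sbar y a / ρ₀) :=
        mul_le_mul_of_nonneg_left (le_trans h2 h3) hzx
      linarith
  have hLip : ∀ x, ρ₀ ≤ x → ∀ z, x ≤ z → z ≤ ρ₁ →
      |(Jf y k₁ z a₁ - Jf y k₀ z a₀) - (Jf y k₁ x a₁ - Jf y k₀ x a₀)| ≤ K * (z - x) := by
    intro x hx z hxz _
    obtain ⟨b1, b2⟩ := bnd k₁ a₁ hk₁pos ha₁π.le hs₁ x z hx hxz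
    obtain ⟨b3, b4⟩ := bnd k₀ a₀ hk₀pos ha₀π.le hs₀ x z hx hxz
    have e : K * (z - x) = (z - x) * (sbar y a₀ / ρ₀) + (z - x) * (sbar y a₁ / ρ₀) := by
      rw [hKdef]
      ring
    rw [abs_le]
    constructor <;> [linarith [e ▸ (le_refl (K * (z-x)))]; skip]
    · linarith [e]
  have hkey : ∀ r, ρ₀ ≤ r → r ≤ ρ₁ → (Jf y k₁ r a₁ - Jf y k₀ r a₀) = 0 →
      ∃ δ > 0, (∀ ρ, r - δ ≤ ρ → ρ < r → ρ₀ ≤ ρ → 0 < Jf y k₁ ρ a₁ - Jf y k₀ ρ a₀) ∧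
               (∀ ρ, r < ρ → ρ ≤ r + δ → ρ ≤ ρ₁ → Jf y k₁ ρ a₁ - Jf y k₀ ρ a₀ < 0) := by
    intro r hrl hru hzero
    have hr0 : 0 < r := lt_of_lt_of_le hρ₀ hrl
    have hr2 : (0:ℝ) < r^2 := by positivity
    have hJeq : Jf y k₁ r a₁ = Jf y k₀ r a₀ := by linarith
    have hPQ : Pf y k₁ r a₁ < Pf y k₀ r a₀ :=
      main_ineq hy0 hy1 ha₀0 hcon ha₁π hk₀pos hk01 hr0 hJeq
    obtain ⟨P, hPdef⟩ : ∃ x : ℝ, x = Pf y k₁ r a₁ := ⟨_, rfl⟩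
    obtain ⟨Q, hQdef⟩ : ∃ x : ℝ, x = Pf y k₀ r a₀ := ⟨_, rfl⟩
    have hPQ' : P < Q := by rw [hPdef, hQdef]; exact hPQ
    obtain ⟨D, hDdef⟩ : ∃ x : ℝ, x = 2 * sbar y a₀ + 2 * sbar y a₁ + 1 := ⟨_, rfl⟩
    have hD : 0 < D := by rw [hDdef]; linarith
    obtain ⟨δ, hδdef⟩ : ∃ x : ℝ, x = min (r/2) ((Q - P) * r^2 / D) := ⟨_, rfl⟩
    have hδpos : 0 < δ := by
      rw [hδdef]
      apply lt_min (by linarith)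
      apply div_pos (mul_pos (by linarith) hr2) hD
    have hδ1 : δ ≤ r/2 := by rw [hδdef]; exact min_le_left _ _
    have hδ2 : δ * D ≤ (Q - P) * r^2 := by
      have := min_le_right (r/2) ((Q - P) * r^2 / D)
      rw [← hδdef] at this
      exact (le_div_iff₀ hD).mp this
    refine ⟨δ, hδpos, ?_, ?_⟩
    · -- left side: σ ρ > 0 for ρ ∈ [r-δ, r)
      intro ρ hρ1 hρ2 hρ3
      have hρpos : 0 < ρ := lt_of_lt_of_le hρ₀ hρ3
      have hrρ : 0 < r - ρ := by linarith
      have u1 : Jf y k₁ r a₁ - Jf y k₁ ρ a₁ ≤ (r - ρ) * Pf y k₁ ρ a₁ :=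
        Jf_diff_le hy0 hy1 hk₁pos.le ha₁π.le hρpos hρ2.le
      have u2 : (r - ρ) * Pf y k₀ r a₀ ≤ Jf y k₀ r a₀ - Jf y k₀ ρ a₀ :=
        Jf_diff_ge hy0 hy1 hk₀pos.le ha₀π.le hρpos hρ2.le
      have u3 : Pf y k₁ ρ a₁ ≤ Pf y k₁ r a₁ + ((r - ρ)/(ρ * r)) * sbar y a₁ :=
        Pf_diff_le hy0 hy1 hk₁pos.le ha₁π.le hρpos hρ2.le
      have u4 : ((r - ρ)/(ρ * r)) * sbar y a₁ ≤ (2 * δ / r^2) * sbar y a₁ := by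
        apply mul_le_mul_of_nonneg_right _ hs₁.le
        rw [div_le_div_iff₀ (mul_pos hρpos hr0) hr2]
        have A1 : (r - ρ) * r^2 ≤ δ * r^2 := mul_le_mul_of_nonneg_right (by linarith) hr2.le
        have A2 : δ * r^2 ≤ 2*δ*(ρ*r) := by
          calc δ * r^2 = (δ*r)*r := by ring
            _ ≤ (δ*r)*(2*ρ) := mul_le_mul_of_nonneg_left (by linarith)
                (mul_nonneg hδpos.le hr0.le)
            _ = 2*δ*(ρ*r) := by ring
        linarith only [A1, A2]
      have u5 : (2 * δ / r^2) * sbar y a₁ < Q - P := by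
        have e : (2 * δ / r^2) * sbar y a₁ = (2 * δ * sbar y a₁) / r^2 := by ring
        rw [e, div_lt_iff₀ hr2]
        have h6 : δ * (2 * sbar y a₁) < δ * D := by
          apply mul_lt_mul_of_pos_left _ hδpos
          rw [hDdef]
          linarith
        linarith only [h6, hδ2]
      have u6 : Pf y k₁ ρ a₁ < Q := by
        rw [hPdef] at u5
        linarith only [u3, u4, u5]
      have u7 : (r - ρ) * Pf y k₁ ρ a₁ < (r - ρ) * Q :=
        mul_lt_mul_of_pos_left u6 hrρ
      rw [hQdef] at u7
      linarith only [u1, u2, u7, hzero]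
    · -- right side: σ ρ < 0 for ρ ∈ (r, r+δ]
      intro ρ hρ1 hρ2 hρ3
      have hρr : 0 < ρ - r := by linarith
      have hρpos : 0 < ρ := lt_trans hr0 hρ1
      have u1 : Jf y k₁ ρ a₁ - Jf y k₁ r a₁ ≤ (ρ - r) * Pf y k₁ r a₁ :=
        Jf_diff_le hy0 hy1 hk₁pos.le ha₁π.le hr0 hρ1.le
      have u2 : (ρ - r) * Pf y k₀ ρ a₀ ≤ Jf y k₀ ρ a₀ - Jf y k₀ r a₀ :=
        Jf_diff_ge hy0 hy1 hk₀pos.le ha₀π.le hr0 hρ1.le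
      have u3 : Pf y k₀ r a₀ ≤ Pf y k₀ ρ a₀ + ((ρ - r)/(r * ρ)) * sbar y a₀ :=
        Pf_diff_le hy0 hy1 hk₀pos.le ha₀π.le hr0 hρ1.le
      have u4 : ((ρ - r)/(r * ρ)) * sbar y a₀ ≤ (δ / r^2) * sbar y a₀ := by
        apply mul_le_mul_of_nonneg_right _ hs₀.le
        rw [div_le_div_iff₀ (mul_pos hr0 hρpos) hr2]
        have A1 : (ρ - r) * r^2 ≤ δ * r^2 := mul_le_mul_of_nonneg_right (by linarith) hr2.le
        have A2 : δ * r^2 ≤ δ*(r*ρ) := by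
          calc δ * r^2 = (δ*r)*r := by ring
            _ ≤ (δ*r)*ρ := mul_le_mul_of_nonneg_left (by linarith)
                (mul_nonneg hδpos.le hr0.le)
            _ = δ*(r*ρ) := by ring
        linarith only [A1, A2]
      have u5 : (δ / r^2) * sbar y a₀ < Q - P := by
        have e : (δ / r^2) * sbar y a₀ = (δ * sbar y a₀) / r^2 := by ring
        rw [e, div_lt_iff₀ hr2]
        have h6 : δ * sbar y a₀ < δ * D := by
          apply mul_lt_mul_of_pos_left _ hδpos
          rw [hDdef]
          linarith
        linarith only [h6, hδ2]
      have u6 : P < Pf y k₀ ρ a₀ := by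
        rw [hQdef] at u5
        linarith only [u3, u4, u5]
      have u7 : (ρ - r) * P < (ρ - r) * Pf y k₀ ρ a₀ :=
        mul_lt_mul_of_pos_left u6 hρr
      rw [hPdef] at u7
      linarith only [u1, u2, u7, hzero]
  have hfinal := cross (fun ρ => Jf y k₁ ρ a₁ - Jf y k₀ ρ a₀) ρ₀ ρ₁ K hK hρ hLip hkey hσ0
  have h9 : Jf y k₁ ρ₁ a₁ - Jf y k₀ ρ₁ a₀ < 0 := hfinal
  linarith only [h9, hσ1]
end

section
/- Let 0 < r < 1, y = r², and a ∈ [0,π]. Then ∫_a^π (1/π)·(1 − cos(2t))/(1 + r² − 2r·cos t) dt = (1/π)·( (π − a) − (1/r)·sin a + ((1 − r²)/r²)·θ_r ), where θ_r = arctan(r·sin a/(1 − r·cos a)). (Proposition 1, case y < 1: closed form for the asymptotic normalized number of on-beams s̄∞.) -/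
open intervalIntegral

lemma sbar_denom_pos (r t : ℝ) (hr0 : 0 < r) (hr1 : r < 1) :
    0 < 1 + r ^ 2 - 2 * r * Real.cos t := by
  nlinarith [Real.neg_one_le_cos t, Real.cos_le_one t, sq_nonneg (1 - r)]

lemma sbar_denom2_pos (r t : ℝ) (hr0 : 0 < r) (hr1 : r < 1) :
    0 < 1 - r * Real.cos t := by
  nlinarith [Real.neg_one_le_cos t, Real.cos_le_one t]

lemma sbar_hasDeriv (r : ℝ) (hr0 : 0 < r) (hr1 : r < 1) (t : ℝ) :
    HasDerivAt (fun t => t + (1 / r) * Real.sin t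
        - ((1 - r ^ 2) / r ^ 2) * Real.arctan (r * Real.sin t / (1 - r * Real.cos t)))
      ((1 - Real.cos (2 * t)) / (1 + r ^ 2 - 2 * r * Real.cos t)) t := by
  have hd := sbar_denom_pos r t hr0 hr1
  have hd2 := sbar_denom2_pos r t hr0 hr1
  have hsc := Real.sin_sq_add_cos_sq t
  have hs : Real.sin t ^ 2 = 1 - Real.cos t ^ 2 := by linarith
  have hu : HasDerivAt (fun t => r * Real.sin t / (1 - r * Real.cos t))
      ((r * Real.cos t * (1 - r * Real.cos t) - r * Real.sin t * (r * Real.sin t))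
        / (1 - r * Real.cos t) ^ 2) t := by
    have h1 : HasDerivAt (fun t => r * Real.sin t) (r * Real.cos t) t :=
      (Real.hasDerivAt_sin t).const_mul r
    have h2 : HasDerivAt (fun t => 1 - r * Real.cos t) (r * Real.sin t) t := by
      have := ((Real.hasDerivAt_cos t).const_mul r).const_sub 1
      simpa using this
    exact h1.div h2 hd2.ne'
  have harc : HasDerivAt (fun t => Real.arctan (r * Real.sin t / (1 - r * Real.cos t)))
      (r * (Real.cos t - r) / (1 + r ^ 2 - 2 * r * Real.cos t)) t := by
    have h := (Real.hasDerivAt_arctan _).comp t hu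
    refine h.congr_deriv (Eq.symm ?_)
    have h2 : 1 + (r * Real.sin t / (1 - r * Real.cos t)) ^ 2
        = (1 + r ^ 2 - 2 * r * Real.cos t) / (1 - r * Real.cos t) ^ 2 := by
      field_simp
      linear_combination r ^ 2 * hsc
    rw [h2, one_div_div]
    field_simp
    ring_nf
    simp only [hs]
    ring
  have h := ((hasDerivAt_id t).add ((Real.hasDerivAt_sin t).const_mul (1 / r))).sub
    (harc.const_mul ((1 - r ^ 2) / r ^ 2))
  refine h.congr_deriv (Eq.symm ?_)
  rw [Real.cos_two_mul]
  have hD := hd.ne'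
  generalize hDdef : 1 + r ^ 2 - 2 * r * Real.cos t = D at hD ⊢
  field_simp
  linear_combination (r + Real.cos t) * hDdef

/-- Proposition 1 (case `y = r² < 1`): closed form for the asymptotic normalized
number of on-beams, `s̄∞ = (1/π)·((π − a) − (1/r)·sin a + ((1 − r²)/r²)·θ_r)` with
`θ_r = arctan(r sin a / (1 − r cos a))`. -/
theorem sbar_closed_form
    (r a : ℝ) (hr0 : 0 < r) (hr1 : r < 1) (ha : a ∈ Set.Icc 0 Real.pi) :
    ∫ t in a..Real.pi,
        (1 / Real.pi) * (1 - Real.cos (2 * t)) / (1 + r ^ 2 - 2 * r * Real.cos t)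
      = (1 / Real.pi) * ((Real.pi - a) - (1 / r) * Real.sin a
          + ((1 - r ^ 2) / r ^ 2)
            * Real.arctan (r * Real.sin a / (1 - r * Real.cos a))) := by
  have hcont : Continuous
      (fun t => (1 - Real.cos (2 * t)) / (1 + r ^ 2 - 2 * r * Real.cos t)) := by
    apply Continuous.div
    · continuity
    · continuity
    · exact fun t => (sbar_denom_pos r t hr0 hr1).ne'
  have key : ∫ t in a..Real.pi, (1 - Real.cos (2 * t)) / (1 + r ^ 2 - 2 * r * Real.cos t)
      = (Real.pi - a) - (1 / r) * Real.sin a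
          + ((1 - r ^ 2) / r ^ 2) * Real.arctan (r * Real.sin a / (1 - r * Real.cos a)) := by
    rw [intervalIntegral.integral_eq_sub_of_hasDerivAt
      (fun t _ => sbar_hasDeriv r hr0 hr1 t) (hcont.intervalIntegrable a Real.pi)]
    simp [Real.sin_pi, Real.cos_pi]
    ring
  calc ∫ t in a..Real.pi,
        (1 / Real.pi) * (1 - Real.cos (2 * t)) / (1 + r ^ 2 - 2 * r * Real.cos t)
      = ∫ t in a..Real.pi, (1 / Real.pi) *
          ((1 - Real.cos (2 * t)) / (1 + r ^ 2 - 2 * r * Real.cos t)) := by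
        congr 1; ext t; ring
    _ = (1 / Real.pi) * ((Real.pi - a) - (1 / r) * Real.sin a
          + ((1 - r ^ 2) / r ^ 2)
            * Real.arctan (r * Real.sin a / (1 - r * Real.cos a))) := by
        rw [intervalIntegral.integral_const_mul, key]
end

section
/- Let 0 < r < 1 and a ∈ [0,π]. Then the complex-valued integral ∫_{I_R} r·e^{it}/(1 − r·e^{it}) dt, taken over I_R = [−π,−a] ∪ [a,π], equals the real number −2·θ_r, where θ_r = arctan(r·sin a/(1 − r·cos a)). Equivalently, i·( Log(1 − r·e^{−ia}) − Log(1 − r·e^{ia}) ) = −2·θ_r, Log denoting the principal branch of the complex logarithm. -/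
open MeasureTheory Complex

lemma aux_re_pos (r : ℝ) (hr0 : 0 < r) (hr1 : r < 1) (t : ℝ) :
    0 < (1 - (r : ℂ) * Complex.exp (Complex.I * (t : ℝ))).re := by
  have h : (1 - (r : ℂ) * Complex.exp (Complex.I * (t : ℝ))).re = 1 - r * Real.cos t := by
    simp [Complex.exp_re, mul_comm]
  rw [h]
  nlinarith [Real.cos_le_one t, Real.neg_one_le_cos t, hr0.le]

lemma aux_ne (r : ℝ) (hr0 : 0 < r) (hr1 : r < 1) (t : ℝ) :
    (1 - (r : ℂ) * Complex.exp (Complex.I * (t : ℝ))) ≠ 0 := by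
  intro h
  have := aux_re_pos r hr0 hr1 t
  rw [h] at this; simp at this

lemma aux_log (r a : ℝ) (hr0 : 0 < r) (hr1 : r < 1) :
    Complex.I * (Complex.log (1 - (r : ℂ) * Complex.exp (-Complex.I * (a : ℝ)))
          - Complex.log (1 - (r : ℂ) * Complex.exp (Complex.I * (a : ℝ))))
      = ((-(2 * Real.arctan (r * Real.sin a / (1 - r * Real.cos a))) : ℝ) : ℂ) := by
  set z : ℂ := 1 - (r : ℂ) * Complex.exp (Complex.I * (a : ℝ)) with hz
  have hre : z.re = 1 - r * Real.cos a := by simp [hz, Complex.exp_re, mul_comm]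
  have him : z.im = -(r * Real.sin a) := by simp [hz, Complex.exp_im, mul_comm]
  have hrepos : 0 < z.re := aux_re_pos r hr0 hr1 a
  have hconj : (starRingEnd ℂ) z = 1 - (r : ℂ) * Complex.exp (-Complex.I * (a : ℝ)) := by
    simp [hz, map_sub, map_mul, ← Complex.exp_conj]
  have hargne : z.arg ≠ Real.pi := by
    intro h
    have := Complex.arg_eq_pi_iff.mp h
    linarith [this.1]
  have harg : z.arg = -Real.arctan (r * Real.sin a / (1 - r * Real.cos a)) := by
    have habs : |z.arg| < Real.pi / 2 := Complex.abs_arg_lt_pi_div_two_iff.mpr (Or.inl hrepos)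
    have := Real.arctan_tan (x := z.arg) (by linarith [abs_lt.mp habs |>.1])
      (by linarith [abs_lt.mp habs |>.2])
    rw [Complex.tan_arg, hre, him] at this
    rw [← this, neg_div, Real.arctan_neg]
  rw [← hconj, Complex.log_conj z hargne]
  have hw : ∀ w : ℂ, Complex.I * ((starRingEnd ℂ) w - w) = ((2 * w.im : ℝ) : ℂ) := by
    intro w
    apply Complex.ext <;> simp [Complex.mul_re, Complex.mul_im] <;> ring
  rw [hw (Complex.log z), Complex.log_im, harg]
  push_cast
  ring

lemma aux_integral (r a : ℝ) (hr0 : 0 < r) (hr1 : r < 1) (ha : a ∈ Set.Icc 0 Real.pi) :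
    (∫ t in (Set.Icc (-Real.pi) (-a) ∪ Set.Icc a Real.pi),
        (r : ℂ) * Complex.exp (Complex.I * (t : ℝ))
          / (1 - (r : ℂ) * Complex.exp (Complex.I * (t : ℝ)))
      = Complex.I * (Complex.log (1 - (r : ℂ) * Complex.exp (-Complex.I * (a : ℝ)))
          - Complex.log (1 - (r : ℂ) * Complex.exp (Complex.I * (a : ℝ))))) := by
  obtain ⟨ha0, hapi⟩ := ha
  set f : ℝ → ℂ := fun t => (r : ℂ) * Complex.exp (Complex.I * (t : ℝ))
          / (1 - (r : ℂ) * Complex.exp (Complex.I * (t : ℝ))) with hf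
  set F : ℝ → ℂ := fun t =>
    Complex.I * Complex.log (1 - (r : ℂ) * Complex.exp (Complex.I * (t : ℝ))) with hF
  have hcont : Continuous f := by
    apply Continuous.div
    · fun_prop
    · fun_prop
    · exact fun t => aux_ne r hr0 hr1 t
  have hderiv : ∀ t : ℝ, HasDerivAt F (f t) t := by
    intro t
    have h1 : HasDerivAt (fun t : ℝ => Complex.I * (t : ℂ)) Complex.I t := by
      simpa using (Complex.ofRealCLM.hasDerivAt (x := t)).const_mul Complex.I
    have h2 := h1.cexp
    have h3 : HasDerivAt (fun t : ℝ => 1 - (r : ℂ) * Complex.exp (Complex.I * (t : ℝ)))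
        (-((r : ℂ) * (Complex.exp (Complex.I * (t : ℝ)) * Complex.I))) t :=
      (h2.const_mul (r : ℂ)).const_sub 1
    have h4 := (h3.clog_real (Or.inl (aux_re_pos r hr0 hr1 t))).const_mul Complex.I
    convert h4 using 1
    have hne := aux_ne r hr0 hr1 t
    rfl
    rw [hf]; field_simp
    ring_nf
    simp [Complex.I_sq]
  have hdisj : AEDisjoint volume (Set.Icc (-Real.pi) (-a)) (Set.Icc a Real.pi) := by
    refine measure_mono_null (fun x hx => ?_) (t := Set.Icc a (-a)) ?_
    · exact ⟨hx.2.1, hx.1.2⟩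
    · rw [Real.volume_Icc]
      simp only [ENNReal.ofReal_eq_zero]
      linarith
  rw [MeasureTheory.integral_union_ae hdisj measurableSet_Icc.nullMeasurableSet
      (hcont.integrableOn_Icc) (hcont.integrableOn_Icc)]
  have hkey : ∀ u v : ℝ, u ≤ v → ∫ t in Set.Icc u v, f t = F v - F u := by
    intro u v huv
    rw [MeasureTheory.integral_Icc_eq_integral_Ioc, ← intervalIntegral.integral_of_le huv]
    exact intervalIntegral.integral_eq_sub_of_hasDerivAt (fun t _ => hderiv t)
      (hcont.intervalIntegrable u v)
  rw [hkey _ _ (by linarith), hkey _ _ (by linarith)]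
  have hpi : Complex.exp (Complex.I * ((Real.pi : ℝ) : ℂ)) = -1 := by
    rw [mul_comm, Complex.exp_pi_mul_I]
  have hnpi : Complex.exp (Complex.I * (((-Real.pi : ℝ)) : ℂ)) = -1 := by
    push_cast
    rw [mul_neg, Complex.exp_neg, mul_comm, Complex.exp_pi_mul_I]
    norm_num
  have hna : Complex.exp (Complex.I * (((-a : ℝ)) : ℂ)) = Complex.exp (-Complex.I * (a : ℝ)) := by
    push_cast; ring_nf
  simp only [hF, hpi, hnpi, hna]
  ring

/-- Equation (36) of the paper: for `0 < r < 1` and `a ∈ [0,π]`, the integral of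
`r e^{it}/(1 − r e^{it})` over `I_R = [−π,−a] ∪ [a,π]` equals `−2 θ_r`, where
`θ_r = arctan(r sin a / (1 − r cos a))`; equivalently the antiderivative identity
`i (Log(1 − r e^{−ia}) − Log(1 − r e^{ia})) = −2 θ_r` holds for the principal
branch of the complex logarithm. -/
theorem integral_geometric_kernel_eq_arctan
    (r a : ℝ) (hr0 : 0 < r) (hr1 : r < 1) (ha : a ∈ Set.Icc 0 Real.pi) :
    (∫ t in (Set.Icc (-Real.pi) (-a) ∪ Set.Icc a Real.pi),
        (r : ℂ) * Complex.exp (Complex.I * (t : ℝ))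
          / (1 - (r : ℂ) * Complex.exp (Complex.I * (t : ℝ)))
      = ((-(2 * Real.arctan (r * Real.sin a / (1 - r * Real.cos a))) : ℝ) : ℂ)) ∧
    (Complex.I * (Complex.log (1 - (r : ℂ) * Complex.exp (-Complex.I * (a : ℝ)))
          - Complex.log (1 - (r : ℂ) * Complex.exp (Complex.I * (a : ℝ))))
      = ((-(2 * Real.arctan (r * Real.sin a / (1 - r * Real.cos a))) : ℝ) : ℂ)) := by
  refine ⟨?_, aux_log r a hr0 hr1⟩
  rw [aux_integral r a hr0 hr1 ha]
  exact aux_log r a hr0 hr1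
end

section
/- Let 0 < u < 1 and a ∈ [0,π]. Then ∫_{I_R} Log(1 − u·e^{it}) dt = i·( Li₂(u·e^{−ia}) − Li₂(u·e^{ia}) ), where the integral is over I_R = [−π,−a] ∪ [a,π], Log is the principal branch of the complex logarithm, and Li₂ is the dilogarithm. (Identity I₁ used in the proof of Proposition 2.) -/
open MeasureTheory Complex

/-- The dilogarithm `Li₂(z) = Σ_{n≥1} zⁿ/n²`, defined for `|z| ≤ 1`. -/
noncomputable def dilog (z : ℂ) : ℂ := ∑' n : ℕ, z ^ (n + 1) / ((n : ℂ) + 1) ^ 2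

private lemma summable_dilog_aux {z : ℂ} (hz : ‖z‖ < 1) :
    Summable (fun n : ℕ => z ^ (n + 1) / ((n : ℂ) + 1) ^ 2) := by
  apply Summable.of_norm
  refine Summable.of_nonneg_of_le (fun n => norm_nonneg _) (fun n => ?_)
    ((summable_geometric_of_lt_one (norm_nonneg z) hz).mul_left ‖z‖)
  have h1 : (1 : ℝ) ≤ ‖((n : ℂ) + 1) ^ 2‖ := by
    rw [norm_pow]
    have : ((n : ℂ) + 1) = ((n + 1 : ℕ) : ℂ) := by push_cast; ring
    rw [this, Complex.norm_natCast]
    have : (1 : ℝ) ≤ (n + 1 : ℕ) := by exact_mod_cast Nat.one_le_iff_ne_zero.2 (Nat.succ_ne_zero n)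
    nlinarith
  calc ‖z ^ (n + 1) / ((n : ℂ) + 1) ^ 2‖ = ‖z‖ ^ (n + 1) / ‖((n : ℂ) + 1) ^ 2‖ := by
        rw [norm_div, norm_pow]
    _ ≤ ‖z‖ ^ (n + 1) / 1 := by gcongr
    _ = ‖z‖ * ‖z‖ ^ n := by rw [div_one, pow_succ']

private lemma exp_integral_Icc (n : ℕ) (hn : n ≠ 0) {c d : ℝ} (hcd : c ≤ d) :
    ∫ t in Set.Icc c d, Complex.exp ((n : ℂ) * Complex.I * (t : ℝ))
      = (Complex.exp ((n : ℂ) * Complex.I * (d : ℝ))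
          - Complex.exp ((n : ℂ) * Complex.I * (c : ℝ))) / ((n : ℂ) * Complex.I) := by
  have hne : ((n : ℂ) * Complex.I) ≠ 0 := by
    simp [Complex.I_ne_zero, Nat.cast_ne_zero.mpr hn]
  rw [MeasureTheory.integral_Icc_eq_integral_Ioc, ← intervalIntegral.integral_of_le hcd]
  exact integral_exp_mul_complex hne

/-- Identity `I₁` used in the proof of Proposition 2: for `0 < u < 1` and
`a ∈ [0,π]`, `∫_{I_R} Log(1 − u e^{it}) dt = i (Li₂(u e^{−ia}) − Li₂(u e^{ia}))`,
where `I_R = [−π,−a] ∪ [a,π]` and `Log` is the principal complex logarithm. -/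
theorem integral_log_one_sub_exp_eq_dilog
    (u a : ℝ) (hu0 : 0 < u) (hu1 : u < 1) (ha : a ∈ Set.Icc 0 Real.pi) :
    ∫ t in (Set.Icc (-Real.pi) (-a) ∪ Set.Icc a Real.pi),
        Complex.log (1 - (u : ℂ) * Complex.exp (Complex.I * (t : ℝ)))
      = Complex.I * (dilog ((u : ℂ) * Complex.exp (-Complex.I * (a : ℝ)))
          - dilog ((u : ℂ) * Complex.exp (Complex.I * (a : ℝ)))) := by
  obtain ⟨ha0, haπ⟩ := ha
  set S : Set ℝ := Set.Icc (-Real.pi) (-a) ∪ Set.Icc a Real.pi with hS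
  set F : ℕ → ℝ → ℂ := fun n t => -(((u : ℂ) * Complex.exp (Complex.I * (t : ℝ))) ^ n / n)
    with hF
  have hz : ∀ t : ℝ, ‖(u : ℂ) * Complex.exp (Complex.I * (t : ℝ))‖ < 1 := by
    intro t
    rw [norm_mul, Complex.norm_real, Real.norm_of_nonneg hu0.le, mul_comm Complex.I,
      Complex.norm_exp_ofReal_mul_I, mul_one]
    exact hu1
  -- pointwise series expansion of the logarithm
  have hlog : ∀ t : ℝ, Complex.log (1 - (u : ℂ) * Complex.exp (Complex.I * (t : ℝ)))
      = ∑' n : ℕ, F n t := by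
    intro t
    have := ((Complex.hasSum_taylorSeries_neg_log (hz t)).neg).tsum_eq
    simpa using this.symm
  -- continuity and integrability of each term
  have hcont : ∀ n : ℕ, Continuous (F n) := by
    intro n
    apply Continuous.neg
    apply Continuous.div_const
    exact (continuous_const.mul (Complex.continuous_exp.comp
      (continuous_const.mul Complex.continuous_ofReal))).pow n
  have hmeasS : MeasurableSet S := (measurableSet_Icc).union measurableSet_Icc
  have hInt : ∀ n : ℕ, IntegrableOn (F n) S := by
    intro n
    exact ((hcont n).integrableOn_Icc).union ((hcont n).integrableOn_Icc)
  have hFnorm : ∀ (n : ℕ) (t : ℝ), ‖F n t‖ = u ^ n / n := by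
    intro n t
    rw [hF]
    simp only [norm_neg, norm_div, norm_pow, Complex.norm_natCast]
    rw [norm_mul, Complex.norm_real, Real.norm_of_nonneg hu0.le, mul_comm Complex.I,
      Complex.norm_exp_ofReal_mul_I, mul_one]
  -- swap sum and integral
  have hsummable : Summable (fun n : ℕ => ∫ t in S, ‖F n t‖) := by
    have : (fun n : ℕ => ∫ t in S, ‖F n t‖)
        = fun n : ℕ => (volume S).toReal * (u ^ n / n) := by
      funext n
      simp_rw [hFnorm n]
      rw [setIntegral_const, smul_eq_mul]
      rfl
    rw [this]
    apply Summable.mul_left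
    refine Summable.of_nonneg_of_le (fun n => by positivity) (fun n => ?_)
      (summable_geometric_of_lt_one hu0.le hu1)
    rcases Nat.eq_zero_or_pos n with rfl | hn
    · simp
    · exact div_le_self (by positivity) (by exact_mod_cast hn)
  have hswap : (∫ t in S, Complex.log (1 - (u : ℂ) * Complex.exp (Complex.I * (t : ℝ))))
      = ∑' n : ℕ, ∫ t in S, F n t := by
    rw [show (fun t : ℝ => Complex.log (1 - (u : ℂ) * Complex.exp (Complex.I * (t : ℝ))))
        = fun t => ∑' n : ℕ, F n t from funext hlog]
    exact (MeasureTheory.integral_tsum_of_summable_integral_norm hInt hsummable).symm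
  rw [hswap]
  -- compute each integral
  set w₁ : ℂ := (u : ℂ) * Complex.exp (-Complex.I * (a : ℝ)) with hw₁
  set w₂ : ℂ := (u : ℂ) * Complex.exp (Complex.I * (a : ℝ)) with hw₂
  have hterm : ∀ n : ℕ, (∫ t in S, F n t)
      = Complex.I * ((w₁ ^ n - w₂ ^ n) / (n : ℂ) ^ 2) := by
    intro n
    rcases Nat.eq_zero_or_pos n with rfl | hn
    · simp [hF]
    have hn0 : (n : ℂ) ≠ 0 := Nat.cast_ne_zero.mpr hn.ne'
    have hsplit : (∫ t in S, F n t)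
        = (∫ t in Set.Icc (-Real.pi) (-a), F n t) + ∫ t in Set.Icc a Real.pi, F n t := by
      apply MeasureTheory.integral_union_ae
      · have hsub : Set.Icc (-Real.pi) (-a) ∩ Set.Icc a Real.pi ⊆ Set.Icc a (-a) :=
          fun x hx => ⟨hx.2.1, hx.1.2⟩
        have hvol : volume (Set.Icc a (-a)) = 0 := by
          rw [Real.volume_Icc]; exact ENNReal.ofReal_eq_zero.2 (by linarith)
        exact measure_mono_null hsub hvol
      · exact measurableSet_Icc.nullMeasurableSet
      · exact (hcont n).integrableOn_Icc
      · exact (hcont n).integrableOn_Icc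
    have hFeq : ∀ t : ℝ, F n t
        = (-(u : ℂ) ^ n / n) * Complex.exp ((n : ℂ) * Complex.I * (t : ℝ)) := by
      intro t
      rw [hF]
      simp only
      rw [mul_pow, show ((n : ℂ) * Complex.I * (t : ℝ)) = n * (Complex.I * (t : ℝ)) by ring,
        Complex.exp_nat_mul]
      ring
    have e1 : (∫ t in Set.Icc (-Real.pi) (-a), F n t)
        = (-(u : ℂ) ^ n / n) * ((Complex.exp ((n : ℂ) * Complex.I * ((-a : ℝ) : ℂ))
            - Complex.exp ((n : ℂ) * Complex.I * ((-Real.pi : ℝ) : ℂ))) / ((n : ℂ) * Complex.I)) := by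
      simp_rw [hFeq]
      rw [MeasureTheory.integral_const_mul, exp_integral_Icc n hn.ne' (by linarith)]
    have e2 : (∫ t in Set.Icc a Real.pi, F n t)
        = (-(u : ℂ) ^ n / n) * ((Complex.exp ((n : ℂ) * Complex.I * ((Real.pi : ℝ) : ℂ))
            - Complex.exp ((n : ℂ) * Complex.I * ((a : ℝ) : ℂ))) / ((n : ℂ) * Complex.I)) := by
      simp_rw [hFeq]
      rw [MeasureTheory.integral_const_mul, exp_integral_Icc n hn.ne' (by linarith)]
    have hpi1 : Complex.exp ((n : ℂ) * Complex.I * ((Real.pi : ℝ) : ℂ)) = (-1 : ℂ) ^ n := by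
      rw [show ((n : ℂ) * Complex.I * ((Real.pi : ℝ) : ℂ)) = n * ((Real.pi : ℝ) * Complex.I)
        by ring, Complex.exp_nat_mul, Complex.exp_pi_mul_I]
    have hpi2 : Complex.exp ((n : ℂ) * Complex.I * ((-Real.pi : ℝ) : ℂ)) = (-1 : ℂ) ^ n := by
      rw [show ((n : ℂ) * Complex.I * ((-Real.pi : ℝ) : ℂ)) = n * (-((Real.pi : ℝ) * Complex.I))
        by push_cast; ring, Complex.exp_nat_mul, Complex.exp_neg, Complex.exp_pi_mul_I]
      norm_num
    have hea1 : Complex.exp ((n : ℂ) * Complex.I * ((-a : ℝ) : ℂ))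
        = Complex.exp (-Complex.I * (a : ℝ)) ^ n := by
      rw [← Complex.exp_nat_mul]
      congr 1
      push_cast
      ring
    have hea2 : Complex.exp ((n : ℂ) * Complex.I * ((a : ℝ) : ℂ))
        = Complex.exp (Complex.I * (a : ℝ)) ^ n := by
      rw [← Complex.exp_nat_mul]
      congr 1
      ring
    rw [hsplit, e1, e2, hpi1, hpi2, hea1, hea2, hw₁, hw₂]
    have hI : Complex.I ≠ 0 := Complex.I_ne_zero
    field_simp
    ring_nf
    rw [Complex.I_sq]
    ring
  rw [tsum_congr hterm]
  -- reindex and identify with dilog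
  have hw₁n : ‖w₁‖ < 1 := by
    rw [hw₁, norm_mul, Complex.norm_real, Real.norm_of_nonneg hu0.le]
    rw [show (-Complex.I * (a : ℝ)) = ((-a : ℝ) : ℂ) * Complex.I by push_cast; ring,
      Complex.norm_exp_ofReal_mul_I, mul_one]
    exact hu1
  have hw₂n : ‖w₂‖ < 1 := by
    rw [hw₂, norm_mul, Complex.norm_real, Real.norm_of_nonneg hu0.le, mul_comm Complex.I,
      Complex.norm_exp_ofReal_mul_I, mul_one]
    exact hu1
  have hsum1 := summable_dilog_aux hw₁n
  have hsum2 := summable_dilog_aux hw₂n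
  have hshift : Summable (fun n : ℕ =>
      Complex.I * ((w₁ ^ (n + 1) - w₂ ^ (n + 1)) / ((n : ℂ) + 1) ^ 2)) := by
    have := (hsum1.sub hsum2).mul_left Complex.I
    apply this.congr
    intro n
    ring
  have e0 : (∑' n : ℕ, Complex.I * ((w₁ ^ n - w₂ ^ n) / (n : ℂ) ^ 2))
      = ∑' n : ℕ, Complex.I * ((w₁ ^ (n + 1) - w₂ ^ (n + 1)) / ((n : ℂ) + 1) ^ 2) := by
    rw [tsum_eq_zero_add' (hshift.congr (fun n => by push_cast; ring))]
    norm_num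
  rw [e0]
  rw [show (fun n : ℕ => Complex.I * ((w₁ ^ (n + 1) - w₂ ^ (n + 1)) / ((n : ℂ) + 1) ^ 2))
      = fun n : ℕ => Complex.I * (w₁ ^ (n + 1) / ((n : ℂ) + 1) ^ 2
          - w₂ ^ (n + 1) / ((n : ℂ) + 1) ^ 2) from funext fun n => by ring]
  rw [tsum_mul_left, Summable.tsum_sub hsum1 hsum2]
  rfl
end

section
/- Let 0 < u < 1 and a ∈ [0,π]. Then ∫_{I_R} Log(1 − u·e^{it})·(e^{it} + e^{−it}) dt = 2·( −sin(a)·ln(1 + u² − 2u·cos a) + sin a − u·(π − a) − (1/u − u)·θ_u ), where the integral is over I_R = [−π,−a] ∪ [a,π] and θ_u = arctan(u·sin a/(1 − u·cos a)). (Identity I₂ used in the proof of Proposition 2.) -/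
open MeasureTheory Complex

noncomputable def FFlog (u t : ℝ) : ℂ :=
  Complex.I * (Complex.exp (-Complex.I * (t : ℝ)) - Complex.exp (Complex.I * (t : ℝ)))
      * Complex.log (1 - (u : ℂ) * Complex.exp (Complex.I * (t : ℝ)))
    + Complex.I * Complex.exp (Complex.I * (t : ℝ))
    + Complex.I * (1 / (u : ℂ) - (u : ℂ)) * Complex.log (1 - (u : ℂ) * Complex.exp (Complex.I * (t : ℝ)))
    - (u : ℂ) * (t : ℝ)

lemma exp_I_eq (t : ℝ) :
    Complex.exp (Complex.I * (t : ℝ)) = (Real.cos t : ℂ) + (Real.sin t : ℂ) * Complex.I := by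
  rw [mul_comm, Complex.exp_mul_I]
  simp [Complex.ofReal_cos, Complex.ofReal_sin]

lemma re_pos' {u : ℝ} (hu0 : 0 < u) (hu1 : u < 1) (t : ℝ) :
    0 < (1 - (u : ℂ) * Complex.exp (Complex.I * (t : ℝ))).re := by
  have h : (1 - (u : ℂ) * Complex.exp (Complex.I * (t : ℝ))).re = 1 - u * Real.cos t := by
    rw [exp_I_eq]
    simp [Complex.sub_re, Complex.mul_re, Complex.cos_ofReal_re, Complex.sin_ofReal_im, Complex.cos_ofReal_im, Complex.sin_ofReal_re]
  rw [h]
  nlinarith [Real.neg_one_le_cos t, Real.cos_le_one t]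

lemma slit {u : ℝ} (hu0 : 0 < u) (hu1 : u < 1) (t : ℝ) :
    1 - (u : ℂ) * Complex.exp (Complex.I * (t : ℝ)) ∈ Complex.slitPlane :=
  Complex.mem_slitPlane_iff.2 (Or.inl (re_pos' hu0 hu1 t))

lemma ne_zero' {u : ℝ} (hu0 : 0 < u) (hu1 : u < 1) (t : ℝ) :
    1 - (u : ℂ) * Complex.exp (Complex.I * (t : ℝ)) ≠ 0 :=
  Complex.slitPlane_ne_zero (slit hu0 hu1 t)

lemma hasDerivAt_expI (t : ℝ) :
    HasDerivAt (fun t : ℝ => Complex.exp (Complex.I * (t : ℝ)))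
      (Complex.I * Complex.exp (Complex.I * (t : ℝ))) t := by
  have h : HasDerivAt (fun z : ℂ => Complex.exp (Complex.I * z))
      (Complex.I * Complex.exp (Complex.I * (t : ℂ))) (t : ℂ) := by
    simpa [mul_comm] using ((hasDerivAt_id (t : ℂ)).const_mul Complex.I).cexp
  exact h.comp_ofReal

lemma hasDerivAt_expmI (t : ℝ) :
    HasDerivAt (fun t : ℝ => Complex.exp (-Complex.I * (t : ℝ)))
      (-Complex.I * Complex.exp (-Complex.I * (t : ℝ))) t := by
  have h : HasDerivAt (fun z : ℂ => Complex.exp (-Complex.I * z))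
      (-Complex.I * Complex.exp (-Complex.I * (t : ℂ))) (t : ℂ) := by
    simpa [mul_comm] using ((hasDerivAt_id (t : ℂ)).const_mul (-Complex.I)).cexp
  exact h.comp_ofReal

lemma hasDerivAt_L {u : ℝ} (hu0 : 0 < u) (hu1 : u < 1) (t : ℝ) :
    HasDerivAt (fun t : ℝ => Complex.log (1 - (u : ℂ) * Complex.exp (Complex.I * (t : ℝ))))
      (-((u : ℂ) * (Complex.I * Complex.exp (Complex.I * (t : ℝ))))
        / (1 - (u : ℂ) * Complex.exp (Complex.I * (t : ℝ)))) t := by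
  have hg : HasDerivAt (fun t : ℝ => 1 - (u : ℂ) * Complex.exp (Complex.I * (t : ℝ)))
      (-((u : ℂ) * (Complex.I * Complex.exp (Complex.I * (t : ℝ))))) t :=
    ((hasDerivAt_expI t).const_mul (u : ℂ)).const_sub 1
  exact hg.clog_real (slit hu0 hu1 t)

lemma hasDerivAt_FFlog {u : ℝ} (hu0 : 0 < u) (hu1 : u < 1) (t : ℝ) :
    HasDerivAt (FFlog u)
      (Complex.log (1 - (u : ℂ) * Complex.exp (Complex.I * (t : ℝ)))
        * (Complex.exp (Complex.I * (t : ℝ)) + Complex.exp (-Complex.I * (t : ℝ)))) t := by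
  have hE := hasDerivAt_expI t
  have hEm := hasDerivAt_expmI t
  have hL := hasDerivAt_L hu0 hu1 t
  have hid : HasDerivAt (fun t : ℝ => ((t : ℝ) : ℂ)) 1 t :=
    (hasDerivAt_id (t : ℂ)).comp_ofReal
  have h1 := (((hEm.sub hE).const_mul Complex.I).mul hL)
  have h2 := hE.const_mul Complex.I
  have h3 := hL.const_mul (Complex.I * (1 / (u : ℂ) - (u : ℂ)))
  have h4 := hid.const_mul (u : ℂ)
  have H := ((h1.add h2).add h3).sub h4
  convert H using 1
  · rfl
  · rfl
  simp only [Pi.sub_apply]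
  have hne := ne_zero' hu0 hu1 t
  have hu : (u : ℂ) ≠ 0 := Complex.ofReal_ne_zero.2 (ne_of_gt hu0)
  have hEm_eq : Complex.exp (-Complex.I * (t : ℝ)) = (Complex.exp (Complex.I * (t : ℝ)))⁻¹ := by
    rw [← Complex.exp_neg]; ring_nf
  rw [hEm_eq]
  have hE0 : Complex.exp (Complex.I * (t : ℝ)) ≠ 0 := Complex.exp_ne_zero _
  field_simp
  ring_nf
  simp only [Complex.I_sq]
  ring

lemma cont_integrand {u : ℝ} (hu0 : 0 < u) (hu1 : u < 1) :
    Continuous (fun t : ℝ =>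
      Complex.log (1 - (u : ℂ) * Complex.exp (Complex.I * (t : ℝ)))
        * (Complex.exp (Complex.I * (t : ℝ)) + Complex.exp (-Complex.I * (t : ℝ)))) := by
  apply Continuous.mul
  · rw [continuous_iff_continuousAt]
    intro t
    apply ContinuousAt.clog
    · fun_prop
    · exact slit hu0 hu1 t
  · fun_prop

/-- Identity `I₂` used in the proof of Proposition 2: for `0 < u < 1` and
`a ∈ [0,π]`, the integral of `Log(1 − u e^{it})(e^{it} + e^{−it})` over
`I_R = [−π,−a] ∪ [a,π]` equals
`2(−sin a · ln(1 + u² − 2u cos a) + sin a − u(π − a) − (1/u − u) θ_u)` with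
`θ_u = arctan(u sin a / (1 − u cos a))`. -/
theorem integral_log_times_two_cos
    (u a : ℝ) (hu0 : 0 < u) (hu1 : u < 1) (ha : a ∈ Set.Icc 0 Real.pi) :
    ∫ t in (Set.Icc (-Real.pi) (-a) ∪ Set.Icc a Real.pi),
        Complex.log (1 - (u : ℂ) * Complex.exp (Complex.I * (t : ℝ)))
          * (Complex.exp (Complex.I * (t : ℝ)) + Complex.exp (-Complex.I * (t : ℝ)))
      = ((2 * (-Real.sin a * Real.log (1 + u ^ 2 - 2 * u * Real.cos a)
          + Real.sin a - u * (Real.pi - a)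
          - (1 / u - u) * Real.arctan (u * Real.sin a / (1 - u * Real.cos a))) : ℝ) : ℂ) := by
  obtain ⟨ha0, haπ⟩ := ha
  set f : ℝ → ℂ := fun t =>
      Complex.log (1 - (u : ℂ) * Complex.exp (Complex.I * (t : ℝ)))
        * (Complex.exp (Complex.I * (t : ℝ)) + Complex.exp (-Complex.I * (t : ℝ))) with hf
  have hcont := cont_integrand hu0 hu1
  have hle1 : -Real.pi ≤ -a := neg_le_neg haπ
  have hdisj : volume (Set.Icc (-Real.pi) (-a) ∩ Set.Icc a Real.pi) = 0 := by
    apply measure_mono_null (t := Set.Icc a (-a))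
    · rintro x ⟨⟨_, h2⟩, ⟨h3, _⟩⟩; exact ⟨h3, h2⟩
    · rw [Real.volume_Icc]
      exact ENNReal.ofReal_eq_zero.2 (by linarith)
  rw [MeasureTheory.integral_union_ae hdisj measurableSet_Icc.nullMeasurableSet
      (hcont.integrableOn_Icc) (hcont.integrableOn_Icc)]
  have h1 : ∫ t in Set.Icc (-Real.pi) (-a), f t = FFlog u (-a) - FFlog u (-Real.pi) := by
    rw [MeasureTheory.integral_Icc_eq_integral_Ioc, ← intervalIntegral.integral_of_le hle1]
    exact intervalIntegral.integral_eq_sub_of_hasDerivAt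
      (fun t _ => hasDerivAt_FFlog hu0 hu1 t) (hcont.intervalIntegrable _ _)
  have h2 : ∫ t in Set.Icc a Real.pi, f t = FFlog u Real.pi - FFlog u a := by
    rw [MeasureTheory.integral_Icc_eq_integral_Ioc, ← intervalIntegral.integral_of_le haπ]
    exact intervalIntegral.integral_eq_sub_of_hasDerivAt
      (fun t _ => hasDerivAt_FFlog hu0 hu1 t) (hcont.intervalIntegrable _ _)
  rw [h1, h2]
  -- endpoint values
  -- exponentials at ±π and ±a
  have hEpi : Complex.exp (Complex.I * ((Real.pi : ℝ) : ℂ)) = -1 := by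
    rw [mul_comm]; exact Complex.exp_pi_mul_I
  have hEmpi : Complex.exp (-Complex.I * ((Real.pi : ℝ) : ℂ)) = -1 := by
    rw [neg_mul, Complex.exp_neg, mul_comm, Complex.exp_pi_mul_I]
    norm_num
  have hEnegpi : Complex.exp (Complex.I * (((-Real.pi : ℝ)) : ℂ)) = -1 := by
    push_cast
    rw [mul_neg, Complex.exp_neg, mul_comm, Complex.exp_pi_mul_I]
    norm_num
  have hEmnegpi : Complex.exp (-Complex.I * (((-Real.pi : ℝ)) : ℂ)) = -1 := by
    push_cast
    rw [neg_mul, mul_neg, neg_neg, mul_comm, Complex.exp_pi_mul_I]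
  have hEa : Complex.exp (Complex.I * ((a : ℝ) : ℂ))
      = (Real.cos a : ℂ) + (Real.sin a : ℂ) * Complex.I := exp_I_eq a
  have hEma : Complex.exp (-Complex.I * ((a : ℝ) : ℂ))
      = (Real.cos a : ℂ) - (Real.sin a : ℂ) * Complex.I := by
    have := exp_I_eq (-a)
    rw [Real.cos_neg, Real.sin_neg] at this
    push_cast at this ⊢
    rw [show -Complex.I * (a : ℂ) = Complex.I * (-(a : ℂ)) by ring, this]
    ring
  have hEnega : Complex.exp (Complex.I * (((-a : ℝ)) : ℂ))
      = (Real.cos a : ℂ) - (Real.sin a : ℂ) * Complex.I := by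
    push_cast
    rw [show Complex.I * (-(a : ℂ)) = -Complex.I * (a : ℂ) by ring]
    exact_mod_cast hEma
  have hEmnega : Complex.exp (-Complex.I * (((-a : ℝ)) : ℂ))
      = (Real.cos a : ℂ) + (Real.sin a : ℂ) * Complex.I := by
    push_cast
    rw [show -Complex.I * (-(a : ℂ)) = Complex.I * (a : ℂ) by ring]
    exact_mod_cast hEa
  -- the log values at ±a
  set z : ℂ := 1 - (u : ℂ) * Complex.exp (Complex.I * ((a : ℝ) : ℂ)) with hz
  have hzre : z.re = 1 - u * Real.cos a := by
    rw [hz, hEa]; simp [Complex.sub_re, Complex.mul_re, Complex.cos_ofReal_re, Complex.sin_ofReal_im, Complex.cos_ofReal_im, Complex.sin_ofReal_re]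
  have hzim : z.im = -(u * Real.sin a) := by
    rw [hz, hEa]; simp [Complex.sub_im, Complex.mul_im, Complex.cos_ofReal_re, Complex.sin_ofReal_im, Complex.cos_ofReal_im, Complex.sin_ofReal_re]
  have hzrepos : 0 < z.re := re_pos' hu0 hu1 a
  set Lg : ℝ := Real.log (1 + u ^ 2 - 2 * u * Real.cos a) with hLg
  set At : ℝ := Real.arctan (u * Real.sin a / (1 - u * Real.cos a)) with hAt
  have hnormsq : Complex.normSq z = 1 + u ^ 2 - 2 * u * Real.cos a := by
    rw [Complex.normSq_apply, hzre, hzim]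
    linear_combination (u ^ 2) * (Real.sin_sq_add_cos_sq a)
  have hnspos : (0 : ℝ) < 1 + u ^ 2 - 2 * u * Real.cos a := by
    nlinarith [Real.neg_one_le_cos a, Real.cos_le_one a]
  have hlogre : (Complex.log z).re = Lg / 2 := by
    rw [Complex.log_re, Complex.norm_def, hnormsq, Real.log_sqrt hnspos.le, hLg]
  have hlogim : (Complex.log z).im = -At := by
    rw [Complex.log_im]
    have htan : Real.tan (Complex.arg z) = z.im / z.re := Complex.tan_arg z
    have hlt1 : -(Real.pi / 2) < Complex.arg z :=
      Complex.neg_pi_div_two_lt_arg_iff.2 (Or.inl hzrepos)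
    have hlt2 : Complex.arg z < Real.pi / 2 :=
      Complex.arg_lt_pi_div_two_iff.2 (Or.inl hzrepos)
    rw [← Real.arctan_tan hlt1 hlt2, htan, hzre, hzim, hAt, neg_div, Real.arctan_neg]
  have hLa : Complex.log z = (Lg / 2 : ℝ) - (At : ℝ) * Complex.I := by
    apply Complex.ext
    · simpa using hlogre
    · simpa using hlogim
  have hLma : Complex.log (1 - (u : ℂ) * Complex.exp (Complex.I * (((-a : ℝ)) : ℂ)))
      = (Lg / 2 : ℝ) + (At : ℝ) * Complex.I := by
    have hconj : 1 - (u : ℂ) * Complex.exp (Complex.I * (((-a : ℝ)) : ℂ))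
        = (starRingEnd ℂ) z := by
      apply Complex.ext
      · rw [hEnega]
        simp [Complex.sub_re, Complex.mul_re, Complex.cos_ofReal_re, Complex.sin_ofReal_im,
          Complex.cos_ofReal_im, Complex.sin_ofReal_re, hzre]
      · rw [hEnega]
        simp [Complex.sub_im, Complex.mul_im, Complex.cos_ofReal_re, Complex.sin_ofReal_im,
          Complex.cos_ofReal_im, Complex.sin_ofReal_re, hzim]
    rw [hconj, Complex.log_conj z (by
      intro h
      rw [Complex.arg_eq_pi_iff] at h
      linarith [h.1]), hLa]
    simp [Complex.ext_iff, map_ofNat]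
  -- now evaluate everything
  simp only [FFlog]
  rw [hLma, ← hz, hLa, hEpi, hEmpi, hEnegpi, hEmnegpi, hEa, hEma, hEnega, hEmnega]
  push_cast
  have hu : (u : ℂ) ≠ 0 := Complex.ofReal_ne_zero.2 (ne_of_gt hu0)
  linear_combination (2 * Complex.sin (a : ℂ) * (Lg : ℂ) - 2 * Complex.sin (a : ℂ)
      + 2 * (At : ℂ) * (1 / (u : ℂ) - (u : ℂ))) * Complex.I_sq
end

section
/- Let 0 < r < 1, y = r², and a ∈ [0,π]. Then (1/2)·∫_{I_R} ( r²/(1 + r² − 2r·cos t) )·f_T(t) dt = (1/π)·( (r²/(1 − r²))·(π − a) − ((1 + r²)/(1 − r²))·θ_r + r·sin a/(1 + r² − 2r·cos a) ), where the integral is over I_R = [−π,−a] ∪ [a,π], f_T(t) = (1/π)·(1 − cos(2t))/(1 + r² − 2r·cos t), and θ_r = arctan(r·sin a/(1 − r·cos a)). (Core integral identity of Proposition 4, case y < 1, evaluating the average water-filling power.) -/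
open MeasureTheory

set_option maxHeartbeats 1000000 in
/-- Core integral identity of Proposition 4 (case `y = r² < 1`), evaluating the
average water-filling power:
`(1/2)∫_{I_R} (r²/(1 + r² − 2r cos t)) f_T(t) dt`
`= (1/π)( (r²/(1−r²))(π − a) − ((1+r²)/(1−r²)) θ_r + r sin a/(1 + r² − 2r cos a) )`,
where `I_R = [−π,−a] ∪ [a,π]`, `f_T(t) = (1/π)(1 − cos 2t)/(1 + r² − 2r cos t)` and
`θ_r = arctan(r sin a / (1 − r cos a))`. -/
theorem waterfilling_power_integral_closed_form
    (r a : ℝ) (hr0 : 0 < r) (hr1 : r < 1) (ha : a ∈ Set.Icc 0 Real.pi) :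
    (1 / 2) * ∫ t in (Set.Icc (-Real.pi) (-a) ∪ Set.Icc a Real.pi),
        (r ^ 2 / (1 + r ^ 2 - 2 * r * Real.cos t))
          * ((1 / Real.pi) * (1 - Real.cos (2 * t)) / (1 + r ^ 2 - 2 * r * Real.cos t))
      = (1 / Real.pi) * ((r ^ 2 / (1 - r ^ 2)) * (Real.pi - a)
          - ((1 + r ^ 2) / (1 - r ^ 2))
              * Real.arctan (r * Real.sin a / (1 - r * Real.cos a))
          + r * Real.sin a / (1 + r ^ 2 - 2 * r * Real.cos a)) := by
  obtain ⟨ha0, haπ⟩ := ha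
  have hπ := Real.pi_pos
  have hπ' : Real.pi ≠ 0 := hπ.ne'
  have hD : ∀ t : ℝ, 0 < 1 + r ^ 2 - 2 * r * Real.cos t := by
    intro t
    nlinarith [Real.cos_le_one t, sq_nonneg (1 - r)]
  have h1 : ∀ t : ℝ, 0 < 1 - r * Real.cos t := by
    intro t
    nlinarith [Real.cos_le_one t]
  have hr2 : (1 : ℝ) - r ^ 2 ≠ 0 := by nlinarith
  set g : ℝ → ℝ := fun t => r ^ 2 / (1 + r ^ 2 - 2 * r * Real.cos t)
      * ((1 / Real.pi) * (1 - Real.cos (2 * t)) / (1 + r ^ 2 - 2 * r * Real.cos t)) with hg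
  set F : ℝ → ℝ := fun t => (1 / Real.pi) * ((r ^ 2 / (1 - r ^ 2)) * t
      + ((1 + r ^ 2) / (1 - r ^ 2)) * Real.arctan (r * Real.sin t / (1 - r * Real.cos t))
      - r * Real.sin t / (1 + r ^ 2 - 2 * r * Real.cos t)) with hF
  -- continuity of g
  have hgc : Continuous g := by
    apply Continuous.mul
    · exact continuous_const.div (by continuity) (fun t => (hD t).ne')
    · exact (continuous_const.mul (by continuity)).div (by continuity) (fun t => (hD t).ne')
  -- derivative of F
  have hderiv : ∀ t : ℝ, HasDerivAt F (g t) t := by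
    intro t
    have hu : HasDerivAt (fun t => r * Real.sin t / (1 - r * Real.cos t))
        ((r * Real.cos t * (1 - r * Real.cos t) - r * Real.sin t * (-(r * -Real.sin t)))
          / (1 - r * Real.cos t) ^ 2) t :=
      ((Real.hasDerivAt_sin t).const_mul r).div
        (((Real.hasDerivAt_cos t).const_mul r).const_sub 1) (h1 t).ne'
    have harc : HasDerivAt (fun t => Real.arctan (r * Real.sin t / (1 - r * Real.cos t)))
        ((r * Real.cos t - r ^ 2) / (1 + r ^ 2 - 2 * r * Real.cos t)) t := by
      have comp := (Real.hasDerivAt_arctan (r * Real.sin t / (1 - r * Real.cos t))).comp t hu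
      refine comp.congr_deriv ?_
      have hs := Real.sin_sq t
      have h1t : (1 - r * Real.cos t) ≠ 0 := (h1 t).ne'
      have hDt : (1 + r ^ 2 - 2 * r * Real.cos t) ≠ 0 := (hD t).ne' 
      have e1 : 1 + (r * Real.sin t / (1 - r * Real.cos t)) ^ 2
          = (1 + r ^ 2 - 2 * r * Real.cos t) / (1 - r * Real.cos t) ^ 2 := by
        field_simp
        linear_combination (r ^ 2) * hs
      have e2 : r * Real.cos t * (1 - r * Real.cos t) - r * Real.sin t * (-(r * -Real.sin t))
          = r * Real.cos t - r ^ 2 := by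
        linear_combination (-(r ^ 2)) * hs
      rw [e1, e2]
      field_simp
    have hq : HasDerivAt (fun t => r * Real.sin t / (1 + r ^ 2 - 2 * r * Real.cos t))
        ((r * Real.cos t * (1 + r ^ 2 - 2 * r * Real.cos t)
            - r * Real.sin t * (2 * r * Real.sin t)) / (1 + r ^ 2 - 2 * r * Real.cos t) ^ 2) t := by
      have := ((Real.hasDerivAt_sin t).const_mul r).div
        ((((Real.hasDerivAt_cos t).const_mul (2 * r)).const_sub (1 + r ^ 2))) (hD t).ne'
      refine this.congr_deriv ?_
      ring
    have hlin : HasDerivAt (fun t : ℝ => (r ^ 2 / (1 - r ^ 2)) * t) (r ^ 2 / (1 - r ^ 2)) t := by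
      simpa using (hasDerivAt_id t).const_mul (r ^ 2 / (1 - r ^ 2))
    have hsum := ((hlin.add (harc.const_mul ((1 + r ^ 2) / (1 - r ^ 2)))).sub hq).const_mul
      (1 / Real.pi)
    have hval : g t = 2 * r ^ 2 * Real.sin t ^ 2
        / (Real.pi * (1 + r ^ 2 - 2 * r * Real.cos t) ^ 2) := by
      have hs := Real.sin_sq t
      have hDt : (1 + r ^ 2 - 2 * r * Real.cos t) ≠ 0 := (hD t).ne'
      simp only [hg, Real.cos_two_mul]
      have h2 : 1 - (2 * Real.cos t ^ 2 - 1) = 2 * Real.sin t ^ 2 := by linear_combination (-2) * hs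
      rw [h2]
      field_simp
    have hDt : (1 + r ^ 2 - 2 * r * Real.cos t) ≠ 0 := (hD t).ne'
    rw [hval]
    refine hsum.congr_deriv ?_
    field_simp
    have hDt' : (1 + r ^ 2 - r * Real.cos t * 2) ≠ 0 := (show (0:ℝ) < _ by linarith [hD t]).ne'
    field_simp
    rw [Real.sin_sq]
    ring
  -- FTC on [a, π]
  have hint : ∀ x y : ℝ, IntervalIntegrable g volume x y := fun x y => hgc.intervalIntegrable x y
  have hFTC : ∫ t in a..Real.pi, g t = F Real.pi - F a :=
    intervalIntegral.integral_eq_sub_of_hasDerivAt (fun t _ => hderiv t) (hint a Real.pi)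
  -- evenness
  have geven : ∀ t : ℝ, g (-t) = g t := by
    intro t
    simp only [hg]
    rw [show (2:ℝ) * (-t) = -(2 * t) by ring, Real.cos_neg, Real.cos_neg]
  have hneg : ∫ t in (-Real.pi)..(-a), g t = ∫ t in a..Real.pi, g t := by
    rw [← intervalIntegral.integral_comp_neg g]
    congr 1
    ext t
    exact geven t
  -- split the union
  have hmeas : NullMeasurableSet (Set.Icc a Real.pi) (volume : Measure ℝ) :=
    measurableSet_Icc.nullMeasurableSet
  have hdisj : AEDisjoint (volume : Measure ℝ) (Set.Icc (-Real.pi) (-a)) (Set.Icc a Real.pi) := by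
    have hsub : Set.Icc (-Real.pi) (-a) ∩ Set.Icc a Real.pi ⊆ Set.Icc a (-a) := by
      rintro x ⟨⟨_, h2⟩, h3, _⟩
      exact ⟨h3, h2⟩
    refine measure_mono_null hsub ?_
    rw [Real.volume_Icc]
    simp [ENNReal.ofReal_eq_zero]
    linarith
  have hsplit : ∫ t in (Set.Icc (-Real.pi) (-a) ∪ Set.Icc a Real.pi), g t
      = (∫ t in Set.Icc (-Real.pi) (-a), g t) + ∫ t in Set.Icc a Real.pi, g t :=
    integral_union_ae hdisj hmeas (hgc.integrableOn_Icc) (hgc.integrableOn_Icc)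
  have hIcc1 : ∫ t in Set.Icc (-Real.pi) (-a), g t = ∫ t in (-Real.pi)..(-a), g t := by
    rw [integral_Icc_eq_integral_Ioc, intervalIntegral.integral_of_le (by linarith)]
  have hIcc2 : ∫ t in Set.Icc a Real.pi, g t = ∫ t in a..Real.pi, g t := by
    rw [integral_Icc_eq_integral_Ioc, intervalIntegral.integral_of_le (by linarith)]
  have key : ∫ t in (Set.Icc (-Real.pi) (-a) ∪ Set.Icc a Real.pi), g t
      = 2 * (F Real.pi - F a) := by
    rw [hsplit, hIcc1, hIcc2, hneg, hFTC]; ring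
  show (1 / 2) * ∫ t in (Set.Icc (-Real.pi) (-a) ∪ Set.Icc a Real.pi), g t = _
  rw [key, hF]
  simp only [Real.sin_pi, Real.cos_pi]
  field_simp
  simp only [mul_zero, zero_div, Real.arctan_zero]
  ring
end

section
/- Let 1 ≤ s ≤ L_T, let B be a finite nonempty set of L_T×s complex matrices Q satisfying Q†Q = I_s, and let ν be a probability measure on ℂ^{L_T×s} concentrated on {V : V†V = I_s} and invariant under the map V ↦ V·U for every s×s unitary matrix U. Let φ̂ be a measurable map from ℂ^{L_T×s} to B such that φ̂(V·U) = φ̂(V) for every s×s unitary matrix U (for instance, a consistent selection of a maximizer of tr((V†Q)(V†Q)†) over Q ∈ B). Then E_ν[ V† Q_{φ̂(V)} Q_{φ̂(V)}† V ] = μ·I_s, where μ = 1 − (1/s)·E_ν[ d_c²(Q_{φ̂(V)}, V) ] is a nonnegative real constant. (Theorem 4.) -/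
open MeasureTheory Matrix

/-- Matrices inherit the product measurable structure of functions. -/
instance matrixMeasurableSpace {m n α : Type*} [MeasurableSpace α] :
    MeasurableSpace (Matrix m n α) :=
  (inferInstance : MeasurableSpace (m → n → α))

lemma entry_norm_le_one {n m : ℕ} {W : Matrix (Fin n) (Fin m) ℂ} (hW : Wᴴ * W = 1)
    (a : Fin n) (i : Fin m) : ‖W a i‖ ≤ 1 := by
  have h := congrFun (congrFun hW i) i
  simp only [Matrix.mul_apply, Matrix.conjTranspose_apply, Matrix.one_apply_eq] at h
  have h2 : ∑ b : Fin n, Complex.normSq (W b i) = 1 := by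
    have := congrArg Complex.re h
    simpa [Complex.re_sum, Complex.normSq_apply, Complex.mul_re] using this
  have h3 : Complex.normSq (W a i) ≤ 1 := by
    rw [← h2]
    exact Finset.single_le_sum (f := fun b => Complex.normSq (W b i))
      (fun b _ => Complex.normSq_nonneg _) (Finset.mem_univ a)
  have h4 : ‖W a i‖ ^ 2 ≤ 1 := by
    rwa [Complex.sq_norm]
  nlinarith [norm_nonneg (W a i)]

lemma meas_entry {n m : ℕ} (a : Fin n) (b : Fin m) :
    Measurable fun V : Matrix (Fin n) (Fin m) ℂ => V a b :=
  (measurable_pi_apply b).comp (measurable_pi_apply a)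

lemma meas_f {LT s : ℕ} (φ : Matrix (Fin LT) (Fin s) ℂ → Matrix (Fin LT) (Fin s) ℂ)
    (hφmeas : Measurable φ) (i j : Fin s) :
    Measurable fun V : Matrix (Fin LT) (Fin s) ℂ => (Vᴴ * φ V * (φ V)ᴴ * V) i j := by
  simp only [Matrix.mul_apply, Matrix.conjTranspose_apply]
  apply Finset.measurable_sum
  intro c _
  apply Measurable.mul
  · apply Finset.measurable_sum
    intro b _
    apply Measurable.mul
    · apply Finset.measurable_sum
      intro a _
      exact (continuous_star.measurable.comp (meas_entry a i)).mul
        ((meas_entry a b).comp hφmeas)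
    · exact continuous_star.measurable.comp ((meas_entry c b).comp hφmeas)
  · exact meas_entry c j

lemma norm_f_le {LT s : ℕ} (φ : Matrix (Fin LT) (Fin s) ℂ → Matrix (Fin LT) (Fin s) ℂ)
    (V : Matrix (Fin LT) (Fin s) ℂ) (hV : Vᴴ * V = 1) (hQ : (φ V)ᴴ * (φ V) = 1)
    (i j : Fin s) : ‖(Vᴴ * φ V * (φ V)ᴴ * V) i j‖ ≤ (LT : ℝ) * ((s : ℝ) * (LT : ℝ)) := by
  have hVb : ∀ a i, ‖V a i‖ ≤ 1 := entry_norm_le_one hV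
  have hQb : ∀ a i, ‖φ V a i‖ ≤ 1 := entry_norm_le_one hQ
  simp only [Matrix.mul_apply, Matrix.conjTranspose_apply]
  calc ‖∑ c, (∑ b, (∑ a, star (V a i) * φ V a b) * star (φ V c b)) * V c j‖
      ≤ ∑ c, ‖(∑ b, (∑ a, star (V a i) * φ V a b) * star (φ V c b)) * V c j‖ :=
        norm_sum_le _ _
    _ ≤ ∑ _c : Fin LT, ((s : ℝ) * (LT : ℝ)) := by
        apply Finset.sum_le_sum
        intro c _
        rw [norm_mul]
        have h1 : ‖∑ b, (∑ a, star (V a i) * φ V a b) * star (φ V c b)‖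
            ≤ (s : ℝ) * (LT : ℝ) := by
          calc ‖∑ b, (∑ a, star (V a i) * φ V a b) * star (φ V c b)‖
              ≤ ∑ b, ‖(∑ a, star (V a i) * φ V a b) * star (φ V c b)‖ := norm_sum_le _ _
            _ ≤ ∑ _b : Fin s, (LT : ℝ) := by
                apply Finset.sum_le_sum
                intro b _
                rw [norm_mul]
                have h2 : ‖∑ a, star (V a i) * φ V a b‖ ≤ (LT : ℝ) := by
                  calc ‖∑ a, star (V a i) * φ V a b‖
                      ≤ ∑ a, ‖star (V a i) * φ V a b‖ := norm_sum_le _ _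
                    _ ≤ ∑ _a : Fin LT, (1 : ℝ) := by
                        apply Finset.sum_le_sum
                        intro a _
                        rw [norm_mul, norm_star]
                        exact mul_le_one₀ (hVb a i) (norm_nonneg _) (hQb a b)
                    _ = (LT : ℝ) := by simp
                have h3 : ‖star (φ V c b)‖ ≤ 1 := by rw [norm_star]; exact hQb c b
                nlinarith [norm_nonneg (∑ a, star (V a i) * φ V a b),
                  norm_nonneg (star (φ V c b)), Nat.cast_nonneg (α := ℝ) LT]
            _ = (s : ℝ) * (LT : ℝ) := by simp [mul_comm]
        have h4 : ‖V c j‖ ≤ 1 := hVb c j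
        nlinarith [norm_nonneg (∑ b, (∑ a, star (V a i) * φ V a b) * star (φ V c b)),
          norm_nonneg (V c j), mul_nonneg (Nat.cast_nonneg (α := ℝ) s) (Nat.cast_nonneg (α := ℝ) LT)]
    _ = (LT : ℝ) * ((s : ℝ) * (LT : ℝ)) := by simp [mul_comm]


/-- Theorem 4: let `B` be a single rank beamforming codebook of `L_T × s` matrices
with orthonormal columns, `ν` a probability measure concentrated on the Stiefel
manifold and invariant under right multiplication by `s × s` unitary matrices, and
`φ` a measurable, right-unitary-invariant selection of a codeword (e.g. a chordal
distance minimizer).  Then `E_ν[V† Q_{φ(V)} Q_{φ(V)}† V] = μ·I_s`, where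
`μ = 1 − (1/s)·E_ν[d_c²(Q_{φ(V)}, V)]` is a nonnegative real constant. -/
theorem expectation_selected_codeword_is_scalar
    (LT s : ℕ) (hs : 1 ≤ s) (hsLT : s ≤ LT)
    (B : Finset (Matrix (Fin LT) (Fin s) ℂ)) (hBne : B.Nonempty)
    (hB : ∀ Q ∈ B, Qᴴ * Q = 1)
    (ν : Measure (Matrix (Fin LT) (Fin s) ℂ)) [IsProbabilityMeasure ν]
    (hstiefel : ∀ᵐ V ∂ν, Vᴴ * V = 1)
    (hinv : ∀ U : Matrix (Fin s) (Fin s) ℂ, Uᴴ * U = 1 →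
      Measure.map (fun V => V * U) ν = ν)
    (φ : Matrix (Fin LT) (Fin s) ℂ → Matrix (Fin LT) (Fin s) ℂ)
    (hφmeas : Measurable φ) (hφB : ∀ V, φ V ∈ B)
    (hφinv : ∀ V, ∀ U : Matrix (Fin s) (Fin s) ℂ, Uᴴ * U = 1 → φ (V * U) = φ V) :
    ∃ μ : ℝ, 0 ≤ μ ∧
      μ = 1 - (1 / (s : ℝ))
            * ∫ V, ((s : ℝ) - (((Vᴴ * φ V) * (Vᴴ * φ V)ᴴ).trace).re) ∂ν ∧
      Matrix.of (fun i j : Fin s => ∫ V, (Vᴴ * φ V * (φ V)ᴴ * V) i j ∂ν)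
        = (μ : ℂ) • (1 : Matrix (Fin s) (Fin s) ℂ) := by
  set f : Matrix (Fin LT) (Fin s) ℂ → Matrix (Fin s) (Fin s) ℂ :=
    fun V => Vᴴ * φ V * (φ V)ᴴ * V with hf
  -- integrability
  have hint : ∀ i j, Integrable (fun V => f V i j) ν := by
    intro i j
    refine Integrable.mono' (integrable_const ((LT : ℝ) * ((s : ℝ) * (LT : ℝ))))
      ((meas_f φ hφmeas i j).aestronglyMeasurable) ?_
    filter_upwards [hstiefel] with V hV
    exact norm_f_le φ V hV (hB _ (hφB V)) i j
  set M : Matrix (Fin s) (Fin s) ℂ :=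
    Matrix.of (fun i j => ∫ V, f V i j ∂ν) with hM
  -- key invariance identity
  have key : ∀ U : Matrix (Fin s) (Fin s) ℂ, Uᴴ * U = 1 → ∀ i j,
      M i j = ∑ k, ∑ l, star (U k i) * M k l * U l j := by
    intro U hU i j
    have hmap : Measurable (fun V : Matrix (Fin LT) (Fin s) ℂ => V * U) := by
      apply measurable_pi_lambda
      intro a
      apply measurable_pi_lambda
      intro b
      simp only [Matrix.mul_apply]
      exact Finset.measurable_sum _ (fun c _ => (meas_entry a c).mul_const _)
    have h1 : ∫ V, f V i j ∂ν = ∫ V, f (V * U) i j ∂ν := by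
      conv_lhs => rw [← hinv U hU]
      exact integral_map hmap.aemeasurable
        ((meas_f φ hφmeas i j).aestronglyMeasurable)
    have h2 : ∀ V, f (V * U) i j = ∑ k, ∑ l, star (U k i) * f V k l * U l j := by
      intro V
      have hfVU : f (V * U) = Uᴴ * f V * U := by
        simp only [hf, hφinv V U hU, conjTranspose_mul, Matrix.mul_assoc]
      rw [hfVU]
      simp only [Matrix.mul_apply, Matrix.conjTranspose_apply, Finset.sum_mul]
      try rw [Finset.sum_comm]
      try exact Finset.sum_congr rfl fun k _ => Finset.sum_congr rfl fun l _ => by ring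
    calc M i j = ∫ V, f (V * U) i j ∂ν := h1
      _ = ∫ V, ∑ k, ∑ l, star (U k i) * f V k l * U l j ∂ν := by
          simp only [h2]
      _ = ∑ k, ∑ l, star (U k i) * M k l * U l j := by
          have hrw : ∀ k l, (fun V => star (U k i) * f V k l * U l j)
              = fun V => (star (U k i) * U l j) • f V k l := by
            intro k l; funext V; simp only [smul_eq_mul]; ring
          rw [integral_finset_sum]
          · refine Finset.sum_congr rfl fun k _ => ?_
            rw [integral_finset_sum]
            · refine Finset.sum_congr rfl fun l _ => ?_
              rw [hrw k l, integral_smul, smul_eq_mul]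
              simp only [hM, Matrix.of_apply]
              ring
            · intro l _
              rw [hrw k l]
              exact (hint k l).smul (star (U k i) * U l j)
          · intro k _
            apply integrable_finset_sum
            intro l _
            rw [hrw k l]
            exact (hint k l).smul (star (U k i) * U l j)
  -- off-diagonal entries vanish
  have hoff : ∀ i j, i ≠ j → M i j = 0 := by
    intro i j hij
    set c : Fin s → ℂ := fun k => if k = j then -1 else 1 with hc
    have hU : (Matrix.diagonal c)ᴴ * Matrix.diagonal c = 1 := by
      rw [Matrix.diagonal_conjTranspose, Matrix.diagonal_mul_diagonal]
      convert Matrix.diagonal_one with k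
      by_cases hk : k = j <;> simp [hc, hk]
    have h := key (Matrix.diagonal c) hU i j
    have hcol : ∑ k, ∑ l, star (Matrix.diagonal c k i) * M k l * Matrix.diagonal c l j
        = star (c i) * M i j * c j := by
      rw [Finset.sum_eq_single i]
      · rw [Finset.sum_eq_single j]
        · simp [Matrix.diagonal_apply_eq]
        · intro l _ hl
          simp [Matrix.diagonal_apply_ne c hl]
        · simp
      · intro k _ hk
        simp [Matrix.diagonal_apply_ne c hk]
      · simp
    rw [hcol] at h
    have hci : c i = 1 := by simp [hc, hij]
    have hcj : c j = -1 := by simp [hc]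
    rw [hci, hcj] at h
    simp only [star_one, one_mul, mul_neg, mul_one] at h
    have h2 : (2 : ℂ) * M i j = 0 := by linear_combination h
    exact (mul_eq_zero.mp h2).resolve_left two_ne_zero
  -- diagonal entries are all equal
  have i0 : Fin s := ⟨0, hs⟩
  have hdiag : ∀ i : Fin s, M i i = M i0 i0 := by
    intro i
    set σ : Equiv.Perm (Fin s) := Equiv.swap i i0 with hσ
    set P : Matrix (Fin s) (Fin s) ℂ := Matrix.of (fun k l => if σ l = k then 1 else 0)
      with hP
    have hU : Pᴴ * P = 1 := by
      ext k l
      simp only [Matrix.mul_apply, Matrix.conjTranspose_apply, hP, Matrix.of_apply]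
      rw [Finset.sum_eq_single (σ k)]
      · by_cases hkl : k = l
        · simp [hkl, Matrix.one_apply]
        · have : σ k ≠ σ l := fun hh => hkl (σ.injective hh)
          simp [this.symm, Matrix.one_apply_ne hkl]
      · intro b _ hb
        simp [Ne.symm hb]
      · simp
    have h := key P hU i i
    have hcol : ∑ k, ∑ l, star (P k i) * M k l * P l i = M (σ i) (σ i) := by
      rw [Finset.sum_eq_single (σ i)]
      · rw [Finset.sum_eq_single (σ i)]
        · simp [hP]
        · intro l _ hl
          simp [hP, Ne.symm hl]
        · simp
      · intro k _ hk
        simp [hP, Ne.symm hk]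
      · simp
    rw [hcol] at h
    rw [h, hσ, Equiv.swap_apply_left]
  -- diagonal entries are real and nonneg
  have hpos : ∀ V, ∀ i : Fin s, 0 ≤ (f V i i).re ∧ (f V i i).im = 0 := by
    intro V i
    have hAA : f V = ((φ V)ᴴ * V)ᴴ * ((φ V)ᴴ * V) := by
      simp only [hf, conjTranspose_mul, conjTranspose_conjTranspose, Matrix.mul_assoc]
    have : f V i i = ∑ k, (Complex.normSq (((φ V)ᴴ * V) k i) : ℂ) := by
      rw [hAA]
      simp only [Matrix.mul_apply, Matrix.conjTranspose_apply]
      apply Finset.sum_congr rfl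
      intro k _
      rw [mul_comm, Complex.star_def, Complex.mul_conj]
    rw [this]
    constructor
    · rw [Complex.re_sum]
      apply Finset.sum_nonneg
      intro k _
      simp [Complex.normSq_nonneg]
    · rw [Complex.im_sum]
      simp
  have hre : ∀ i : Fin s, M i i = ((∫ V, (f V i i).re ∂ν : ℝ) : ℂ) := by
    intro i
    have h1 := integral_im (hint i i)
    simp only [RCLike.im_to_complex] at h1
    have him : (M i i).im = 0 := by
      rw [show M i i = ∫ V, f V i i ∂ν from rfl, ← h1]
      apply integral_eq_zero_of_ae
      exact Filter.Eventually.of_forall fun V => (hpos V i).2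
    have h2 := integral_re (hint i i)
    simp only [RCLike.re_to_complex] at h2
    have hreq : (M i i).re = ∫ V, (f V i i).re ∂ν := h2.symm
    apply Complex.ext <;> simp [him, hreq]
  set μ : ℝ := ∫ V, (f V i0 i0).re ∂ν with hμ
  have hμnonneg : 0 ≤ μ := by
    apply integral_nonneg
    intro V
    exact (hpos V i0).1
  -- all diagonal integrals equal μ
  have hdiagint : ∀ i : Fin s, ∫ V, (f V i i).re ∂ν = μ := by
    intro i
    have h1 : ((∫ V, (f V i i).re ∂ν : ℝ) : ℂ) = ((μ : ℝ) : ℂ) := by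
      rw [← hre i, hdiag i, hre i0]
    exact_mod_cast h1
  refine ⟨μ, hμnonneg, ?_, ?_⟩
  · -- the chordal distance formula
    have htr : ∀ V, (((Vᴴ * φ V) * (Vᴴ * φ V)ᴴ).trace).re = ∑ i, (f V i i).re := by
      intro V
      have : (Vᴴ * φ V) * (Vᴴ * φ V)ᴴ = f V := by
        simp only [hf, conjTranspose_mul, conjTranspose_conjTranspose, Matrix.mul_assoc]
      rw [this]
      simp [Matrix.trace, Matrix.diag, Complex.re_sum]
    have hintre : ∀ i : Fin s, Integrable (fun V => (f V i i).re) ν :=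
      fun i => (hint i i).re
    have hint' : Integrable (fun V => (((Vᴴ * φ V) * (Vᴴ * φ V)ᴴ).trace).re) ν := by
      apply Integrable.congr (integrable_finset_sum Finset.univ (fun i _ => hintre i))
      filter_upwards with V
      exact (htr V).symm
    have htri : ∫ V, (((Vᴴ * φ V) * (Vᴴ * φ V)ᴴ).trace).re ∂ν = (s : ℝ) * μ := by
      calc ∫ V, (((Vᴴ * φ V) * (Vᴴ * φ V)ᴴ).trace).re ∂ν
          = ∫ V, ∑ i, (f V i i).re ∂ν := by
            apply integral_congr_ae
            filter_upwards with V
            exact htr V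
        _ = ∑ i, ∫ V, (f V i i).re ∂ν := integral_finset_sum _ (fun i _ => hintre i)
        _ = ∑ _i : Fin s, μ := Finset.sum_congr rfl fun i _ => hdiagint i
        _ = (s : ℝ) * μ := by
            rw [Finset.sum_const, Finset.card_univ, Fintype.card_fin, nsmul_eq_mul]
    have h2 : ∫ V, ((s : ℝ) - (((Vᴴ * φ V) * (Vᴴ * φ V)ᴴ).trace).re) ∂ν
        = (s : ℝ) - (s : ℝ) * μ := by
      rw [integral_sub (integrable_const _) hint', htri, integral_const]
      simp
    rw [h2]
    have hs0 : (s : ℝ) ≠ 0 := by positivity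
    field_simp
    ring
  · -- the matrix identity
    ext i j
    show (∫ V, f V i j ∂ν) = ((μ : ℂ) • (1 : Matrix (Fin s) (Fin s) ℂ)) i j
    by_cases hij : i = j
    · subst hij
      calc (∫ V, f V i i ∂ν) = M i i := rfl
        _ = ((μ : ℝ) : ℂ) := by rw [hdiag i, hre i0]
        _ = ((μ : ℂ) • (1 : Matrix (Fin s) (Fin s) ℂ)) i i := by
            simp [Matrix.smul_apply, Matrix.one_apply_eq, smul_eq_mul]
    · calc (∫ V, f V i j ∂ν) = M i j := rfl
        _ = 0 := hoff i j hij
        _ = ((μ : ℂ) • (1 : Matrix (Fin s) (Fin s) ℂ)) i j := by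
            simp [Matrix.smul_apply, Matrix.one_apply_ne hij, smul_eq_mul]
end

section
/- For every channel matrix H ∈ ℂ^{L_R×L_T} and every integer t with t > s̃(H) and B_t ≠ ∅, one has I_t(H) − I_{s̃(H)}(H) < (t − s̃(H))·κ. (Lemma used in the proof of Theorem 6.) -/
open MeasureTheory Matrix

/-- The mutual information `ln det(I + P·H Q Q† H†)` achieved by the beamforming
matrix `Q` on the channel `H` with per-beam power `P` (the determinant of such a
positive definite Hermitian matrix is a positive real, so we take its real part). -/
noncomputable def mutInfo (LR LT : ℕ) (P : ℝ) (H : Matrix (Fin LR) (Fin LT) ℂ)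
    {s : ℕ} (Q : Matrix (Fin LT) (Fin s) ℂ) : ℝ :=
  Real.log ((1 + (P : ℂ) • (H * Q * Qᴴ * Hᴴ)).det.re)

/-- `Iinfo LR LT P B s H` is `I_s(H)`, the largest mutual information achievable by
the rank-`s` sub-code `B s` of a multi-rank beamforming codebook (it is `0` when
the sub-code is empty; note that for `s = 0` the unique `L_T × 0` matrix gives
`I_0(H) = ln det(I) = 0`, matching the 'transmitter off' convention). -/
noncomputable def Iinfo (LR LT : ℕ) (P : ℝ)
    (B : (s : ℕ) → Finset (Matrix (Fin LT) (Fin s) ℂ))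
    (s : ℕ) (H : Matrix (Fin LR) (Fin LT) ℂ) : ℝ :=
  if h : (B s).Nonempty then (B s).sup' h (fun Q => mutInfo LR LT P H Q) else 0

/-- `stilde LR LT P κ B H` is the optimal number of on-beams `s̃(H)`: the largest
`s` with `B s ≠ ∅` such that `I_s(H) − I_t(H) ≥ (s − t)·κ` for every `t < s` with
`B t ≠ ∅`. -/
noncomputable def stilde (LR LT : ℕ) (P κ : ℝ)
    (B : (s : ℕ) → Finset (Matrix (Fin LT) (Fin s) ℂ))
    (H : Matrix (Fin LR) (Fin LT) ℂ) : ℕ :=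
  sSup {s : ℕ | (B s).Nonempty ∧ ∀ t < s, (B t).Nonempty →
    ((s : ℝ) - (t : ℝ)) * κ ≤ Iinfo LR LT P B s H - Iinfo LR LT P B t H}

/-- Lemma 3 (used in the proof of Theorem 6): for every channel realization `H`
and every `t > s̃(H)` whose sub-code `B t` is nonempty, one has
`I_t(H) − I_{s̃(H)}(H) < (t − s̃(H))·κ`. -/
theorem stilde_marginal_rate_lt
    (LR LT : ℕ) (hLR : 0 < LR) (hLT : 0 < LT) (P κ : ℝ) (hP : 0 < P)
    (B : (s : ℕ) → Finset (Matrix (Fin LT) (Fin s) ℂ))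
    (hB0 : (B 0).Nonempty)
    (hBtop : ∀ s, LT < s → B s = ∅)
    (hBortho : ∀ s, ∀ Q ∈ B s, Qᴴ * Q = 1)
    (H : Matrix (Fin LR) (Fin LT) ℂ)
    (t : ℕ) (ht : stilde LR LT P κ B H < t) (hBt : (B t).Nonempty) :
    Iinfo LR LT P B t H - Iinfo LR LT P B (stilde LR LT P κ B H) H
      < ((t : ℝ) - (stilde LR LT P κ B H : ℝ)) * κ := by
  set S : Set ℕ := {s : ℕ | (B s).Nonempty ∧ ∀ u < s, (B u).Nonempty →
    ((s : ℝ) - (u : ℝ)) * κ ≤ Iinfo LR LT P B s H - Iinfo LR LT P B u H} with hS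
  have hsle : ∀ s ∈ S, s ≤ LT := by
    intro s hs
    by_contra hgt
    have := hBtop s (lt_of_not_ge hgt)
    exact absurd hs.1 (by simp [this])
  have hbdd : BddAbove S := ⟨LT, fun s hs => hsle s hs⟩
  have h0 : 0 ∈ S := ⟨hB0, fun u hu => absurd hu (Nat.not_lt_zero u)⟩
  have hstS : stilde LR LT P κ B H ∈ S := by
    have := Nat.sSup_mem ⟨0, h0⟩ hbdd
    simpa [stilde, hS] using this
  set s := stilde LR LT P κ B H with hsdef
  have hsSup : sSup S = s := by simp [stilde, hS, hsdef]
  clear_value s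
  revert ht hBt
  induction t using Nat.strong_induction_on with
  | _ t IH =>
    intro hBt ht
    by_contra hcon
    push_neg at hcon
    have htS : t ∈ S := by
      refine ⟨hBt, fun u hu hBu => ?_⟩
      rcases lt_trichotomy u s with h1 | h1 | h1
      · have h2 := hstS.2 u h1 hBu
        have : ((t : ℝ) - (u : ℝ)) * κ
            = ((t : ℝ) - (s : ℝ)) * κ + ((s : ℝ) - (u : ℝ)) * κ := by ring
        linarith
      · subst h1; exact hcon
      · have h2 := IH u hu hBu h1
        have : ((t : ℝ) - (u : ℝ)) * κ
            = ((t : ℝ) - (s : ℝ)) * κ - ((u : ℝ) - (s : ℝ)) * κ := by ring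
        linarith
    have := le_csSup hbdd htS
    rw [hsSup] at this
    exact absurd ht (not_lt.mpr this)
end

section
/- For every real x > 0, (x − 1)/(x + 1) + (1 − ln(1 + x))² > 0. (Elementary inequality used in the proof of Theorem 3.) -/
lemma aux_hasDerivAt (t : ℝ) (ht : 0 < t) :
    HasDerivAt (fun t : ℝ => (1 - Real.log t) ^ 2 + (1 - 2 / t))
      (2 * (1 - Real.log t) * (-(1 / t)) + 2 / t ^ 2) t := by
  have h1 : HasDerivAt (fun t : ℝ => 1 - Real.log t) (-(1 / t)) t := by
    simpa using (Real.hasDerivAt_log ht.ne').const_sub 1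
  have h2 := h1.fun_pow 2
  have h3 : HasDerivAt (fun t : ℝ => 1 - 2 / t) (2 / t ^ 2) t := by
    have := (hasDerivAt_inv ht.ne').const_mul (2 : ℝ)
    have h4 : HasDerivAt (fun t : ℝ => 1 - 2 * t⁻¹) (-(2 * -(t ^ 2)⁻¹)) t :=
      this.const_sub 1
    have : -(2 * -(t ^ 2)⁻¹) = 2 / t ^ 2 := by field_simp
    rw [this] at h4
    simpa [div_eq_mul_inv] using h4
  have := h2.fun_add h3
  refine this.congr_deriv ?_
  norm_num

lemma aux_strictMono :
    StrictMonoOn (fun t : ℝ => (1 - Real.log t) ^ 2 + (1 - 2 / t)) (Set.Ici 1) := by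
  apply strictMonoOn_of_deriv_pos (convex_Ici 1)
  · apply ContinuousOn.add
    · exact (continuousOn_const.sub (Real.continuousOn_log.mono (by
        intro t ht
        simp only [Set.mem_compl_iff, Set.mem_singleton_iff]
        exact ne_of_gt (lt_of_lt_of_le one_pos ht)))).pow 2
    · exact continuousOn_const.sub (continuousOn_const.div continuousOn_id
        (fun t ht => ne_of_gt (lt_of_lt_of_le one_pos ht)))
  · intro t ht
    rw [interior_Ici] at ht
    have ht1 : (1 : ℝ) < t := ht
    have ht0 : (0 : ℝ) < t := lt_trans one_pos ht1
    rw [(aux_hasDerivAt t ht0).deriv]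
    -- log t > 1 - 1/t
    have hlog : Real.log t > 1 - 1 / t := by
      have h := Real.log_lt_sub_one_of_pos (x := 1 / t) (by positivity)
        (by
          intro h
          have : t = 1 := by field_simp at h; linarith
          exact absurd this (ne_of_gt ht1))
      rw [Real.log_div one_ne_zero ht0.ne', Real.log_one] at h
      have : -Real.log t < 1 / t - 1 := by simpa using h
      linarith
    have htinv : 0 < 1 / t := by positivity
    have ht2 : 0 < t ^ 2 := by positivity
    have key : 2 * (1 - Real.log t) * (-(1 / t)) + 2 / t ^ 2 =
        (2 / t) * (Real.log t - 1 + 1 / t) := by field_simp; ring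
    rw [key]
    apply mul_pos (by positivity)
    linarith

/-- Elementary inequality used in the proof of Theorem 3: for every `x > 0`,
`(x − 1)/(x + 1) + (1 − ln(1 + x))² > 0`. -/
theorem ineq_for_theorem3 (x : ℝ) (hx : 0 < x) :
    0 < (x - 1) / (x + 1) + (1 - Real.log (1 + x)) ^ 2 := by
  have h1 : (1 : ℝ) < 1 + x := by linarith
  have h := aux_strictMono (Set.self_mem_Ici) (Set.mem_Ici.mpr h1.le) h1
  simp only [Real.log_one] at h
  norm_num at h
  have heq : (x - 1) / (x + 1) = 1 - 2 / (1 + x) := by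
    field_simp
    ring
  rw [heq]
  linarith
end

section
/- Let y ∈ (0,1], set λ⁻ = (1/√y − 1)², λ⁺ = (1/√y + 1)², and define λ(t) = (1/y)·(1 + y − 2√y·cos t) for t ∈ [0,π]. Then for every a ∈ [0,π], ∫_{λ(a)}^{λ⁺} (1/(2πλ))·√((λ⁺ − λ)(λ − λ⁻)) dλ = ∫_a^π f_T(t) dt. In particular (a = 0) the Marchenko–Pastur density (1/(2πλ))·√((λ⁺ − λ)(λ − λ⁻)) on [λ⁻,λ⁺] pushes forward under the substitution λ = λ(t) to the density f_T on [0,π]. (Change-of-variables identity underlying Corollary 1 and equation (5).) -/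
open intervalIntegral Real MeasureTheory Set

lemma D_pos {y t : ℝ} (hy0 : 0 < y) (ht0 : 0 < t) (htpi : t ≤ Real.pi) :
    0 < 1 + y - 2 * Real.sqrt y * Real.cos t := by
  have hs0 : 0 < Real.sqrt y := Real.sqrt_pos.mpr hy0
  have hs2 : Real.sqrt y ^ 2 = y := Real.sq_sqrt hy0.le
  have hc : Real.cos t < 1 := by
    have := Real.cos_lt_cos_of_nonneg_of_le_pi le_rfl htpi ht0
    simpa using this
  nlinarith [sq_nonneg (1 - Real.sqrt y), mul_pos hs0 (sub_pos.mpr hc)]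

lemma D_nonneg {y t : ℝ} (hy0 : 0 < y) : 0 ≤ 1 + y - 2 * Real.sqrt y * Real.cos t := by
  have hs0 : 0 < Real.sqrt y := Real.sqrt_pos.mpr hy0
  have hs2 : Real.sqrt y ^ 2 = y := Real.sq_sqrt hy0.le
  nlinarith [sq_nonneg (1 - Real.sqrt y), Real.cos_le_one t, mul_pos hs0 hs0]

lemma key {y t : ℝ} (hy0 : 0 < y) (hy1 : y ≤ 1) (ht0 : 0 ≤ t) (htpi : t ≤ Real.pi)
    (hD : 0 < 1 + y - 2 * Real.sqrt y * Real.cos t) :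
    ((1 / y) * (2 * Real.sqrt y * Real.sin t)) *
      ((1 / (2 * Real.pi * ((1 / y) * (1 + y - 2 * Real.sqrt y * Real.cos t)))) *
        Real.sqrt (((1 / Real.sqrt y + 1) ^ 2 - (1 / y) * (1 + y - 2 * Real.sqrt y * Real.cos t)) *
          ((1 / y) * (1 + y - 2 * Real.sqrt y * Real.cos t) - (1 / Real.sqrt y - 1) ^ 2)))
      = fT y t := by
  have hsin : 0 ≤ Real.sin t := Real.sin_nonneg_of_nonneg_of_le_pi ht0 htpi
  have hpyth : Real.sin t ^ 2 = 1 - Real.cos t ^ 2 := by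
    nlinarith [Real.sin_sq_add_cos_sq t]
  have hpi : 0 < Real.pi := Real.pi_pos
  obtain ⟨s, hs0, rfl⟩ : ∃ s, 0 < s ∧ s ^ 2 = y :=
    ⟨Real.sqrt y, Real.sqrt_pos.mpr hy0, Real.sq_sqrt hy0.le⟩
  rw [Real.sqrt_sq hs0.le] at hD ⊢
  have harg : ((1 / s + 1) ^ 2 - (1 / s ^ 2) * (1 + s ^ 2 - 2 * s * Real.cos t)) *
      ((1 / s ^ 2) * (1 + s ^ 2 - 2 * s * Real.cos t) - (1 / s - 1) ^ 2)
      = (2 * Real.sin t / s) ^ 2 := by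
    field_simp
    linear_combination (-(4 * s ^ 2)) * hpyth
  rw [harg, Real.sqrt_sq (by positivity)]
  by_cases hlt : s ^ 2 < 1
  · simp only [fT, if_pos hlt, Real.sqrt_sq hs0.le, Real.cos_two_mul]
    field_simp
    ring_nf
    linear_combination (2 * (1 - s * Real.cos t * 2 + s ^ 2)⁻¹) * hpyth
  · have hs1 : s = 1 := by nlinarith
    subst hs1
    simp only [fT, if_neg hlt, one_pow] at *
    have hc1 : Real.cos t < 1 := by nlinarith
    have hne : 1 + 1 - 2 * Real.cos t ≠ 0 := by nlinarith
    field_simp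
    ring_nf
    simp only [if_neg hlt]
    field_simp
    linear_combination hpyth

lemma g_integrable {lm B : ℝ} (hlm : 0 ≤ lm) (hB : 0 ≤ B) :
    MeasureTheory.IntegrableOn
      (fun l => (1 / (2 * Real.pi * l)) * Real.sqrt ((B - l) * (l - lm))) (Set.Icc 0 B) := by
  rw [integrableOn_Icc_iff_integrableOn_Ioc]
  have hpi := Real.pi_pos
  have hbd : IntegrableOn (fun l : ℝ => Real.sqrt B / (2 * Real.pi) * l ^ (-(1/2) : ℝ))
      (Set.Ioc 0 B) := by
    have h1 : IntervalIntegrable (fun l : ℝ => l ^ (-(1/2) : ℝ)) volume 0 B :=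
      intervalIntegral.intervalIntegrable_rpow' (by norm_num)
    have h2 := (h1.const_mul (Real.sqrt B / (2 * Real.pi))).1
    simpa [Set.uIoc_of_le hB] using h2
  refine hbd.mono' ?_ ?_
  · apply Measurable.aestronglyMeasurable
    exact (measurable_const.div (measurable_id.const_mul (2 * Real.pi))).mul
      (((measurable_const.sub measurable_id).mul
        (measurable_id.sub measurable_const)).sqrt)
  · filter_upwards [ae_restrict_mem measurableSet_Ioc] with l hl
    have hl0 : 0 < l := hl.1
    have hsl : 0 < Real.sqrt l := Real.sqrt_pos.mpr hl0
    have h2pl : 0 < 2 * Real.pi * l := by positivity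
    have h1 : Real.sqrt ((B - l) * (l - lm)) ≤ Real.sqrt B * Real.sqrt l := by
      rw [← Real.sqrt_mul hB]
      apply Real.sqrt_le_sqrt
      nlinarith [hl.2]
    have h2 : l ^ (-(1/2) : ℝ) = (Real.sqrt l)⁻¹ := by
      rw [Real.rpow_neg hl0.le, Real.sqrt_eq_rpow]
    have hml : Real.sqrt l * Real.sqrt l = l := Real.mul_self_sqrt hl0.le
    rw [Real.norm_eq_abs,
      abs_of_nonneg (mul_nonneg (one_div_nonneg.mpr h2pl.le) (Real.sqrt_nonneg _)), h2]
    calc (1 / (2 * Real.pi * l)) * Real.sqrt ((B - l) * (l - lm))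
        ≤ (1 / (2 * Real.pi * l)) * (Real.sqrt B * Real.sqrt l) :=
          mul_le_mul_of_nonneg_left h1 (one_div_nonneg.mpr h2pl.le)
      _ = Real.sqrt B / (2 * Real.pi) * (Real.sqrt l)⁻¹ := by
          field_simp
          linear_combination (Real.sqrt B) * hml

/-- Change-of-variables identity underlying Corollary 1 and equation (5): for
`y ∈ (0,1]`, with `λ± = (1/√y ± 1)²` and `λ(t) = (1/y)(1 + y − 2√y cos t)`, the
Marchenko–Pastur tail integral `∫_{λ(a)}^{λ⁺} (1/(2πλ))√((λ⁺−λ)(λ−λ⁻)) dλ` equals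
`∫_a^π f_T(t) dt` for every `a ∈ [0,π]`. -/
theorem marchenko_pastur_change_of_variables
    (y : ℝ) (hy : y ∈ Set.Ioc (0 : ℝ) 1) (a : ℝ) (ha : a ∈ Set.Icc 0 Real.pi) :
    (∫ l in ((1 / y) * (1 + y - 2 * Real.sqrt y * Real.cos a))..((1 / Real.sqrt y + 1) ^ 2),
        (1 / (2 * Real.pi * l))
          * Real.sqrt (((1 / Real.sqrt y + 1) ^ 2 - l) * (l - (1 / Real.sqrt y - 1) ^ 2)))
      = ∫ t in a..Real.pi, fT y t := by
  obtain ⟨hy0, hy1⟩ := hy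
  obtain ⟨ha0, hapi⟩ := ha
  have hs0 : 0 < Real.sqrt y := Real.sqrt_pos.mpr hy0
  have hs2 : Real.sqrt y ^ 2 = y := Real.sq_sqrt hy0.le
  have hpi := Real.pi_pos
  set g : ℝ → ℝ := fun l => (1 / (2 * Real.pi * l))
          * Real.sqrt (((1 / Real.sqrt y + 1) ^ 2 - l) * (l - (1 / Real.sqrt y - 1) ^ 2))
    with hgdef
  set f : ℝ → ℝ := fun t => (1 / y) * (1 + y - 2 * Real.sqrt y * Real.cos t) with hfdef
  set f' : ℝ → ℝ := fun t => (1 / y) * (2 * Real.sqrt y * Real.sin t) with hf'def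
  have hfa : f a = (1 / y) * (1 + y - 2 * Real.sqrt y * Real.cos a) := by rw [hfdef]
  have hfpi : f Real.pi = (1 / Real.sqrt y + 1) ^ 2 := by
    rw [hfdef]
    simp only [Real.cos_pi]
    field_simp
    linear_combination (1 + 2 * Real.sqrt y) * hs2
  have hderiv : ∀ t : ℝ, HasDerivAt f (f' t) t := by
    intro t
    have h := (((Real.hasDerivAt_cos t).const_mul (2 * Real.sqrt y)).const_sub (1 + y)).const_mul
      (1 / y)
    rw [hfdef, hf'def]
    refine h.congr_deriv ?_
    ring
  have hfcont : Continuous f := by rw [hfdef]; fun_prop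
  have himg_pos : ∀ l ∈ f '' Set.Ioo (min a Real.pi) (max a Real.pi), 0 < l := by
    rw [min_eq_left hapi, max_eq_right hapi]
    rintro _ ⟨t, ht, rfl⟩
    have ht0 : 0 < t := lt_of_le_of_lt ha0 ht.1
    have hD := D_pos hy0 ht0 ht.2.le
    rw [hfdef]
    positivity
  have hgcont : ContinuousOn g (f '' Set.Ioo (min a Real.pi) (max a Real.pi)) := by
    rw [hgdef]
    apply ContinuousOn.mul
    · apply ContinuousOn.div continuousOn_const (by fun_prop)
      intro l hl
      have := himg_pos l hl
      positivity
    · apply Continuous.continuousOn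
      fun_prop
  have himg_sub : f '' Set.uIcc a Real.pi ⊆ Set.Icc 0 ((1 / Real.sqrt y + 1) ^ 2) := by
    rintro _ ⟨t, _, rfl⟩
    have hD := D_nonneg (t := t) hy0
    constructor
    · rw [hfdef]; positivity
    · rw [hfdef]
      rw [← hfpi, hfdef]
      simp only [Real.cos_pi]
      have hc := Real.neg_one_le_cos t
      have h2 : 1 + y - 2 * Real.sqrt y * Real.cos t ≤ 1 + y - 2 * Real.sqrt y * (-1) := by
        nlinarith
      have h3 : 0 < 1 / y := by positivity
      nlinarith
  have hg1 : IntegrableOn g (f '' Set.uIcc a Real.pi) := by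
    apply IntegrableOn.mono_set _ himg_sub
    rw [hgdef]
    exact g_integrable (by positivity) (by positivity)
  have hfT_cont : Continuous (fT y) := by
    by_cases hlt : y < 1
    · have hs1 : Real.sqrt y < 1 := by
        rw [show (1 : ℝ) = Real.sqrt 1 from Real.sqrt_one.symm]
        exact Real.sqrt_lt_sqrt hy0.le (by simpa using hlt)
      have hDne : ∀ t : ℝ, 1 + y - 2 * Real.sqrt y * Real.cos t ≠ 0 := by
        intro t
        have hc := Real.cos_le_one t
        have := mul_pos (sub_pos.mpr hs1) (sub_pos.mpr hs1)
        have := mul_nonneg hs0.le (sub_nonneg.mpr hc)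
        nlinarith
      have : fT y = fun t => (1 / Real.pi) * (1 - Real.cos (2 * t))
          / (1 + y - 2 * Real.sqrt y * Real.cos t) := by
        funext t; simp [fT, hlt]
      rw [this]
      exact Continuous.div (by fun_prop) (by fun_prop) hDne
    · have : fT y = fun t => (1 + Real.cos t) / Real.pi := by
        funext t; simp [fT, hlt]
      rw [this]
      fun_prop
  have heq : ∀ t : ℝ, a < t → t ≤ Real.pi → f' t • (g ∘ f) t = fT y t := by
    intro t ht1 ht2
    have ht0 : 0 < t := lt_of_le_of_lt ha0 ht1
    have hD := D_pos hy0 ht0 ht2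
    simp only [Function.comp, hgdef, hfdef, hf'def, smul_eq_mul]
    exact key hy0 hy1 ht0.le ht2 hD
  have hg2 : IntegrableOn (fun x => f' x • (g ∘ f) x) (Set.uIcc a Real.pi) := by
    rw [Set.uIcc_of_le hapi, integrableOn_Icc_iff_integrableOn_Ioc]
    apply IntegrableOn.congr_fun (hfT_cont.integrableOn_Ioc) _ measurableSet_Ioc
    intro t ht
    exact (heq t ht.1 ht.2).symm
  have hsub := integral_comp_smul_deriv''' (f := f) (f' := f') (g := g) (a := a) (b := Real.pi)
    hfcont.continuousOn (fun x _ => (hderiv x).hasDerivWithinAt) hgcont hg1 hg2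
  have hcongr : (∫ x in a..Real.pi, f' x • (g ∘ f) x) = ∫ t in a..Real.pi, fT y t := by
    apply intervalIntegral.integral_congr_ae
    apply Filter.Eventually.of_forall
    intro x hx
    rw [Set.uIoc_of_le hapi] at hx
    exact heq x hx.1 hx.2
  rw [← hfa, ← hfpi]
  exact hsub.symm.trans hcongr
end
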